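/- arXiv:2102.11081 — 10 statements merged into one kernel-verified Lean document; each statement's English description precedes it below -/
import Mathlib

section
/- For every group G, the covariant isotropy group of G in the category of groups is isomorphic to G itself: there is a group isomorphism between Aut(Under.forget G), the group of natural automorphisms of the coslice projection functor Under.forget G : Under G ⥤ Grp, and G, which sends (the class of) g ∈ G to the natural automorphism whose component at an object (m : G ⟶ H) of Under G is conjugation by m(g) on H. -/
open CategoryTheory Monoid

universe u

namespace IsotropyGrpAux

variable {G : Type u} [Group G]

/-- The two-indexed family: index `false` ↦ `G`, index `true` ↦ a free group. -/
def Fam (G : Type u) (β : Type u) : Bool → Type u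
  | true => FreeGroup β
  | false => G

instance instGroupFam {β : Type u} : ∀ b, Group (Fam G β b)
  | true => inferInstanceAs (Group (FreeGroup β))
  | false => ‹Group G›

variable {β γ : Type u}

/-- inclusion of `G` -/
def incl : G →* CoprodI (Fam G β) := CoprodI.of (M := Fam G β) (i := false)

/-- inclusion of the free group -/
def xof : FreeGroup β →* CoprodI (Fam G β) := CoprodI.of (M := Fam G β) (i := true)

/-- the family of homs for substitution -/
def substFam {H : Type u} [Group H] (m : G →* H) (a : H) : ∀ b, Fam G β b →* H
  | true => FreeGroup.lift fun _ => a
  | false => m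

/-- substitution: `g ↦ m g`, all free generators `↦ a`. -/
def subst {H : Type u} [Group H] (m : G →* H) (a : H) : CoprodI (Fam G β) →* H :=
  CoprodI.lift (substFam m a)

@[simp] lemma subst_incl {H : Type u} [Group H] (m : G →* H) (a : H) (g : G) :
    subst m a (incl (β := β) g) = m g :=
  CoprodI.lift_of (M := Fam G β) (substFam m a) (i := false) g

@[simp] lemma subst_xof {H : Type u} [Group H] (m : G →* H) (a : H) (f : FreeGroup β) :
    subst m a (xof f) = FreeGroup.lift (fun _ => a) f :=
  CoprodI.lift_of (M := Fam G β) (substFam m a) (i := true) f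

/-- the family of homs for a letter-wise map -/
def mapFam (φ : FreeGroup β →* FreeGroup γ) : ∀ b, Fam G β b →* Fam G γ b
  | true => φ
  | false => MonoidHom.id G

/-- a map of coproducts induced by a map of the free parts -/
def mapF (φ : FreeGroup β →* FreeGroup γ) : CoprodI (Fam G β) →* CoprodI (Fam G γ) :=
  CoprodI.lift fun b => (CoprodI.of (M := Fam G γ) (i := b)).comp (mapFam φ b)

@[simp] lemma mapF_incl (φ : FreeGroup β →* FreeGroup γ) (g : G) :
    mapF (G := G) φ (incl g) = incl g :=
  CoprodI.lift_of (M := Fam G β) _ (i := false) g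

@[simp] lemma mapF_xof (φ : FreeGroup β →* FreeGroup γ) (f : FreeGroup β) :
    mapF (G := G) φ (xof f) = xof (φ f) :=
  CoprodI.lift_of (M := Fam G β) _ (i := true) f

/-- letter-wise map on sigma types -/
def Lmap (φ : FreeGroup β →* FreeGroup γ) : (Σ b, Fam G β b) → (Σ b, Fam G γ b)
  | ⟨true, f⟩ => ⟨true, φ f⟩
  | ⟨false, g⟩ => ⟨false, g⟩

@[simp] lemma Lmap_fst (φ : FreeGroup β →* FreeGroup γ) (x : Σ b, Fam G β b) :
    (Lmap (G := G) φ x).1 = x.1 := by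
  rcases x with ⟨b, m⟩; cases b <;> rfl

lemma Lmap_ne_one (φ : FreeGroup β →* FreeGroup γ) (hφ : Function.Injective φ)
    (x : Σ b, Fam G β b) (hx : x.2 ≠ 1) : (Lmap (G := G) φ x).2 ≠ 1 := by
  rcases x with ⟨b, m⟩
  cases b
  · exact hx
  · intro h
    exact hx (hφ (h.trans (map_one φ).symm))

/-- product of a list of letters -/
def P (l : List (Σ b, Fam G β b)) : CoprodI (Fam G β) :=
  (l.map fun x => CoprodI.of x.2).prod

@[simp] lemma P_nil : P ([] : List (Σ b, Fam G β b)) = 1 := rfl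

@[simp] lemma P_cons (a : Σ b, Fam G β b) (l : List (Σ b, Fam G β b)) :
    P (a :: l) = CoprodI.of a.2 * P l := by
  simp [P]

@[simp] lemma P_append (l₁ l₂ : List (Σ b, Fam G β b)) :
    P (l₁ ++ l₂) = P l₁ * P l₂ := by
  simp [P]

lemma P_singleton (a : Σ b, Fam G β b) : P [a] = CoprodI.of a.2 := by simp

lemma mapF_of (φ : FreeGroup β →* FreeGroup γ) (x : Σ b, Fam G β b) :
    mapF (G := G) φ (CoprodI.of x.2) = CoprodI.of (Lmap (G := G) φ x).2 := by
  rcases x with ⟨b, m⟩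
  cases b
  · exact CoprodI.lift_of (M := Fam G β) _ (i := false) m
  · exact CoprodI.lift_of (M := Fam G β) _ (i := true) m

lemma mapF_P (φ : FreeGroup β →* FreeGroup γ) (l : List (Σ b, Fam G β b)) :
    mapF (G := G) φ (P l) = P (l.map (Lmap φ)) := by
  induction l with
  | nil => simp
  | cons a l ih => simp [map_mul, ih, mapF_of]

/-- validity of a list of letters (it is a reduced word) -/
def Valid (l : List (Σ b, Fam G β b)) : Prop :=
  (∀ x ∈ l, x.2 ≠ 1) ∧ l.Chain' fun a b => a.1 ≠ b.1

/-- the normal form equivalence, with explicit classical instances -/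
noncomputable def wEquiv : CoprodI (Fam G β) ≃ CoprodI.Word (Fam G β) :=
  @CoprodI.Word.equiv Bool (Fam G β) _ instDecidableEqBool (fun _ => Classical.decEq _)

lemma P_inj {l₁ l₂ : List (Σ b, Fam G β b)} (h₁ : Valid l₁) (h₂ : Valid l₂)
    (h : P l₁ = P l₂) : l₁ = l₂ := by
  have e1 : (wEquiv (G := G) (β := β)).symm ⟨l₁, h₁.1, h₁.2⟩
      = (wEquiv (G := G) (β := β)).symm ⟨l₂, h₂.1, h₂.2⟩ := h
  exact congrArg CoprodI.Word.toList ((wEquiv (G := G) (β := β)).symm.injective e1)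

lemma Valid_map (φ : FreeGroup β →* FreeGroup γ) (hφ : Function.Injective φ)
    {l : List (Σ b, Fam G β b)} (hl : Valid l) : Valid (l.map (Lmap φ)) := by
  constructor
  · intro x hx
    rcases List.mem_map.1 hx with ⟨y, hy, rfl⟩
    exact Lmap_ne_one φ hφ y (hl.1 y hy)
  · refine List.isChain_map_of_isChain _ ?_ hl.2
    intro a b h
    simpa using h
universe v

/-! ### Free group facts -/

/-- generator of `FreeGroup PUnit` -/
def xuGen : FreeGroup PUnit.{v+1} := FreeGroup.of PUnit.unit

/-- first generator -/
def X1 : FreeGroup (ULift.{v} Bool) := FreeGroup.of ⟨true⟩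

/-- second generator -/
def X2 : FreeGroup (ULift.{v} Bool) := FreeGroup.of ⟨false⟩

/-- `x ↦ X1 X2` -/
def psiPhi : FreeGroup PUnit.{v+1} →* FreeGroup (ULift.{v} Bool) :=
  FreeGroup.lift fun _ => X1 * X2

/-- `x ↦ X1` -/
def psi1 : FreeGroup PUnit.{v+1} →* FreeGroup (ULift.{v} Bool) :=
  FreeGroup.lift fun _ => X1

/-- `x ↦ X2` -/
def psi2 : FreeGroup PUnit.{v+1} →* FreeGroup (ULift.{v} Bool) :=
  FreeGroup.lift fun _ => X2

lemma comp_eq_id {r : FreeGroup (ULift.{v} Bool) →* FreeGroup PUnit.{v+1}}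
    {ψ : FreeGroup PUnit.{v+1} →* FreeGroup (ULift.{v} Bool)}
    (h : r (ψ xuGen) = xuGen) : Function.Injective ψ := by
  have hco : r.comp ψ = MonoidHom.id _ := by
    apply FreeGroup.ext_hom
    intro a
    cases a
    exact h
  intro a b hab
  have ha := DFunLike.congr_fun hco a
  have hb := DFunLike.congr_fun hco b
  simp only [MonoidHom.comp_apply, MonoidHom.id_apply] at ha hb
  rw [← ha, ← hb, hab]

lemma psiPhi_inj : Function.Injective psiPhi.{v} := by
  apply comp_eq_id (r := FreeGroup.lift fun b => if b.down then xuGen else 1)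
  simp [psiPhi, X1, X2, xuGen]

lemma psi1_inj : Function.Injective psi1.{v} := by
  apply comp_eq_id (r := FreeGroup.lift fun b => if b.down then xuGen else 1)
  simp [psi1, X1, xuGen]

lemma psi2_inj : Function.Injective psi2.{v} := by
  apply comp_eq_id (r := FreeGroup.lift fun b => if b.down then 1 else xuGen)
  simp [psi2, X2, xuGen]

/-- exponent of an element of `FreeGroup PUnit` -/
def expo (f : FreeGroup PUnit.{v+1}) : ℤ :=
  Multiplicative.toAdd (FreeGroup.lift (fun _ => Multiplicative.ofAdd (1 : ℤ)) f)

@[simp] lemma expo_one : expo (1 : FreeGroup PUnit.{v+1}) = 0 := by simp [expo]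

@[simp] lemma expo_of (u : PUnit.{v+1}) : expo (FreeGroup.of u) = 1 := by simp [expo]

@[simp] lemma expo_mul (a b : FreeGroup PUnit.{v+1}) : expo (a * b) = expo a + expo b := by
  simp [expo]

@[simp] lemma expo_inv (a : FreeGroup PUnit.{v+1}) : expo a⁻¹ = - expo a := by
  simp [expo]

lemma eq_xuGen_zpow (f : FreeGroup PUnit.{v+1}) : f = xuGen ^ (expo f) := by
  induction f using FreeGroup.induction_on with
  | C1 => simp
  | of u =>
      cases u
      have hp : (pure PUnit.unit : FreeGroup PUnit.{v+1}) = FreeGroup.of PUnit.unit := rfl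
      rw [expo_of, zpow_one, xuGen]
  | inv_of u ih =>
      cases u
      rw [expo_inv, zpow_neg, ← ih]
  | mul a b ha hb =>
      rw [expo_mul, zpow_add]
      exact congrArg₂ (· * ·) ha hb

/-! ### permutation representation (Heisenberg relation) -/

/-- shift of the first coordinate -/
def shiftP (k : ℤ) : Equiv.Perm (ℤ × ℤ) where
  toFun p := (p.1 + k, p.2)
  invFun p := (p.1 - k, p.2)
  left_inv p := by simp
  right_inv p := by simp

/-- shear -/
def shearP (k : ℤ) : Equiv.Perm (ℤ × ℤ) where
  toFun p := (p.1, p.2 + k * p.1)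
  invFun p := (p.1, p.2 - k * p.1)
  left_inv p := by simp
  right_inv p := by simp

@[simp] lemma shiftP_apply (k : ℤ) (p : ℤ × ℤ) : shiftP k p = (p.1 + k, p.2) := rfl
@[simp] lemma shearP_apply (k : ℤ) (p : ℤ × ℤ) : shearP k p = (p.1, p.2 + k * p.1) := rfl

lemma shiftP_mul (a b : ℤ) : shiftP a * shiftP b = shiftP (a + b) := by
  ext p : 1 <;> simp [Equiv.Perm.mul_apply] <;> ring

lemma shearP_mul (a b : ℤ) : shearP a * shearP b = shearP (a + b) := by
  ext p : 1 <;> simp [Equiv.Perm.mul_apply] <;> ring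

@[simp] lemma shiftP_zero : shiftP 0 = 1 := by ext p : 1 <;> simp

@[simp] lemma shearP_zero : shearP 0 = 1 := by ext p : 1 <;> simp

lemma shiftP_zpow (k : ℤ) : (shiftP 1) ^ k = shiftP k := by
  induction k using Int.induction_on with
  | zero => simp
  | succ n ih => rw [zpow_add_one, ih, shiftP_mul]
  | pred n ih =>
      rw [zpow_sub_one, ih, eq_comm, eq_mul_inv_iff_mul_eq, shiftP_mul]
      norm_num

lemma shearP_zpow (k : ℤ) : (shearP 1) ^ k = shearP k := by
  induction k using Int.induction_on with
  | zero => simp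
  | succ n ih => rw [zpow_add_one, ih, shearP_mul]
  | pred n ih =>
      rw [zpow_sub_one, ih, eq_comm, eq_mul_inv_iff_mul_eq, shearP_mul]
      norm_num

/-- the representation -/
def rho : FreeGroup (ULift.{v} Bool) →* Equiv.Perm (ℤ × ℤ) :=
  FreeGroup.lift fun b => if b.down then shiftP 1 else shearP 1

@[simp] lemma rho_X1 : rho X1.{v} = shiftP 1 := by simp [rho, X1]
@[simp] lemma rho_X2 : rho X2.{v} = shearP 1 := by simp [rho, X2]

/-- the key exponent fact -/
lemma exponent_fact (e : ℤ)
    (h : (X1.{v} * X2) ^ e = X1 ^ e * X2 ^ e) : e = 0 ∨ e = 1 := by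
  set σ : FreeGroup (ULift.{v} Bool) →* FreeGroup (ULift.{v} Bool) :=
    FreeGroup.lift fun b => FreeGroup.of ⟨!b.down⟩ with hσ
  have hs1 : σ X1.{v} = X2 := by simp [hσ, X1, X2]
  have hs2 : σ X2.{v} = X1 := by simp [hσ, X1, X2]
  have h2 : (X2.{v} * X1) ^ e = X2 ^ e * X1 ^ e := by
    have := congrArg σ h
    simpa [map_zpow, map_mul, hs1, hs2] using this
  have h3 : (X2.{v} * X1) ^ e = X1⁻¹ * (X1 * X2) ^ e * X1 := by
    have hc : X2.{v} * X1 = X1⁻¹ * (X1 * X2) * X1 := by group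
    rw [hc]
    have := map_zpow (MulAut.conj (X1.{v})⁻¹) (X1 * X2) e
    simpa [MulAut.conj_apply, mul_assoc] using this.symm
  have h4 : X2.{v} ^ e * X1 ^ (e - 1) = X1 ^ (e - 1) * X2 ^ e := by
    have h5 : X2.{v} ^ e * X1 ^ e = X1 ^ (e-1) * X2 ^ e * X1 := by
      rw [← h2, h3, h]
      group
    calc X2.{v} ^ e * X1 ^ (e - 1) = X2 ^ e * X1 ^ e * X1⁻¹ := by
          rw [zpow_sub_one, ← mul_assoc]
      _ = (X1 ^ (e-1) * X2 ^ e * X1) * X1⁻¹ := by rw [h5]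
      _ = X1 ^ (e - 1) * X2 ^ e := by group
  have h6 : shearP 1 ^ e * shiftP 1 ^ (e - 1) = shiftP 1 ^ (e - 1) * shearP 1 ^ e := by
    have := congrArg rho h4
    simpa [map_mul, map_zpow] using this
  rw [shearP_zpow, shiftP_zpow] at h6
  have h7 := congrArg (fun (π : Equiv.Perm (ℤ × ℤ)) => π ((0 : ℤ), (0 : ℤ))) h6
  simp [Equiv.Perm.mul_apply] at h7
  rcases h7 with h | h
  · exact Or.inl h
  · right; linarith

/-- classification of solutions in `FreeGroup PUnit` -/
lemma freegroup_sol (f : FreeGroup PUnit.{v+1})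
    (h : psiPhi f = psi1 f * psi2 f) : f = 1 ∨ f = xuGen := by
  have hf := eq_xuGen_zpow f
  rw [hf] at h
  have hΦ : psiPhi.{v} xuGen = X1 * X2 := by simp [psiPhi, xuGen]
  have h1' : psi1.{v} xuGen = X1 := by simp [psi1, xuGen]
  have h2' : psi2.{v} xuGen = X2 := by simp [psi2, xuGen]
  rw [map_zpow, map_zpow, map_zpow, hΦ, h1', h2'] at h
  rcases exponent_fact (expo f) h with h0 | h1
  · left; rw [hf, h0, zpow_zero]
  · right; rw [hf, h1, zpow_one]
/-! ### The core combinatorial argument -/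

section OptionHelpers

variable {α : Type*}

lemma mem_getLast?_concat {l : List α} {a x : α} (h : x ∈ (l ++ [a]).getLast?) : x = a := by
  rw [List.getLast?_concat] at h
  exact (Option.mem_some_iff.1 h).symm

lemma mem_head?_cons {l : List α} {a x : α} (h : x ∈ (a :: l).head?) : x = a := by
  rw [List.head?_cons] at h
  exact (Option.mem_some_iff.1 h).symm

end OptionHelpers

section Core

variable {G : Type u} [Group G]

/-- the distinguished generator of `G ∗ ℤ` -/
def xKel : CoprodI (Fam G PUnit.{u+1}) := xof xuGen

@[simp] lemma of_false_eq_incl (g : G) {β : Type u} :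
    (CoprodI.of (M := Fam G β) (i := false) g) = incl g := rfl

@[simp] lemma of_true_eq_xof {β : Type u} (f : FreeGroup β) :
    (CoprodI.of (M := Fam G β) (i := true) f) = xof f := rfl

/-- the crucial binaturality equation -/
def E1 (t : CoprodI (Fam G PUnit.{u+1})) : Prop :=
  mapF psiPhi t = mapF psi1 t * mapF psi2 t

lemma E1_conj {t : CoprodI (Fam G PUnit.{u+1})} (h : E1 t) (u : G) :
    E1 ((incl u)⁻¹ * t * incl u) := by
  unfold E1 at h ⊢
  simp only [map_mul, map_inv, mapF_incl, h]
  group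

/-- retraction sending `X1 ↦ x`, `X2 ↦ 1` -/
def rX1 : FreeGroup (ULift.{v} Bool) →* FreeGroup PUnit.{v+1} :=
  FreeGroup.lift fun b => if b.down then xuGen else 1

lemma rX1_psi1 (f : FreeGroup PUnit.{v+1}) : rX1 (psi1 f) = f := by
  have hco : rX1.comp psi1.{v} = MonoidHom.id _ := by
    apply FreeGroup.ext_hom
    intro a
    cases a
    simp [rX1, psi1, X1, xuGen]
  exact DFunLike.congr_fun hco f

lemma rX1_psi2 (f : FreeGroup PUnit.{v+1}) : rX1 (psi2 f) = 1 := by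
  have hco : rX1.comp psi2.{v} = (1 : FreeGroup PUnit.{v+1} →* FreeGroup PUnit.{v+1}) := by
    apply FreeGroup.ext_hom
    intro a
    simp [rX1, psi2, X2]
  exact DFunLike.congr_fun hco f

lemma merged_ne_one {f f' : FreeGroup PUnit.{v+1}} (hf' : f' ≠ 1) :
    psi1 f' * psi2 f ≠ 1 := by
  intro h
  apply hf'
  have := congrArg rX1 h
  simpa [map_mul, rX1_psi1, rX1_psi2] using this

lemma xuGen_ne_one : (xuGen.{v}) ≠ 1 := by
  intro h
  have := congrArg expo h
  simp [xuGen] at this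

/-- bounded on both sides by free-group letters -/
def xBdd (A : List (Σ b, Fam G PUnit.{u+1} b)) : Prop :=
  A ≠ [] ∧ (∀ x ∈ A.head?, x.1 = true) ∧ (∀ x ∈ A.getLast?, x.1 = true)

lemma valid_append {β : Type u} {l₁ l₂ : List (Σ b, Fam G β b)} (h₁ : Valid l₁) (h₂ : Valid l₂)
    (hj : ∀ x ∈ l₁.getLast?, ∀ y ∈ l₂.head?, x.1 ≠ y.1) : Valid (l₁ ++ l₂) := by
  refine ⟨?_, List.isChain_append.2 ⟨h₁.2, h₂.2, ?_⟩⟩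
  · intro x hx
    rcases List.mem_append.1 hx with h | h
    exacts [h₁.1 x h, h₂.1 x h]
  · intro x hx y hy
    exact hj x hx y hy

/-- `E1` fails for an element of the form `(x-bounded) * incl c` with `c ≠ 1`. -/
lemma not_E1_mul_incl {A : List (Σ b, Fam G PUnit.{u+1} b)} (hA : Valid A) (hx : xBdd A)
    {c : G} (hc : c ≠ 1) : ¬ E1 (P A * incl c) := by
  intro h
  set cl : (Σ b, Fam G PUnit.{u+1} b) := ⟨false, c⟩ with hcl
  have hone : cl.2 ≠ 1 := hc
  have hALc : Valid (A ++ [cl]) := by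
    refine valid_append hA ⟨?_, List.isChain_singleton _⟩ ?_
    · intro x hxm
      rcases List.mem_singleton.1 hxm with rfl
      exact hone
    · intro x hxm y hym
      rw [hx.2.2 x hxm, mem_head?_cons hym, hcl]
      simp
  have hPsplit : P (A ++ [cl]) = P A * incl c := by
    rw [P_append, P_singleton, hcl]
    simp
  -- LHS word
  have hL : mapF psiPhi (P A * incl c) = P ((A ++ [cl]).map (Lmap psiPhi)) := by
    rw [← hPsplit, mapF_P]
  -- RHS word
  set clL : (Σ b, Fam G (ULift.{u} Bool) b) := ⟨false, c⟩ with hclL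
  have honeL : clL.2 ≠ 1 := hc
  have hR : mapF psi1 (P A * incl c) * mapF psi2 (P A * incl c)
      = P ((A.map (Lmap psi1) ++ [clL]) ++ (A.map (Lmap psi2) ++ [clL])) := by
    simp only [P_append, P_singleton, hclL, map_mul, mapF_incl, ← mapF_P, of_false_eq_incl]
  have heq := h
  unfold E1 at heq
  rw [hL, hR] at heq
  have hval1 : Valid ((A ++ [cl]).map (Lmap psiPhi)) := Valid_map _ psiPhi_inj hALc
  have hsingval : Valid ([clL] : List (Σ b, Fam G (ULift.{u} Bool) b)) := by
    refine ⟨?_, List.isChain_singleton _⟩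
    intro x hxm
    rcases List.mem_singleton.1 hxm with rfl
    exact honeL
  have hval2 : Valid ((A.map (Lmap psi1) ++ [clL]) ++ (A.map (Lmap psi2) ++ [clL])) := by
    have hj1 : ∀ x ∈ (A.map (Lmap (G := G) psi1)).getLast?, ∀ y ∈ ([clL] : List _).head?,
        x.1 ≠ y.1 := by
      intro x hxm y hym
      rw [List.getLast?_map] at hxm
      rcases Option.map_eq_some_iff.1 hxm with ⟨z, hz, rfl⟩
      rw [Lmap_fst, hx.2.2 z hz, mem_head?_cons hym, hclL]
      simp
    have hj2 : ∀ x ∈ (A.map (Lmap (G := G) psi2)).getLast?, ∀ y ∈ ([clL] : List _).head?,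
        x.1 ≠ y.1 := by
      intro x hxm y hym
      rw [List.getLast?_map] at hxm
      rcases Option.map_eq_some_iff.1 hxm with ⟨z, hz, rfl⟩
      rw [Lmap_fst, hx.2.2 z hz, mem_head?_cons hym, hclL]
      simp
    refine valid_append (valid_append (Valid_map _ psi1_inj hA) hsingval hj1)
      (valid_append (Valid_map _ psi2_inj hA) hsingval hj2) ?_
    intro x hxm y hym
    have hx1 : x = clL := mem_getLast?_concat hxm
    have hAne : A.map (Lmap (G := G) psi2) ≠ [] := by
      simpa using hx.1
    rw [List.head?_append_of_ne_nil _ hAne, List.head?_map] at hym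
    rcases Option.map_eq_some_iff.1 hym with ⟨z, hz, rfl⟩
    have hz1 : z.1 = true := by
      apply hx.2.1
      obtain ⟨a0, A', rfl⟩ := List.exists_cons_of_ne_nil hx.1
      rw [List.head?_cons] at hz ⊢
      exact hz
    rw [hx1, Lmap_fst, hz1, hclL]
    simp
  have hlists := P_inj hval1 hval2 heq
  have hlen := congrArg List.length hlists
  simp only [List.length_map, List.length_append, List.length_singleton] at hlen
  omega

/-- `E1` for an x-bounded word forces a single letter satisfying the free-group relation -/
lemma E1_xbdd {A : List (Σ b, Fam G PUnit.{u+1} b)} (hA : Valid A) (hx : xBdd A)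
    (h : E1 (P A)) : ∃ f : FreeGroup PUnit.{u+1},
      A = [⟨true, f⟩] ∧ psiPhi f = psi1 f * psi2 f := by
  obtain ⟨a, B, rfl⟩ := List.exists_cons_of_ne_nil hx.1
  obtain ⟨ba, f⟩ := a
  have hba : ba = true := hx.2.1 ⟨ba, f⟩ (by rw [List.head?_cons]; rfl)
  subst hba
  rcases List.eq_nil_or_concat' B with rfl | ⟨C, z, rfl⟩
  · -- single letter
    refine ⟨f, rfl, ?_⟩
    unfold E1 at h
    have h1 : P [(⟨true, f⟩ : Σ b, Fam G PUnit.{u+1} b)] = xof f := by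
      rw [P_singleton]
      rfl
    rw [h1] at h
    have h' : xof (G := G) (psiPhi f) = xof (psi1 f * psi2 f) := by
      exact (mapF_xof (G := G) psiPhi f).symm.trans (h.trans ((congrArg₂ (· * ·)
        (mapF_xof psi1 f) (mapF_xof psi2 f)).trans (map_mul xof _ _).symm))
    exact CoprodI.of_injective true h'
  · -- at least two letters: contradiction by length count
    exfalso
    obtain ⟨bz, f'⟩ := z
    have hbz : bz = true := by
      apply hx.2.2 ⟨bz, f'⟩
      rw [show (⟨true, f⟩ :: (C ++ [⟨bz, f'⟩]) : List _) = (⟨true, f⟩ :: C) ++ [⟨bz, f'⟩] by simp,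
        List.getLast?_concat]
      rfl
    subst hbz
    have hchain := hA.2
    replace hchain := List.isChain_cons.1 hchain
    -- C is nonempty
    have hCne : C ≠ [] := by
      rintro rfl
      have := hchain.1 ⟨true, f'⟩ (by rw [List.nil_append, List.head?_cons]; rfl)
      simp at this
    obtain ⟨c0, C', rfl⟩ := List.exists_cons_of_ne_nil hCne
    set C : List (Σ b, Fam G PUnit.{u+1} b) := c0 :: C' with hC
    have hChead : ∀ y ∈ C.head?, y.1 = false := by
      intro y hy
      have h0 := hchain.1 y (by rw [List.head?_append_of_ne_nil _ (by simp [hC]), hC]; exact hy)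
      revert h0
      cases y.1 <;> simp
    have hClast : ∀ y ∈ C.getLast?, y.1 = false := by
      intro y hy
      have h2 := List.isChain_append.1 hchain.2
      have h0 := h2.2.2 y hy ⟨true, f'⟩ (by rw [List.head?_cons]; rfl)
      revert h0
      cases y.1 <;> simp
    have hCvalid : Valid C := by
      refine ⟨?_, (List.isChain_append.1 hchain.2).1⟩
      intro x hxm
      exact hA.1 x (by simp [hC, List.mem_append] at hxm ⊢; tauto)
    have hf : f ≠ 1 := hA.1 ⟨true, f⟩ (by simp)
    have hf' : f' ≠ 1 := hA.1 ⟨true, f'⟩ (by simp)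
    -- the element
    have hPA : P (⟨true, f⟩ :: (C ++ [⟨true, f'⟩])) = xof f * P C * xof f' := by
      simp only [P_cons, P_append, P_singleton, of_true_eq_xof]
      simp [mul_assoc]; rfl
    unfold E1 at h
    have hL : mapF psiPhi (P (⟨true, f⟩ :: (C ++ [⟨true, f'⟩])))
        = P ((⟨true, f⟩ :: (C ++ [⟨true, f'⟩])).map (Lmap psiPhi)) := by rw [mapF_P]
    set RL : List (Σ b, Fam G (ULift.{u} Bool) b) :=
      ([⟨true, psi1 f⟩] ++ C.map (Lmap psi1))
        ++ ([⟨true, psi1 f' * psi2 f⟩] ++ (C.map (Lmap psi2) ++ [⟨true, psi2 f'⟩])) with hRL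
    have hR : mapF psi1 (P (⟨true, f⟩ :: (C ++ [⟨true, f'⟩])))
          * mapF psi2 (P (⟨true, f⟩ :: (C ++ [⟨true, f'⟩]))) = P RL := by
      rw [hRL, hPA]
      simp only [P_append, P_singleton, map_mul, mapF_xof, ← mapF_P, of_true_eq_xof]
      have e : ∀ (φ : FreeGroup PUnit.{u+1} →* FreeGroup (ULift.{u} Bool)) (x : Fam G PUnit.{u+1} true),
          mapF (G := G) φ (xof x) = xof (φ x) := fun φ x => mapF_xof φ x
      simp only [e]
      group
    rw [hL, hR] at h
    have hval1 := Valid_map (G := G) _ psiPhi_inj hA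
    have hval2 : Valid RL := by
      rw [hRL]
      have hmergesing : Valid ([⟨true, psi1 f' * psi2 f⟩]
          : List (Σ b, Fam G (ULift.{u} Bool) b)) := by
        refine ⟨?_, List.isChain_singleton _⟩
        intro x hxm
        rcases List.mem_singleton.1 hxm with rfl
        exact merged_ne_one hf'
      have hsing1 : Valid ([⟨true, psi1 f⟩] : List (Σ b, Fam G (ULift.{u} Bool) b)) := by
        refine ⟨?_, List.isChain_singleton _⟩
        intro x hxm
        rcases List.mem_singleton.1 hxm with rfl
        exact fun hh => hf (psi1_inj (hh.trans (map_one psi1).symm))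
      have hsing2 : Valid ([⟨true, psi2 f'⟩] : List (Σ b, Fam G (ULift.{u} Bool) b)) := by
        refine ⟨?_, List.isChain_singleton _⟩
        intro x hxm
        rcases List.mem_singleton.1 hxm with rfl
        exact fun hh => hf' (psi2_inj (hh.trans (map_one psi2).symm))
      refine valid_append
        (valid_append hsing1 (Valid_map _ psi1_inj hCvalid) ?_)
        (valid_append hmergesing
          (valid_append (Valid_map _ psi2_inj hCvalid) hsing2 ?_) ?_) ?_
      · intro x hxm y hym
        have hx1 : x = ⟨true, psi1 f⟩ := by
          simpa using (Option.mem_some_iff.1 hxm).symm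
        rw [List.head?_map] at hym
        rcases Option.map_eq_some_iff.1 hym with ⟨z, hz, rfl⟩
        rw [hx1, Lmap_fst, hChead z hz]
        simp
      · intro x hxm y hym
        rw [List.getLast?_map] at hxm
        rcases Option.map_eq_some_iff.1 hxm with ⟨z, hz, rfl⟩
        have hy1 : y = ⟨true, psi2 f'⟩ := mem_head?_cons hym
        rw [hy1, Lmap_fst, hClast z hz]
        simp
      · intro x hxm y hym
        have hx1 : x = ⟨true, psi1 f' * psi2 f⟩ := by
          simpa using (Option.mem_some_iff.1 hxm).symm
        have hCmapne : C.map (Lmap (G := G) psi2) ≠ [] := by simp [hC]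
        rw [List.head?_append_of_ne_nil _ hCmapne, List.head?_map] at hym
        rcases Option.map_eq_some_iff.1 hym with ⟨z, hz, rfl⟩
        rw [hx1, Lmap_fst, hChead z hz]
        simp
      · intro x hxm y hym
        have hy1 : y = ⟨true, psi1 f' * psi2 f⟩ := by
          have hh : (([⟨true, psi1 f' * psi2 f⟩] : List (Σ b, Fam G (ULift.{u} Bool) b))
                ++ (C.map (Lmap psi2)
                  ++ ([⟨true, psi2 f'⟩] : List (Σ b, Fam G (ULift.{u} Bool) b)))).head?
              = some (⟨true, psi1 f' * psi2 f⟩ : Σ b, Fam G (ULift.{u} Bool) b) := rfl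
          rw [hh] at hym
          exact (Option.mem_some_iff.1 hym).symm
        have hCmapne : C.map (Lmap (G := G) psi1) ≠ [] := by simp [hC]
        rw [List.getLast?_append_of_ne_nil _ hCmapne, List.getLast?_map] at hxm
        rcases Option.map_eq_some_iff.1 hxm with ⟨z, hz, rfl⟩
        rw [hy1, Lmap_fst, hClast z hz]
        simp
    have hlists := P_inj hval1 hval2 h
    have hlen := congrArg List.length hlists
    rw [hRL] at hlen
    simp only [hC, List.length_map, List.length_append, List.length_cons,
      List.length_singleton, List.length_nil] at hlen
    omega

end Core
section Core2

variable {G : Type u} [Group G]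

lemma xKel_ne_one : (xKel (G := G)) ≠ 1 := by
  intro hcon
  have hv1 : Valid [(⟨true, xuGen⟩ : Σ b, Fam G PUnit.{u+1} b)] := by
    refine ⟨?_, List.isChain_singleton _⟩
    intro x hx
    rcases List.mem_singleton.1 hx with rfl
    exact xuGen_ne_one
  have hv2 : Valid ([] : List (Σ b, Fam G PUnit.{u+1} b)) := ⟨by simp, List.isChain_nil⟩
  have h1 : P [(⟨true, xuGen⟩ : Σ b, Fam G PUnit.{u+1} b)]
      = P ([] : List (Σ b, Fam G PUnit.{u+1} b)) := by
    rw [P_singleton, P_nil]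
    exact hcon
  simpa using P_inj hv1 hv2 h1

lemma incl_ne_xKel {g : G} (hg : g ≠ 1) : incl g ≠ xKel := by
  intro hcon
  have hv1 : Valid [(⟨false, g⟩ : Σ b, Fam G PUnit.{u+1} b)] := by
    refine ⟨?_, List.isChain_singleton _⟩
    intro x hx
    rcases List.mem_singleton.1 hx with rfl
    exact hg
  have hv2 : Valid [(⟨true, xuGen⟩ : Σ b, Fam G PUnit.{u+1} b)] := by
    refine ⟨?_, List.isChain_singleton _⟩
    intro x hx
    rcases List.mem_singleton.1 hx with rfl
    exact xuGen_ne_one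
  have h1 : P [(⟨false, g⟩ : Σ b, Fam G PUnit.{u+1} b)]
      = P [(⟨true, xuGen⟩ : Σ b, Fam G PUnit.{u+1} b)] := by
    rw [P_singleton, P_singleton]
    exact hcon
  have := P_inj hv1 hv2 h1
  exact absurd (congrArg Sigma.fst (List.cons.inj this).1) (by simp)

lemma stripBack {l : List (Σ b, Fam G PUnit.{u+1} b)} (hval : Valid l) (hne : l ≠ [])
    (hhead : ∀ x ∈ l.head?, x.1 = true) :
    ∃ (h : G) (A : List (Σ b, Fam G PUnit.{u+1} b)),
      Valid A ∧ xBdd A ∧ P l = P A * incl h := by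
  rcases List.eq_nil_or_concat' l with rfl | ⟨C, z, rfl⟩
  · exact absurd rfl hne
  obtain ⟨bz, fz⟩ := z
  cases bz
  · -- ends with a `G`-letter
    have hCne : C ≠ [] := by
      rintro rfl
      have := hhead ⟨false, fz⟩ (by rw [List.nil_append, List.head?_cons]; rfl)
      simp at this
    have hchain := List.isChain_append.1 hval.2
    refine ⟨fz, C, ⟨?_, hchain.1⟩, ⟨hCne, ?_, ?_⟩, ?_⟩
    · intro x hx
      exact hval.1 x (by simp [hx])
    · intro x hx
      apply hhead
      rwa [List.head?_append_of_ne_nil _ hCne]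
    · intro x hx
      have := hchain.2.2 x hx ⟨false, fz⟩ (by rw [List.head?_cons]; rfl)
      revert this
      cases x.1 <;> simp
    · rw [P_append, P_singleton]
      simp; rfl
  · -- ends with a free-group letter
    refine ⟨1, C ++ [⟨true, fz⟩], hval, ⟨hne, hhead, ?_⟩, by simp⟩
    intro x hx
    rw [mem_getLast?_concat hx]

lemma decompose {l : List (Σ b, Fam G PUnit.{u+1} b)} (hval : Valid l) :
    l = []
    ∨ (∃ g : G, g ≠ 1 ∧ P l = incl g)
    ∨ (∃ (g h : G) (A : List (Σ b, Fam G PUnit.{u+1} b)), Valid A ∧ xBdd A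
        ∧ P l = incl g * P A * incl h) := by
  rcases l with _ | ⟨⟨b0, f0⟩, B⟩
  · exact Or.inl rfl
  cases b0
  · -- starts with a `G`-letter
    have hg : f0 ≠ 1 := hval.1 ⟨false, f0⟩ (by simp)
    rcases B with _ | ⟨b1, B1⟩
    · refine Or.inr (Or.inl ⟨f0, hg, ?_⟩)
      rw [P_singleton]
      rfl
    · have hchain := List.isChain_cons.1 hval.2
      have hBval : Valid (b1 :: B1) := ⟨fun x hx => hval.1 x (by simp [hx]), hchain.2⟩
      have hBhead : ∀ x ∈ (b1 :: B1).head?, x.1 = true := by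
        intro x hx
        have := hchain.1 x hx
        revert this
        cases x.1 <;> simp
      obtain ⟨h, A, hAval, hAxb, hPB⟩ := stripBack hBval (by simp) hBhead
      refine Or.inr (Or.inr ⟨f0, h, A, hAval, hAxb, ?_⟩)
      rw [P_cons, hPB]
      simp [mul_assoc]; rfl
  · -- starts with a free-group letter
    have hhead : ∀ x ∈ ((⟨true, f0⟩ : Σ b, Fam G PUnit.{u+1} b) :: B).head?, x.1 = true := by
      intro x hx
      rw [mem_head?_cons hx]
    obtain ⟨h, A, hAval, hAxb, hPB⟩ := stripBack hval (by simp) hhead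
    refine Or.inr (Or.inr ⟨1, h, A, hAval, hAxb, ?_⟩)
    rw [hPB]
    simp

/-- The core classification: a solution of the two equations is a conjugate of `x` by `G`. -/
theorem core {t t' : CoprodI (Fam G PUnit.{u+1})} (hE1 : E1 t)
    (hE2 : subst incl t' t = xKel) :
    ∃ g : G, t = incl g * xKel * (incl g)⁻¹ := by
  classical
  have ht : P ((wEquiv (G := G) (β := PUnit.{u+1}) t).toList) = t := by
    show (wEquiv (G := G) (β := PUnit.{u+1})).symm (wEquiv (G := G) (β := PUnit.{u+1}) t) = t
    exact Equiv.symm_apply_apply _ t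
  have hval : Valid ((wEquiv (G := G) (β := PUnit.{u+1}) t).toList) :=
    ⟨(wEquiv (G := G) (β := PUnit.{u+1}) t).ne_one,
     (wEquiv (G := G) (β := PUnit.{u+1}) t).chain_ne⟩
  rcases decompose hval with hnil | ⟨g, hg, hPl⟩ | ⟨g, h, A, hAval, hAxb, hPl⟩
  · rw [hnil, P_nil] at ht
    exfalso
    apply xKel_ne_one (G := G)
    rw [← hE2, ← ht, map_one]
  · rw [hPl] at ht
    exfalso
    apply incl_ne_xKel hg
    rw [← hE2, ← ht, subst_incl]
  · rw [hPl] at ht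
    -- conjugate by `g`
    have hconj : (incl g)⁻¹ * t * incl g = P A * incl (h * g) := by
      rw [← ht, map_mul]
      group
    have hE1' : E1 (P A * incl (h * g)) := by
      rw [← hconj]
      exact E1_conj hE1 g
    by_cases hhg : h * g = 1
    · rw [hhg, map_one, mul_one] at hE1'
      obtain ⟨f, hAeq, hfrel⟩ := E1_xbdd hAval hAxb hE1'
      have hfne : f ≠ 1 := by
        apply hAval.1 ⟨true, f⟩
        rw [hAeq]
        simp
      rcases freegroup_sol f hfrel with rfl | rfl
      · exact absurd rfl hfne
      · refine ⟨g, ?_⟩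
        have hPAx : P A = xKel := by
          rw [hAeq, P_singleton]
          rfl
        have hh : h = g⁻¹ := eq_inv_of_mul_eq_one_left hhg
        rw [← ht, hPAx, hh]
        rw [show incl (g⁻¹ : G) = (incl (G := G) (β := PUnit.{u+1}) g)⁻¹ from map_inv _ g]
    · exact absurd hE1' (not_E1_mul_incl hAval hAxb hhg)

/-- injectivity of conjugation -/
lemma conj_eq_self_imp {g : G} (h : incl g * xKel * (incl g)⁻¹ = xKel) : g = 1 := by
  by_contra hg
  have h2 : incl g * xKel = xKel * incl g := by
    have := congrArg (· * incl g) h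
    simpa [mul_assoc] using this
  have hv1 : Valid [(⟨false, g⟩ : Σ b, Fam G PUnit.{u+1} b), ⟨true, xuGen⟩] := by
    refine ⟨?_, ?_⟩
    · intro x hx
      rcases List.mem_cons.1 hx with rfl | hx
      · exact hg
      · rcases List.mem_singleton.1 hx with rfl
        exact xuGen_ne_one
    · exact List.isChain_cons_cons.2 ⟨by simp, List.isChain_singleton _⟩
  have hv2 : Valid [(⟨true, xuGen⟩ : Σ b, Fam G PUnit.{u+1} b), ⟨false, g⟩] := by
    refine ⟨?_, ?_⟩
    · intro x hx
      rcases List.mem_cons.1 hx with rfl | hx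
      · exact xuGen_ne_one
      · rcases List.mem_singleton.1 hx with rfl
        exact hg
    · exact List.isChain_cons_cons.2 ⟨by simp, List.isChain_singleton _⟩
  have h3 : P [(⟨false, g⟩ : Σ b, Fam G PUnit.{u+1} b), ⟨true, xuGen⟩]
      = P [(⟨true, xuGen⟩ : Σ b, Fam G PUnit.{u+1} b), ⟨false, g⟩] := by
    simp only [P_cons, P_nil, mul_one, of_false_eq_incl, of_true_eq_xof]
    exact h2
  have := P_inj hv1 hv2 h3
  exact absurd (congrArg Sigma.fst (List.cons.inj this).1) (by simp)

end Core2
section Glue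

/-- reinterpret a `MonoidHom` as a `Grp` morphism -/
def toHom {A B : GrpCat.{u}} (f : ↥A →* ↥B) : A ⟶ B := GrpCat.ofHom f

/-- reinterpret a `Grp` morphism as a `MonoidHom` -/
def toMul {A B : GrpCat.{u}} (f : A ⟶ B) : ↥A →* ↥B := f.hom

@[simp] lemma toHom_apply {A B : GrpCat.{u}} (f : ↥A →* ↥B) (a : ↥A) : toHom f a = f a := rfl
@[simp] lemma toMul_apply {A B : GrpCat.{u}} (f : A ⟶ B) (a : ↥A) : toMul f a = f a := rfl

variable (Gc : GrpCat.{u})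

/-- the object `G ∗ ℤ` of `Under G` -/
def oK : Under Gc :=
  Under.mk (Y := GrpCat.of (CoprodI (Fam (↥Gc) PUnit.{u+1})))
    (toHom (incl (G := ↥Gc) (β := PUnit.{u+1})))

/-- the object `G ∗ F₂` of `Under G` -/
def oL : Under Gc :=
  Under.mk (Y := GrpCat.of (CoprodI (Fam (↥Gc) (ULift.{u} Bool))))
    (toHom (incl (G := ↥Gc) (β := ULift.{u} Bool)))

variable {Gc}

/-- The fundamental naturality formula. -/
lemma app_eq (α : Under.forget Gc ⟶ Under.forget Gc) (m : Under Gc) (a : ↥(m.right)) :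
    α.app m a = subst (toMul m.hom) a (α.app (oK Gc) xKel) := by
  have hcomm : (oK Gc).hom ≫ toHom (subst (toMul m.hom) a) = m.hom := by
    ext x
    show subst (toMul m.hom) a (incl x) = m.hom x
    rw [subst_incl]
    rfl
  have hnat := α.naturality (Under.homMk (U := oK Gc) (V := m)
    (toHom (subst (toMul m.hom) a)) hcomm)
  have h2 := congrArg (fun (φ : (Under.forget Gc).obj (oK Gc) ⟶ (Under.forget Gc).obj m)
    => φ xKel) hnat
  simp only [GrpCat.coe_comp, Function.comp_apply] at h2
  have h3 : (Under.forget Gc).map (Under.homMk (U := oK Gc) (V := m)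
      (toHom (subst (toMul m.hom) a)) hcomm) xKel = a := by
    show subst (toMul m.hom) a xKel = a
    show subst (toMul m.hom) a (xof xuGen) = a
    rw [subst_xof]
    simp [xuGen]
  exact (congrArg (fun y => α.app m y) h3).symm.trans h2

/-- substituting an element of the free group on two generators -/
lemma subst_eq_mapF (w : FreeGroup (ULift.{u} Bool)) :
    subst (incl (G := ↥Gc)) ((xof w : CoprodI (Fam (↥Gc) (ULift.{u} Bool))))
      = mapF (G := ↥Gc) (FreeGroup.lift fun _ : PUnit.{u+1} => w) := by
  apply CoprodI.ext_hom
  intro i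
  cases i
  · ext g
    show subst incl (xof w) (incl g)
        = mapF (G := ↥Gc) (FreeGroup.lift fun _ : PUnit.{u+1} => w) (incl g)
    exact (subst_incl _ _ g).trans (mapF_incl _ g).symm
  · apply FreeGroup.ext_hom
    intro a
    cases a
    show subst incl (xof w) (xof (FreeGroup.of PUnit.unit))
        = mapF (G := ↥Gc) (FreeGroup.lift fun _ : PUnit.{u+1} => w) (xof (FreeGroup.of PUnit.unit))
    rw [subst_xof, mapF_xof]
    simp

end Glue
section Glue2

/-- pure group-theoretic conjugation identities -/
lemma grp_conj_mul {G' H' : Type*} [Group G'] [Group H'] (φ : G' →* H') (g h : G') (a : H') :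
    φ (g * h) * a * (φ (g * h))⁻¹ = φ g * (φ h * a * (φ h)⁻¹) * (φ g)⁻¹ := by
  rw [map_mul]
  group

lemma grp_conj_inv_cancel {G' H' : Type*} [Group G'] [Group H'] (φ : G' →* H') (g : G') (a : H') :
    φ g⁻¹ * (φ g * a * (φ g)⁻¹) * (φ g⁻¹)⁻¹ = a := by
  rw [map_inv]
  group

lemma grp_conj_inv_cancel' {G' H' : Type*} [Group G'] [Group H'] (φ : G' →* H') (g : G') (a : H') :
    φ g * (φ g⁻¹ * a * (φ g⁻¹)⁻¹) * (φ g)⁻¹ = a := by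
  rw [map_inv]
  group

lemma grp_conj_one {G' H' : Type*} [Group G'] [Group H'] (φ : G' →* H') (a : H') :
    φ 1 * a * (φ 1)⁻¹ = a := by simp

variable (Gc : GrpCat.{u})

/-- the structure morphism of an object of `Under Gc`, as a `MonoidHom` into `m.right` -/
def uhom (m : Under Gc) : (↥Gc) →* ↥(m.right) := toMul m.hom

/-- the conjugation natural transformation -/
def conjNat (g : ↥Gc) : Under.forget Gc ⟶ Under.forget Gc where
  app m := toHom ((MulAut.conj (toMul m.hom g)).toMonoidHom)
  naturality m n f := by
    ext a
    have hw : f.right (m.hom g) = n.hom g :=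
      congrArg (fun (φ : Gc ⟶ n.right) => φ g) (Under.w f)
    show toHom ((MulAut.conj (toMul n.hom g)).toMonoidHom) (f.right a)
        = f.right (toHom ((MulAut.conj (toMul m.hom g)).toMonoidHom) a)
    simp only [toHom_apply, MulEquiv.coe_toMonoidHom, MulAut.conj_apply, toMul_apply,
      map_mul, map_inv, hw]
    have key : ∀ x : ↥m.right,
        f.right (m.hom g * x * (m.hom g)⁻¹) = n.hom g * f.right x * (n.hom g)⁻¹ := by
      intro x
      rw [map_mul, map_mul, map_inv, hw]
    exact (key a).symm

/-- conjugation as a group homomorphism into the isotropy group -/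
def phi : ↥Gc →* Aut (Under.forget Gc) where
  toFun g :=
    { hom := conjNat Gc g
      inv := conjNat Gc g⁻¹
      hom_inv_id := by
        apply NatTrans.ext
        funext m
        ext a
        exact grp_conj_inv_cancel (toMul m.hom) g a
      inv_hom_id := by
        apply NatTrans.ext
        funext m
        ext a
        exact grp_conj_inv_cancel' (toMul m.hom) g a }
  map_one' := by
    apply Aut.ext
    apply NatTrans.ext
    funext m
    ext a
    exact grp_conj_one (toMul m.hom) a
  map_mul' g h := by
    apply Aut.ext
    apply NatTrans.ext
    funext m
    ext a
    exact grp_conj_mul (toMul m.hom) g h a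

lemma subst_xKel {H : Type u} [Group H] (m' : (↥Gc) →* H) (a : H) :
    subst m' a xKel = a := by
  show subst m' a (xof xuGen) = a
  rw [subst_xof]
  simp [xuGen]

lemma phi_injective : Function.Injective (phi Gc) := by
  rw [injective_iff_map_eq_one]
  intro g hg
  have h1 : (phi Gc g).hom.app (oK Gc) xKel
      = (1 : Aut (Under.forget Gc)).hom.app (oK Gc) xKel :=
    congrArg (fun (β : Aut (Under.forget Gc)) => β.hom.app (oK Gc) xKel) hg
  have h2 : incl g * xKel * (incl g)⁻¹ = xKel := h1
  exact conj_eq_self_imp h2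

lemma phi_surjective : Function.Surjective (phi Gc) := by
  intro α
  set t := α.hom.app (oK Gc) xKel with hts
  set t' := α.inv.app (oK Gc) xKel with hts'
  have hE2 : subst incl t' t = xKel := by
    have h0 : α.inv.app (oK Gc) ≫ α.hom.app (oK Gc)
        = 𝟙 ((Under.forget Gc).obj (oK Gc)) :=
      congrArg (fun (τ : Under.forget Gc ⟶ Under.forget Gc) => τ.app (oK Gc)) α.inv_hom_id
    have h1 : α.hom.app (oK Gc) t' = xKel :=
      congrArg (fun (φ : (Under.forget Gc).obj (oK Gc) ⟶ (Under.forget Gc).obj (oK Gc))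
        => φ xKel) h0
    exact (app_eq α.hom (oK Gc) t').symm.trans h1
  have hE1 : E1 t := by
    have happ : ∀ a : CoprodI (Fam (↥Gc) (ULift.{u} Bool)),
        toMul (α.hom.app (oL Gc)) a = subst (incl (G := ↥Gc)) a t :=
      fun a => app_eq α.hom (oL Gc) a
    have h12 : subst incl ((xof (X1 * X2)) : CoprodI (Fam (↥Gc) (ULift.{u} Bool))) t
        = subst incl (xof (X1 : FreeGroup (ULift.{u} Bool))) t
          * subst incl (xof (X2 : FreeGroup (ULift.{u} Bool))) t :=
      (happ _).symm.trans <|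
        (congrArg (toMul (α.hom.app (oL Gc))) (map_mul xof X1 X2)).trans <|
          (map_mul (toMul (α.hom.app (oL Gc))) _ _).trans <|
            congrArg₂ (· * ·) (happ _) (happ _)
    exact (DFunLike.congr_fun (subst_eq_mapF (Gc := Gc) (X1 * X2)) t).symm.trans <|
      h12.trans <| congrArg₂ (· * ·) (DFunLike.congr_fun (subst_eq_mapF (Gc := Gc) X1) t)
        (DFunLike.congr_fun (subst_eq_mapF (Gc := Gc) X2) t)
  obtain ⟨g, hgt⟩ := core hE1 hE2
  refine ⟨g, ?_⟩
  apply Aut.ext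
  apply NatTrans.ext
  funext m
  ext a
  have e1 : α.hom.app m a = subst (uhom Gc m) (show ↥(m.right) from a) t :=
    app_eq α.hom m a
  have e2 : subst (uhom Gc m) (show ↥(m.right) from a) t
      = uhom Gc m g * (show ↥(m.right) from a) * (uhom Gc m g)⁻¹ := by
    rw [hgt]
    simp only [map_mul, map_inv, subst_incl, subst_xKel]
    exact congrArg₂ (fun x y => x * y * x⁻¹) (subst_incl _ _ g) (subst_xKel _ _ _)
  exact (e1.trans e2).symm

end Glue2
end IsotropyGrpAux

open IsotropyGrpAux in
/-- The covariant isotropy group of a group `G` is isomorphic to `G` itself, via the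
group isomorphism sending `g : G` to the extended inner automorphism whose component at an
object `m : G ⟶ H` of `Under G` is conjugation by `m g` on `H`. -/
theorem isotropy_of_group_eq_self (G : GrpCat) :
    ∃ e : G ≃* Aut (Under.forget G),
      ∀ (g : G) (m : Under G) (a : (m.right : GrpCat)),
        ((e g).hom.app m) a
          = (show (m.right : GrpCat) from m.hom g) * a * (show (m.right : GrpCat) from m.hom g)⁻¹ := by
  refine ⟨MulEquiv.ofBijective (phi G) ⟨phi_injective G, phi_surjective G⟩, ?_⟩
  intro g m a
  rfl
end

section
/- For every monoid M, the covariant isotropy group of M in the category of monoids is isomorphic to the group Mˣ of invertible elements (units) of M: there is a group isomorphism between Aut(Under.forget M), the group of natural automorphisms of the coslice projection functor Under.forget M : Under M ⥤ MonCat, and Mˣ, sending a unit u ∈ Mˣ to the natural automorphism whose component at an object (m : M ⟶ N) of Under M is conjugation by the unit m(u) on N. -/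
open CategoryTheory

set_option linter.unusedSectionVars false


namespace IsotropyAux

/-- The free product `M ⋆ ⟨x⟩`: `⟨a, [b,c]⟩` represents the word `a x b x c`. -/
structure FreeX (M : Type*) where
  head : M
  tail : List M

namespace FreeX

variable {M N : Type*} [Monoid M] [Monoid N]

def mulAux (a : M) : List M → FreeX M → FreeX M
  | [], y => ⟨a * y.head, y.tail⟩
  | c :: s, y => ⟨a, (mulAux c s y).head :: (mulAux c s y).tail⟩

instance : Mul (FreeX M) := ⟨fun x y => mulAux x.head x.tail y⟩
instance : One (FreeX M) := ⟨⟨1, []⟩⟩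

lemma one_def : (1 : FreeX M) = ⟨1, []⟩ := rfl

lemma nil_mul (a : M) (y : FreeX M) : (⟨a, []⟩ : FreeX M) * y = ⟨a * y.head, y.tail⟩ := rfl

lemma cons_mul (a c : M) (s : List M) (y : FreeX M) :
    (⟨a, c :: s⟩ : FreeX M) * y
      = ⟨a, ((⟨c, s⟩ : FreeX M) * y).head :: ((⟨c, s⟩ : FreeX M) * y).tail⟩ := rfl

lemma eta (y : FreeX M) : (⟨y.head, y.tail⟩ : FreeX M) = y := rfl

private lemma hmul_mul (a : M) (y z : FreeX M) :
    (⟨a * y.head, y.tail⟩ : FreeX M) * z = ⟨a * (y * z).head, (y * z).tail⟩ := by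
  obtain ⟨b, s⟩ := y
  cases s with
  | nil =>
    show (⟨a * b, []⟩ : FreeX M) * z = _
    rw [nil_mul, nil_mul, mul_assoc]
  | cons c s =>
    rw [cons_mul b c s z]
    show (⟨a * b, c :: s⟩ : FreeX M) * z = _
    rw [cons_mul]

instance : Monoid (FreeX M) where
  one_mul y := by
    obtain ⟨b, t⟩ := y
    show (⟨(1 : M), []⟩ : FreeX M) * ⟨b, t⟩ = _
    rw [nil_mul, one_mul]
  mul_one x := by
    obtain ⟨a, t⟩ := x
    induction t generalizing a with
    | nil => show (⟨a, []⟩ : FreeX M) * ⟨1, []⟩ = _; rw [nil_mul, mul_one]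
    | cons c s ih => rw [show ((1 : FreeX M)) = ⟨1, []⟩ from rfl] at ih ⊢; rw [cons_mul, ih]
  mul_assoc x y z := by
    obtain ⟨a, t⟩ := x
    induction t generalizing a with
    | nil =>
      rw [nil_mul, nil_mul, hmul_mul]
    | cons c s ih =>
      rw [cons_mul, cons_mul, cons_mul]
      have h := ih c
      show (⟨a, ((⟨c, s⟩ : FreeX M) * y).head :: ((⟨c, s⟩ : FreeX M) * y).tail⟩ : FreeX M) * z = _
      rw [cons_mul, eta, h]

/-- inclusion of `M`. -/
def iota : M →* FreeX M where
  toFun a := ⟨a, []⟩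
  map_one' := rfl
  map_mul' a b := by rw [nil_mul]

/-- the free generator. -/
def X : FreeX M := ⟨1, [1]⟩

def evAux (f : M →* N) (b : N) : List M → M → N
  | [], a => f a
  | c :: s, a => f a * b * evAux f b s c

private lemma evAux_mul_left (f : M →* N) (b : N) (t : List M) (a h : M) :
    evAux f b t (a * h) = f a * evAux f b t h := by
  cases t with
  | nil => exact map_mul f a h
  | cons c s =>
    show f (a * h) * b * evAux f b s c = f a * (f h * b * evAux f b s c)
    rw [map_mul, mul_assoc, mul_assoc, mul_assoc]

/-- evaluation: the unique hom sending `iota m ↦ f m` and `X ↦ b`. -/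
def ev (f : M →* N) (b : N) : FreeX M →* N where
  toFun x := evAux f b x.tail x.head
  map_one' := map_one f
  map_mul' x y := by
    obtain ⟨a, t⟩ := x
    induction t generalizing a with
    | nil =>
      show evAux f b _ _ = f a * _
      rw [nil_mul]
      exact evAux_mul_left f b y.tail a y.head
    | cons c s ih =>
      show f a * b * evAux f b ((⟨c,s⟩ : FreeX M) * y).tail ((⟨c,s⟩ : FreeX M) * y).head
          = (f a * b * evAux f b s c) * (evAux f b y.tail y.head)
      have ih' : evAux f b ((⟨c,s⟩ : FreeX M) * y).tail ((⟨c,s⟩ : FreeX M) * y).head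
          = evAux f b s c * evAux f b y.tail y.head := ih c
      rw [ih']
      exact (mul_assoc _ _ _).symm

lemma ev_iota (f : M →* N) (b : N) (a : M) : ev f b (iota a) = f a := rfl

lemma ev_X (f : M →* N) (b : N) : ev f b X = b := by
  show f 1 * b * f 1 = b
  rw [map_one, one_mul, mul_one]

lemma ev_mk (f : M →* N) (b : N) (a c : M) :
    ev f b ⟨a, [c]⟩ = f a * b * f c := rfl

end FreeX
end IsotropyAux
namespace IsotropyAux
namespace FreeX

variable {M N : Type*} [Monoid M] [Monoid N]

/-- number of occurrences of `X`. -/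
def deg : FreeX M →* Multiplicative ℕ := ev 1 (Multiplicative.ofAdd 1)

lemma deg_mk (a : M) (t : List M) :
    deg (⟨a, t⟩ : FreeX M) = Multiplicative.ofAdd t.length := by
  induction t generalizing a with
  | nil => rfl
  | cons c s ih =>
    show (1 : M →* Multiplicative ℕ) a * Multiplicative.ofAdd 1 * deg (⟨c, s⟩ : FreeX M) = _
    rw [ih, MonoidHom.one_apply, one_mul, ← ofAdd_add]
    show Multiplicative.ofAdd (1 + s.length) = Multiplicative.ofAdd (s.length + 1)
    rw [add_comm]

lemma deg_ev_iota (b z : FreeX M) : deg (ev iota b z) = (deg b) ^ z.tail.length := by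
  obtain ⟨a, t⟩ := z
  induction t generalizing a with
  | nil =>
    show deg (iota a) = _
    rw [show deg (iota a) = 1 from rfl, show (⟨a, ([] : List M)⟩ : FreeX M).tail.length = 0 from rfl,
      pow_zero]
  | cons c s ih =>
    have e1 : ev iota b (⟨a, c :: s⟩ : FreeX M) = iota a * b * ev iota b (⟨c, s⟩ : FreeX M) := rfl
    rw [e1, map_mul, map_mul, ih, show deg (iota a) = 1 from rfl, one_mul, ← pow_succ']
    rfl

end FreeX

variable {N : Type*} [Monoid N]

/-- conjugation by a unit, as a monoid hom. -/
def conjUnit (v : Nˣ) : N →* N where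
  toFun a := v * a * ↑v⁻¹
  map_one' := by simp
  map_mul' a b := by simp [mul_assoc]

lemma conjUnit_apply (v : Nˣ) (a : N) : conjUnit v a = v * a * ↑v⁻¹ := rfl

lemma conjUnit_conjUnit (v w : Nˣ) (a : N) :
    conjUnit v (conjUnit w a) = conjUnit (v * w) a := by
  simp [conjUnit_apply, mul_assoc]

lemma conjUnit_one (a : N) : conjUnit (1 : Nˣ) a = a := by simp [conjUnit_apply]

end IsotropyAux

open CategoryTheory IsotropyAux IsotropyAux.FreeX

universe u

namespace IsotropyAux

variable (M : MonCat.{u})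

/-- the object `M ⟶ M ⋆ ⟨X⟩` of `Under M`. -/
def Wobj : Under M := Under.mk (show M ⟶ MonCat.of (FreeX M) from MonCat.ofHom iota)

lemma subst (A : Under.forget M ⟶ Under.forget M) (m : Under M) (a : ↑m.right) :
    A.app m a = ev (show (↑M →* ↑m.right) from m.hom.hom) a (A.app (Wobj M) X) := by
  let f : Wobj M ⟶ m := Under.homMk
    (show (Wobj M).right ⟶ m.right from MonCat.ofHom (ev (show (↑M →* ↑m.right) from m.hom.hom) a))
    (by
      apply MonCat.hom_ext
      apply MonoidHom.ext
      intro s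
      rfl)
  have h := ConcreteCategory.congr_hom (A.naturality f) X
  have h' : A.app m (ev (show (↑M →* ↑m.right) from m.hom.hom) a X)
      = ev (show (↑M →* ↑m.right) from m.hom.hom) a (A.app (Wobj M) X) := h
  rwa [ev_X] at h'

end IsotropyAux
namespace IsotropyAux

namespace FreeX
variable {M N : Type*} [Monoid M] [Monoid N]

lemma deg_eq (z : FreeX M) : deg z = Multiplicative.ofAdd z.tail.length := by
  obtain ⟨a, t⟩ := z; exact deg_mk a t

end FreeX

lemma conjUnit_map_comm {P Q R : Type*} [Monoid P] [Monoid Q] [Monoid R]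
    (f : P →* Q) (g : Q →* R) (h : P →* R) (hcomm : ∀ s, g (f s) = h s) (u : Pˣ) (a : Q) :
    g (conjUnit (Units.map f u) a) = conjUnit (Units.map h u) (g a) := by
  rw [conjUnit_apply, conjUnit_apply, map_mul, map_mul, Units.coe_map, Units.coe_map,
    Units.coe_map_inv, Units.coe_map_inv, hcomm, hcomm]

variable (M : MonCat.{u})

/-- the natural transformation given by conjugation with a unit. -/
def conjT (u : (↑M)ˣ) : Under.forget M ⟶ Under.forget M where
  app m := show m.right ⟶ m.right from
    MonCat.ofHom (conjUnit (Units.map (show (↑M →* ↑m.right) from m.hom.hom) u))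
  naturality m m' F := by
    apply MonCat.hom_ext
    apply MonoidHom.ext
    intro a
    exact (conjUnit_map_comm (show (↑M →* ↑m.right) from m.hom.hom)
      (show (↑m.right →* ↑m'.right) from F.right.hom)
      (show (↑M →* ↑m'.right) from m'.hom.hom)
      (fun s => ConcreteCategory.congr_hom (Under.w F) s) u a).symm

lemma conjT_app (u : (↑M)ˣ) (m : Under M) (a : ↑m.right) :
    (conjT M u).app m a
      = conjUnit (Units.map (show (↑M →* ↑m.right) from m.hom.hom) u) a := rfl

/-- the homomorphism `Mˣ →* Aut (Under.forget M)`. -/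
def phi : (↑M)ˣ →* Aut (Under.forget M) where
  toFun u :=
    { hom := conjT M u
      inv := conjT M u⁻¹
      hom_inv_id := by
        apply NatTrans.ext
        funext m
        apply MonCat.hom_ext
        apply MonoidHom.ext
        intro a
        show conjUnit (Units.map _ u⁻¹) (conjUnit (Units.map _ u) a) = a
        rw [conjUnit_conjUnit, ← map_mul, inv_mul_cancel, map_one, conjUnit_one]
      inv_hom_id := by
        apply NatTrans.ext
        funext m
        apply MonCat.hom_ext
        apply MonoidHom.ext
        intro a
        show conjUnit (Units.map _ u) (conjUnit (Units.map _ u⁻¹) a) = a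
        rw [conjUnit_conjUnit, ← map_mul, mul_inv_cancel, map_one, conjUnit_one] }
  map_one' := by
    apply Aut.ext
    apply NatTrans.ext
    funext m
    apply MonCat.hom_ext
    apply MonoidHom.ext
    intro a
    show conjUnit (Units.map _ 1) a = a
    rw [map_one, conjUnit_one]
  map_mul' u v := by
    apply Aut.ext
    apply NatTrans.ext
    funext m
    apply MonCat.hom_ext
    apply MonoidHom.ext
    intro a
    show conjUnit (Units.map _ (u * v)) a = conjUnit (Units.map _ u) (conjUnit (Units.map _ v) a)
    rw [conjUnit_conjUnit, map_mul]

lemma phi_injective : Function.Injective (phi M) := by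
  intro u v h
  have h1 := ConcreteCategory.congr_hom
    (congrArg (fun (α : Aut (Under.forget M)) => α.hom.app (Wobj M)) h) X
  have h2 : (⟨(u : ↑M) * 1, [1 * ((u⁻¹ : (↑M)ˣ) : ↑M)]⟩ : FreeX ↑M)
      = ⟨(v : ↑M) * 1, [1 * ((v⁻¹ : (↑M)ˣ) : ↑M)]⟩ := h1
  have h3 : (u : ↑M) * 1 = (v : ↑M) * 1 := congrArg FreeX.head h2
  rw [mul_one, mul_one] at h3
  exact Units.ext h3

lemma phi_surjective : Function.Surjective (phi M) := by
  intro α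
  have hBA : ∀ a : FreeX ↑M, α.inv.app (Wobj M) (α.hom.app (Wobj M) a) = a := fun a =>
    ConcreteCategory.congr_hom
      (congrArg (fun (t : Under.forget M ⟶ Under.forget M) => t.app (Wobj M)) α.hom_inv_id) a
  have hAB : ∀ a : FreeX ↑M, α.hom.app (Wobj M) (α.inv.app (Wobj M) a) = a := fun a =>
    ConcreteCategory.congr_hom
      (congrArg (fun (t : Under.forget M ⟶ Under.forget M) => t.app (Wobj M)) α.inv_hom_id) a
  set w : FreeX ↑M := α.hom.app (Wobj M) X with hw
  set w' : FreeX ↑M := α.inv.app (Wobj M) X with hw'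
  have key1 : ev iota w w' = X := by
    have := (subst M α.inv (Wobj M) w).symm
    rw [← hw'] at this
    exact this.trans (hBA X)
  have key2 : ev iota w' w = X := by
    have := (subst M α.hom (Wobj M) w').symm
    rw [← hw] at this
    exact this.trans (hAB X)
  -- length analysis
  have h3 := congrArg deg key1
  rw [deg_ev_iota, deg_eq, show deg (X : FreeX ↑M) = Multiplicative.ofAdd 1 from rfl] at h3
  have hlen : w'.tail.length * w.tail.length = 1 := by
    simpa using congrArg Multiplicative.toAdd h3
  obtain ⟨hl1, hl2⟩ := mul_eq_one.mp hlen
  obtain ⟨m₁, hm₁⟩ := List.length_eq_one_iff.mp hl2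
  obtain ⟨n₁, hn₁⟩ := List.length_eq_one_iff.mp hl1
  have hwrep : w = ⟨w.head, [m₁]⟩ := by rw [← hm₁]; exact (eta w).symm
  have hw'rep : w' = ⟨w'.head, [n₁]⟩ := by rw [← hn₁]; exact (eta w').symm
  set m₀ := w.head
  set n₀ := w'.head
  -- coordinate relations
  have c1 : (⟨n₀ * m₀, [m₁ * n₁]⟩ : FreeX ↑M) = (⟨1, [1]⟩ : FreeX ↑M) := by
    have := key1
    rw [hwrep, hw'rep] at this
    exact this
  have c2 : (⟨m₀ * n₀, [n₁ * m₁]⟩ : FreeX ↑M) = (⟨1, [1]⟩ : FreeX ↑M) := by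
    have := key2
    rw [hwrep, hw'rep] at this
    exact this
  have e3 : m₀ * n₀ = 1 := congrArg FreeX.head c2
  -- the relation m₁ * m₀ = 1 from multiplicativity
  have hXX : α.hom.app (Wobj M) (X * X) = w * w := by
    exact map_mul (α.hom.app (Wobj M)).hom X X
  have hXX2 : α.hom.app (Wobj M) (X * X)
      = ev (show (↑M →* ↑(Wobj M).right) from (Wobj M).hom.hom) (X * X) w :=
    subst M α.hom (Wobj M) (X * X)
  have c3 : (⟨m₀ * 1, [1 * 1, 1 * m₁]⟩ : FreeX ↑M) = ⟨m₀, [m₁ * m₀, m₁]⟩ := by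
    have := hXX2.symm.trans hXX
    rw [hwrep] at this
    exact this
  have e5 : m₁ * m₀ = 1 := by
    have := congrArg FreeX.tail c3
    simp only [List.cons.injEq, one_mul] at this
    exact this.1.symm
  have e6 : m₀ * m₁ = 1 := by
    have hn : n₀ = m₁ := by
      have h' : m₁ * (m₀ * n₀) = m₁ := by rw [e3, mul_one]
      rw [← mul_assoc, e5, one_mul] at h'
      exact h'
    rw [hn] at e3
    exact e3
  refine ⟨⟨m₀, m₁, e6, e5⟩, ?_⟩
  apply Aut.ext
  apply NatTrans.ext
  funext m
  apply MonCat.hom_ext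
  apply MonoidHom.ext
  intro a
  have h9 : α.hom.app m a
      = (show (↑M →* ↑m.right) from m.hom.hom) m₀ * (show ↑m.right from a)
          * (show (↑M →* ↑m.right) from m.hom.hom) m₁ := by
    have h0 : α.hom.app m a = ev (show (↑M →* ↑m.right) from m.hom.hom) a w :=
      subst M α.hom m a
    rw [hwrep] at h0
    exact h0.trans (ev_mk _ _ _ _)
  exact h9.symm

end IsotropyAux


/-- The covariant isotropy group of a monoid `M` is isomorphic to the group `Mˣ` of units of
`M`, via the group isomorphism sending a unit `u : Mˣ` to the extended inner automorphism whose
component at an object `m : M ⟶ N` of `Under M` is conjugation by the unit `m u` on `N`. -/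
theorem isotropy_of_monoid_eq_units (M : MonCat) :
    ∃ e : (M : Type _)ˣ ≃* Aut (Under.forget M),
      ∀ (u : (M : Type _)ˣ) (m : Under M) (a : (m.right : MonCat)),
        ((e u).hom.app m) a
          = ((Units.map (show (M : Type _) →* (m.right : MonCat) from m.hom.hom) u : (m.right : MonCat)ˣ) : (m.right : MonCat))
              * a *
            (((Units.map (show (M : Type _) →* (m.right : MonCat) from m.hom.hom) u)⁻¹ : (m.right : MonCat)ˣ) : (m.right : MonCat)) := by
  refine ⟨MulEquiv.ofBijective (IsotropyAux.phi M)
    ⟨IsotropyAux.phi_injective M, IsotropyAux.phi_surjective M⟩, ?_⟩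
  intro u m a
  rfl
end

section
/- For every commutative monoid M, the covariant isotropy group of M in the category of commutative monoids is trivial: every natural automorphism of the coslice projection functor Under.forget M : Under M ⥤ CommMonCat is equal to the identity natural transformation. -/
open CategoryTheory

universe u

namespace IsotropyAux

variable (M : CommMonCat.{u})

/-- The "generic" commutative monoid under `M`: `M × Multiplicative ℕ`. -/
abbrev GM : Type u := ↥M × Multiplicative (ULift.{u} ℕ)

/-- The generic object in `Under M`. -/
def G : Under M :=
  Under.mk (CommMonCat.ofHom (MonoidHom.inl ↥M (Multiplicative (ULift.{u} ℕ))) :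
    M ⟶ CommMonCat.of (GM M))

/-- The generic element. -/
def gen : GM M := (1, Multiplicative.ofAdd (ULift.up 1))

/-- Evaluation of a "polynomial": `(m, n) ↦ x m * a ^ n`. -/
def evalHom {X : Type u} [CommMonoid X] (x : ↥M →* X) (a : X) : GM M →* X where
  toFun p := x p.1 * a ^ (Multiplicative.toAdd p.2).down
  map_one' := by simp
  map_mul' p q := by
    simp only [Prod.fst_mul, Prod.snd_mul, map_mul, toAdd_mul]
    rw [show ((Multiplicative.toAdd p.2) + (Multiplicative.toAdd q.2)).down
        = (Multiplicative.toAdd p.2).down + (Multiplicative.toAdd q.2).down from rfl,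
      pow_add, mul_mul_mul_comm]

lemma evalHom_gen {X : Type u} [CommMonoid X] (x : ↥M →* X) (a : X) :
    evalHom M x a (gen M) = a := by
  simp [evalHom, gen]

/-- The under-morphism from the generic object given by an element `a`. -/
def poly (X : Under M) (a : ↥X.right) : G M ⟶ X :=
  Under.homMk (CommMonCat.ofHom (evalHom M X.hom.hom a))
    (by
      apply CommMonCat.ext
      intro m
      show evalHom M X.hom.hom a (m, 1) = X.hom m
      simp [evalHom])

/-- Exponent extraction hom. -/
def expHom : GM M →* Multiplicative ℕ where
  toFun p := Multiplicative.ofAdd (Multiplicative.toAdd p.2).down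
  map_one' := rfl
  map_mul' p q := rfl

/-- The structure map of an under-object as a `MonoidHom`. -/
def uhom (X : Under M) : ↥M →* ↥X.right := X.hom.hom

/-- The component of a natural endomap of `Under.forget M` as a `MonoidHom`. -/
def appHom (τ : Under.forget M ⟶ Under.forget M) (X : Under M) : ↥X.right →* ↥X.right :=
  (τ.app X).hom

lemma nat (τ : Under.forget M ⟶ Under.forget M) {A B : Under M} (f : A ⟶ B) (a : ↥A.right) :
    appHom M τ B (f.right.hom a)
      = f.right.hom (appHom M τ A a) :=
  congrArg (fun φ => φ.hom a) (τ.naturality f)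

/-- Key naturality computation: any natural endomap of `Under.forget M` is given by
evaluation at the generic element. -/
lemma key (τ : Under.forget M ⟶ Under.forget M) (X : Under M) (a : ↥X.right) :
    appHom M τ X a = uhom M X (appHom M τ (G M) (gen M)).1 *
      a ^ (Multiplicative.toAdd (appHom M τ (G M) (gen M)).2).down := by
  have h := nat M τ (poly M X a) (gen M)
  have hg : (poly M X a).right.hom (gen M) = a := evalHom_gen M _ a
  rw [hg] at h
  rw [h]
  rfl

end IsotropyAux

open IsotropyAux

/-- The covariant isotropy group of any commutative monoid is trivial: every natural
automorphism of the coslice projection functor `Under.forget M : Under M ⥤ CommMonCat`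
is the identity. -/
theorem isotropy_of_commMonoid_trivial (M : CommMonCat) (α : Aut (Under.forget M)) :
    α.hom = 𝟙 (Under.forget M) := by
  set g := appHom M α.hom (G M) (gen M) with hgdef
  set b := appHom M α.inv (G M) (gen M) with hbdef
  -- the `M`-component of `g` is `1`, since `α.hom.app (G M)` maps `1` to `1`
  have hm : g.1 = 1 := by
    have h2 := key M α.hom (G M) (1 : GM M)
    erw [map_one (appHom M α.hom (G M))] at h2
    have h3 := congrArg Prod.fst h2
    have h4 : ((((g.1 : ↥M), (1 : Multiplicative (ULift ℕ))) * (1 : GM M) ^ (Multiplicative.toAdd g.2).down : GM M)).1 = (1 : GM M).1 := h3.symm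
    simpa using h4
  have hn : b.1 = 1 := by
    have h2 := key M α.inv (G M) (1 : GM M)
    erw [map_one (appHom M α.inv (G M))] at h2
    have h3 := congrArg Prod.fst h2
    have h4 : ((((b.1 : ↥M), (1 : Multiplicative (ULift ℕ))) * (1 : GM M) ^ (Multiplicative.toAdd b.2).down : GM M)).1 = (1 : GM M).1 := h3.symm
    simpa using h4
  -- composing the two exponents gives 1
  have hcomp : appHom M α.inv (G M) g = gen M :=
    congrArg (fun τ => (τ.app (G M)).hom (gen M)) α.hom_inv_id
  have hk : (Multiplicative.toAdd g.2).down = 1 := by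
    have h2 := key M α.inv (G M) g
    rw [hcomp, ← hbdef] at h2
    have h3 := congrArg (expHom M) h2
    erw [map_mul, map_pow] at h3
    have e1 : expHom M (gen M) = Multiplicative.ofAdd 1 := rfl
    have e2 : expHom M (uhom M (G M) b.1) = 1 := rfl
    rw [e1, e2, one_mul] at h3
    have h4 := congrArg Multiplicative.toAdd h3
    rw [toAdd_pow, toAdd_ofAdd, smul_eq_mul] at h4
    exact Nat.eq_one_of_mul_eq_one_left h4.symm
  -- now every component is the identity
  ext X a
  have h := key M α.hom X a
  rw [← hgdef, hm, hk] at h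
  simp only [map_one, one_mul, pow_one] at h
  rw [NatTrans.id_app]
  show appHom M α.hom X a = a
  exact h.trans (pow_one a)
end

section
/- (Garner) The category Cat of small categories has trivial covariant isotropy: for every small category 𝒞 (object of Cat), every natural automorphism of the coslice projection functor Under.forget 𝒞 : Under 𝒞 ⥤ Cat is equal to the identity natural transformation. -/
open CategoryTheory

universe v u

/-- The walking arrow, with adjustable universes. -/
inductive Arr2 : Type u
  | zero | one

namespace Arr2

instance : Category.{v} Arr2.{u} where
  Hom a b := ULift.{v} (PLift (a = .one → b = .one))
  id _ := ⟨⟨id⟩⟩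
  comp f g := ⟨⟨fun h => g.down.down (f.down.down h)⟩⟩
  id_comp _ := rfl
  comp_id _ := rfl
  assoc _ _ _ := rfl

instance (a b : Arr2.{u}) : Subsingleton (a ⟶ b) := by
  constructor; rintro ⟨⟨f⟩⟩ ⟨⟨g⟩⟩; rfl

/-- the unique nonidentity arrow -/
def arr : (Arr2.zero : Arr2.{u}) ⟶ Arr2.one := ⟨⟨fun h => by cases h⟩⟩

theorem no_one_zero (f : (Arr2.one : Arr2.{u}) ⟶ Arr2.zero) : False := by
  cases f.down.down rfl

end Arr2

section Glue

variable {C D : Type u} [Category.{v} C] [Category.{v} D]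

/-- object part of copairing -/
def glueObj (f : C ⥤ D) {d₁ d₂ : D} (u : d₁ ⟶ d₂) : C ⊕ Arr2.{u} → D
  | .inl c => f.obj c
  | .inr .zero => d₁
  | .inr .one => d₂

/-- map part of copairing -/
def glueMap (f : C ⥤ D) {d₁ d₂ : D} (u : d₁ ⟶ d₂) :
    ∀ {X Y : C ⊕ Arr2.{u}}, (X ⟶ Y) → (glueObj f u X ⟶ glueObj f u Y)
  | .inl _, .inl _, h => f.map h.down
  | .inr .zero, .inr .zero, _ => 𝟙 d₁
  | .inr .zero, .inr .one, _ => u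
  | .inr .one, .inr .one, _ => 𝟙 d₂
  | .inr .one, .inr .zero, h => (Arr2.no_one_zero h.down).elim

/-- The copairing functor `C ⊕ Arr2 ⥤ D` sending the extra arrow to `u`. -/
def glue (f : C ⥤ D) {d₁ d₂ : D} (u : d₁ ⟶ d₂) : C ⊕ Arr2.{u} ⥤ D where
  obj := glueObj f u
  map := glueMap f u
  map_id X := by
    rcases X with c | (_ | _) <;> simp [glueMap, glueObj, CategoryStruct.id]
  map_comp {X Y Z} g h := by
    rcases X with c | (_ | _) <;> rcases Y with c' | (_ | _) <;> rcases Z with c'' | (_ | _) <;>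
      first
        | exact g.elim
        | exact h.elim
        | exact (Arr2.no_one_zero g.down).elim
        | exact (Arr2.no_one_zero h.down).elim
        | (simp only [glueMap, glueObj, CategoryStruct.comp]; try simp [glueObj]; try rfl)

end Glue

section Glue

theorem sum_inr_hom_subsingleton {C : Type u} [Category.{v} C] (a b : Arr2.{u}) :
    Subsingleton ((Sum.inr a : C ⊕ Arr2.{u}) ⟶ Sum.inr b) :=
  ⟨fun f g => ULift.ext _ _ (Subsingleton.elim (show a ⟶ b from f.down) (show a ⟶ b from g.down))⟩

end Glue

theorem eqToHom_sandwich {D : Type u} [Category.{v} D] {a b c d e f : D} (p1 : a = b) (p2 : b = c)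
    (g : c ⟶ d) (p3 : d = e) (p4 : e = f) (q1 : a = c) (q2 : d = f) :
    eqToHom p1 ≫ (eqToHom p2 ≫ g ≫ eqToHom p3) ≫ eqToHom p4 = eqToHom q1 ≫ g ≫ eqToHom q2 := by
  subst_vars; simp

theorem comp_obj_of_eq {A B D : Type*} [Category A] [Category B] [Category D] (F : A ⥤ B)
    (G : B ⥤ D) {x : A} {y : B} (h : F.obj x = y) : (F ⋙ G).obj x = G.obj y := by
  subst h; rfl

/-- (Garner) The category `Cat` of small categories has trivial covariant isotropy: for every
small category `C`, every natural automorphism of the coslice projection functor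
`Under.forget C : Under C ⥤ Cat` is the identity. -/
theorem isotropy_of_cat_trivial (C : Cat) (α : Aut (Under.forget C)) :
    α.hom = 𝟙 (Under.forget C) := by
  classical
  let Q : Cat := Cat.of (↑C ⊕ Arr2)
  let ι : C ⟶ Q := (Sum.inl_ ↑C Arr2).toCatHom
  let Qo : Under C := Under.mk ι
  let A : Q ⟶ Q := α.hom.app Qo
  let B : Q ⟶ Q := α.inv.app Qo
  -- A and B are mutually inverse on objects
  have hBA : ∀ x : ↑Q, B.toFunctor.obj (A.toFunctor.obj x) = x := by
    intro x
    have h : A ≫ B = 𝟙 Q := Iso.hom_inv_id_app α Qo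
    exact Functor.congr_obj (congrArg Cat.Hom.toFunctor h) x
  -- A maps inl to inl
  have hw0 : (Under.mk (𝟙 C)).hom ≫ ι = Qo.hom := by simp; rfl
  let m0 : Under.mk (𝟙 C) ⟶ Qo := Under.homMk ι hw0
  have hinlB : ∀ c : ↑C, ∃ c', B.toFunctor.obj (Sum.inl c) = Sum.inl c' := by
    intro c
    have nat := α.inv.naturality m0
    have h : ι.toFunctor ⋙ B.toFunctor = (α.inv.app (Under.mk (𝟙 C))).toFunctor ⋙ ι.toFunctor := by
      exact congrArg Cat.Hom.toFunctor nat
    exact ⟨_, Functor.congr_obj h c⟩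
  -- A fixes the two extra objects
  have hrA : ∀ a : Arr2, ∃ b, A.toFunctor.obj (Sum.inr a) = Sum.inr b := by
    intro a
    rcases hx : A.toFunctor.obj (Sum.inr a) with c | b
    · exfalso
      obtain ⟨c', hc'⟩ := hinlB c
      have h := hBA (Sum.inr a)
      rw [hx, hc'] at h
      simp at h
    · exact ⟨b, rfl⟩
  let ar : (Sum.inr Arr2.zero : ↑Q) ⟶ Sum.inr Arr2.one := ULift.up Arr2.arr
  obtain ⟨b0, hb0⟩ := hrA Arr2.zero
  obtain ⟨b1, hb1⟩ := hrA Arr2.one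
  have hne : b0 ≠ b1 := by
    intro h
    subst h
    have h2 : (Sum.inr Arr2.zero : ↑Q) = Sum.inr Arr2.one := by
      rw [← hBA (Sum.inr Arr2.zero), ← hBA (Sum.inr Arr2.one), hb0, hb1]
    simp at h2
  have hmid : (Sum.inr b0 : ↑Q) ⟶ Sum.inr b1 := eqToHom hb0.symm ≫ A.toFunctor.map ar ≫ eqToHom hb1
  have hzo : A.toFunctor.obj (Sum.inr Arr2.zero) = Sum.inr Arr2.zero ∧
      A.toFunctor.obj (Sum.inr Arr2.one) = Sum.inr Arr2.one := by
    cases b0 <;> cases b1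
    · exact (hne rfl).elim
    · exact ⟨hb0, hb1⟩
    · exact (Arr2.no_one_zero (show (Arr2.one : Arr2) ⟶ Arr2.zero from hmid.down)).elim
    · exact (hne rfl).elim
  have hz : A.toFunctor.obj (Sum.inr Arr2.zero) = Sum.inr Arr2.zero := hzo.1
  have ho : A.toFunctor.obj (Sum.inr Arr2.one) = Sum.inr Arr2.one := hzo.2
  -- the extra arrow
  have harr : A.toFunctor.map (show (Sum.inr Arr2.zero : ↑Q) ⟶ Sum.inr Arr2.one from ULift.up Arr2.arr)
      = eqToHom hz ≫ (show (Sum.inr Arr2.zero : ↑Q) ⟶ Sum.inr Arr2.one from ULift.up Arr2.arr)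
        ≫ eqToHom ho.symm := by
    have hs : Subsingleton (A.toFunctor.obj (Sum.inr Arr2.zero) ⟶ A.toFunctor.obj (Sum.inr Arr2.one)) := by
      rw [hz, ho]; exact sum_inr_hom_subsingleton _ _
    exact hs.elim _ _
  -- naturality against glue functors
  have key : ∀ (X : Under C) {d₁ d₂ : ↑X.right} (u : d₁ ⟶ d₂),
      (glue X.hom.toFunctor u) ⋙ (α.hom.app X).toFunctor
        = A.toFunctor ⋙ glue X.hom.toFunctor u := by
    intro X d₁ d₂ u
    have w : Qo.hom ≫ ((glue X.hom.toFunctor u).toCatHom : Q ⟶ X.right) = X.hom := rfl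
    have nat := α.hom.naturality (Under.homMk
      (U := Qo) (V := X) ((glue X.hom.toFunctor u).toCatHom : Q ⟶ X.right) w)
    exact congrArg Cat.Hom.toFunctor nat
  -- objectwise identity
  have hobj : ∀ (X : Under C) (d : ↑X.right), (α.hom.app X).toFunctor.obj d = d := by
    intro X d
    have h := Functor.congr_obj (key X (𝟙 d)) (Sum.inr Arr2.zero)
    have h2 : (A.toFunctor ⋙ glue X.hom.toFunctor (𝟙 d)).obj (Sum.inr Arr2.zero) = d := by
      exact (comp_obj_of_eq _ _ hz).trans rfl
    exact h.trans h2
  -- morphismwise identity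
  have hmap : ∀ (X : Under C) {d₁ d₂ : ↑X.right} (u : d₁ ⟶ d₂),
      (α.hom.app X).toFunctor.map u
        = eqToHom (hobj X d₁) ≫ u ≫ eqToHom (hobj X d₂).symm := by
    intro X d₁ d₂ u
    have h := Functor.congr_hom (key X u) ar
    change (α.hom.app X).toFunctor.map ((glue X.hom.toFunctor u).map ar) = eqToHom _ ≫
      (glue X.hom.toFunctor u).map (A.toFunctor.map
        (show (Sum.inr Arr2.zero : ↑Q) ⟶ Sum.inr Arr2.one from ULift.up Arr2.arr)) ≫ eqToHom _ at h
    rw [harr] at h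
    simp only [Functor.map_comp, eqToHom_map, eqToHom_trans] at h
    show (α.hom.app X).toFunctor.map ((glue X.hom.toFunctor u).map ar)
      = eqToHom (hobj X d₁) ≫ u ≫ eqToHom (hobj X d₂).symm
    rw [h]
    simp [eqToHom_trans]
    erw [Functor.map_comp, Functor.map_comp, eqToHom_map (glue X.hom.toFunctor u) hz,
      eqToHom_map (glue X.hom.toFunctor u) ho.symm]
    exact eqToHom_sandwich (D := ↑X.right) _ _ _ _ _ _ _
  apply NatTrans.ext
  funext X
  show α.hom.app X = 𝟙 X.right
  apply Cat.Hom.ext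
  exact CategoryTheory.Functor.ext (hobj X) (fun d₁ d₂ u => by exact hmap X u)
end

section
/- (Garner) The category Grpd of small groupoids has trivial covariant isotropy: for every small groupoid G (object of Grpd), every natural automorphism of the coslice projection functor Under.forget G : Under G ⥤ Grpd is equal to the identity natural transformation. -/
open CategoryTheory

namespace GrpdIso

universe v u

open Sum

instance sumGroupoid (C D : Type u) [Groupoid.{v} C] [Groupoid.{v} D] :
    Groupoid.{v} (C ⊕ D) where
  inv {X Y} f :=
    match X, Y, f with
    | inl _, inl _, f => ULift.up (Groupoid.inv f.down)
    | inr _, inr _, f => ULift.up (Groupoid.inv f.down)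
  inv_comp {X Y} f :=
    match X, Y, f with
    | inl _, inl _, f => congrArg ULift.up (Groupoid.inv_comp f.down)
    | inr _, inr _, f => congrArg ULift.up (Groupoid.inv_comp f.down)
  comp_inv {X Y} f :=
    match X, Y, f with
    | inl _, inl _, f => congrArg ULift.up (Groupoid.comp_inv f.down)
    | inr _, inr _, f => congrArg ULift.up (Groupoid.comp_inv f.down)

/-- Indiscrete groupoid on a type. -/
def IndG (A : Type u) : Type u := A

instance indGroupoid (A : Type u) : Groupoid.{v} (IndG A) where
  Hom _ _ := PUnit
  id _ := ⟨⟩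
  comp _ _ := ⟨⟩
  inv _ := ⟨⟩

/-- Functor out of an indiscrete groupoid, given objects and isos from a base point. -/
def indTo {A : Type u} {E : Type u} [Groupoid.{v} E] (o : A → E) (x : E)
    (φ : ∀ a, x ⟶ o a) : IndG A ⥤ E where
  obj := o
  map {a b} _ := Groupoid.inv (φ a) ≫ φ b
  map_id a := by simp [Groupoid.inv_eq_inv]
  map_comp {a b c} f g := by simp [Groupoid.inv_eq_inv]

theorem obj_fix {G : Grpd.{v,u}} (α : Aut (Under.forget G)) (u : Under G)
    (x : ↥(u.right)) : (α.hom.app u).obj x = x := by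
  let H : Grpd.{v,u} := u.right
  let Hs : Grpd.{v,u} := Grpd.of (↥H ⊕ IndG PUnit.{u+1})
  let incl : H ⟶ Hs := Sum.inl_ ↥H (IndG PUnit.{u+1})
  let us : Under G := Under.mk (u.hom ≫ incl)
  let j : u ⟶ us := Under.homMk incl rfl
  have hj : (Under.forget G).map j = incl := rfl
  -- naturality of α.hom and α.inv at j
  have h1 := α.hom.naturality j
  have h1inv := α.inv.naturality j
  rw [hj] at h1 h1inv
  -- the retraction collapsing the extra point to x
  let ex : Hs ⟶ H := Functor.sum' (𝟭 ↥H) (indTo (fun _ => x) x (fun _ => 𝟙 x))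
  have hcol : incl ≫ ex = 𝟙 H := rfl
  let k : us ⟶ u := Under.homMk ex (by
    show (u.hom ≫ incl) ≫ ex = u.hom
    rw [Category.assoc, hcol]
    exact Category.comp_id u.hom)
  have hk : (Under.forget G).map k = ex := rfl
  have h2 := α.hom.naturality k
  rw [hk] at h2
  -- the generic point is fixed
  have hz : (α.hom.app us).obj (inr PUnit.unit) = inr PUnit.unit := by
    have hid := NatTrans.congr_app α.hom_inv_id us
    simp only [NatTrans.comp_app, NatTrans.id_app] at hid
    have hobj := Functor.congr_obj hid (inr PUnit.unit)
    change (α.inv.app us).obj ((α.hom.app us).obj (inr PUnit.unit)) = inr PUnit.unit at hobj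
    cases hq : (α.hom.app us).obj (inr PUnit.unit) with
    | inl h =>
      exfalso
      have h4 := Functor.congr_obj h1inv h
      change (α.inv.app us).obj (inl h) = inl ((α.inv.app u).obj h) at h4
      rw [hq] at hobj
      rw [h4] at hobj
      simp at hobj
    | inr p => rfl
  have h3 := Functor.congr_obj h2 (inr PUnit.unit)
  change (α.hom.app u).obj (ex.obj (inr PUnit.unit)) = ex.obj ((α.hom.app us).obj (inr PUnit.unit)) at h3
  rw [hz] at h3
  exact h3

theorem map_fix {G : Grpd.{v,u}} (α : Aut (Under.forget G)) (u : Under G)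
    {x y : ↥(u.right)} (f : x ⟶ y) :
    (α.hom.app u).map f = eqToHom (obj_fix α u x) ≫ f ≫ eqToHom (obj_fix α u y).symm := by
  let H : Grpd.{v,u} := u.right
  let Hi : Grpd.{v,u} := Grpd.of (↥H ⊕ IndG (ULift.{u} Bool))
  let incl : H ⟶ Hi := Sum.inl_ ↥H (IndG (ULift.{u} Bool))
  let ui : Under G := Under.mk (u.hom ≫ incl)
  let ι : (inr (ULift.up false) : ↥Hi) ⟶ inr (ULift.up true) := ⟨⟨⟩⟩
  let o : ULift.{u} Bool → ↥H := fun b => bif b.down then y else x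
  let φ : ∀ b, x ⟶ o b := fun b => match b with
    | ⟨false⟩ => 𝟙 x
    | ⟨true⟩ => f
  let ef : Hi ⟶ H := Functor.sum' (𝟭 ↥H) (indTo o x φ)
  have hcol : incl ≫ ef = 𝟙 H := rfl
  let k : ui ⟶ u := Under.homMk ef (by
    show (u.hom ≫ incl) ≫ ef = u.hom
    rw [Category.assoc, hcol]
    exact Category.comp_id u.hom)
  have hk : (Under.forget G).map k = ef := rfl
  have h2 := α.hom.naturality k
  rw [hk] at h2
  have hmap := Functor.congr_hom h2 ι
  change (α.hom.app u).map (ef.map ι) = eqToHom _ ≫ ef.map ((α.hom.app ui).map ι) ≫ eqToHom _ at hmap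
  have hef : ef.map ι = f := by
    show Groupoid.inv (𝟙 x) ≫ f = f
    simp [Groupoid.inv_eq_inv]
  have p0 : (α.hom.app ui).obj (inr (ULift.up false)) = inr (ULift.up false) :=
    obj_fix α ui _
  have p1 : (α.hom.app ui).obj (inr (ULift.up true)) = inr (ULift.up true) :=
    obj_fix α ui _
  have hsub : (α.hom.app ui).map ι = eqToHom p0 ≫ ι ≫ eqToHom p1.symm := by
    have : Subsingleton ((α.hom.app ui).obj (inr (ULift.up false)) ⟶
        (α.hom.app ui).obj (inr (ULift.up true))) := by
      rw [p0, p1]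
      exact ⟨fun a b => ULift.ext _ _ rfl⟩
    exact Subsingleton.elim _ _
  rw [hsub] at hmap
  have e := ef.map_comp (eqToHom p0) (ι ≫ eqToHom p1.symm)
  have e2 := ef.map_comp ι (eqToHom p1.symm)
  erw [e] at hmap
  erw [e2] at hmap
  erw [eqToHom_map ef p0, eqToHom_map ef p1.symm] at hmap
  rw [hef] at hmap
  refine hmap.trans ?_
  erw [Category.assoc, Category.assoc, eqToHom_trans_assoc, eqToHom_trans]
  rfl

theorem main (G : Grpd.{v,u}) (α : Aut (Under.forget G)) :
    α.hom = 𝟙 (Under.forget G) := by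
  apply NatTrans.ext
  funext u
  show (α.hom.app u : ↥u.right ⥤ ↥u.right) = 𝟭 ↥u.right
  exact CategoryTheory.Functor.ext (h_obj := obj_fix α u)
    (h_map := fun x y f => by exact map_fix α u f)

end GrpdIso


/-- (Garner) The category `Grpd` of small groupoids has trivial covariant isotropy: for every
small groupoid `G`, every natural automorphism of the coslice projection functor
`Under.forget G : Under G ⥤ Grpd` is the identity. -/
theorem isotropy_of_grpd_trivial (G : Grpd) (α : Aut (Under.forget G)) :
    α.hom = 𝟙 (Under.forget G) := by
  exact GrpdIso.main G α
end

section
/- (Main theorem) For every monoid object C in Cat (i.e., every small strict monoidal category), the covariant isotropy group of C in the category Mon_ Cat of monoid objects in Cat is isomorphic to the Picard group of C: there is a group isomorphism between Aut(Under.forget C), the group of natural automorphisms of the coslice projection functor Under.forget C : Under C ⥤ Mon_ Cat, and the group (Ob C)ˣ of units of the object monoid of C. -/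
open CategoryTheory MonoidalCategory

universe v u

/-- The object monoid of a monoid object in `Cat` (i.e. of a small strict monoidal category):
its carrier is the set of objects of the underlying category `C.X`, multiplication is given by
the tensor product (the multiplication morphism `C.mul`) and the unit is the tensor unit object
(picked out by `C.one`). -/
def Ob (C : Mon Cat.{v, u}) : Type u := C.X

instance obMonoid (C : Mon Cat.{v, u}) : Monoid (Ob C) where
  mul a b := C.mon.mul.toFunctor.obj (a, b)
  one := C.mon.one.toFunctor.obj ⟨⟨⟨⟩⟩⟩
  one_mul a := Functor.congr_obj (congrArg Cat.Hom.toFunctor (MonObj.one_mul C.X)) (⟨⟨⟨⟩⟩⟩, a)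
  mul_one a := Functor.congr_obj (congrArg Cat.Hom.toFunctor (MonObj.mul_one C.X)) (a, ⟨⟨⟨⟩⟩⟩)
  mul_assoc a b c := (Functor.congr_obj (congrArg Cat.Hom.toFunctor (MonObj.mul_assoc C.X)) ((a, b), c)).trans rfl




namespace IsotropyAux

/-- Heterogeneous equality of morphisms in a category, remembering that the endpoints agree. -/
inductive CEq {A : Type*} [Category A] : ∀ {a b a' b' : A}, (a ⟶ b) → (a' ⟶ b') → Prop
  | refl {a b : A} (f : a ⟶ b) : CEq f f

namespace CEq

variable {A : Type*} [Category A] {B : Type*} [Category B]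

theorem symm {a b a' b' : A} {f : a ⟶ b} {g : a' ⟶ b'} (h : CEq f g) : CEq g f := by
  cases h; exact .refl _

theorem trans {a b a' b' a'' b'' : A} {f : a ⟶ b} {g : a' ⟶ b'} {k : a'' ⟶ b''}
    (h : CEq f g) (h' : CEq g k) : CEq f k := by
  cases h; exact h'

theorem src {a b a' b' : A} {f : a ⟶ b} {g : a' ⟶ b'} (h : CEq f g) : a = a' := by
  cases h; rfl

theorem tgt {a b a' b' : A} {f : a ⟶ b} {g : a' ⟶ b'} (h : CEq f g) : b = b' := by
  cases h; rfl

theorem of_eq {a b : A} {f g : a ⟶ b} (h : f = g) : CEq f g := h ▸ .refl _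

theorem of_conj {a b a' b' : A} {f : a ⟶ b} {g : a' ⟶ b'} (h₁ : a = a') (h₂ : b = b')
    (hf : f = eqToHom h₁ ≫ g ≫ eqToHom h₂.symm) : CEq f g := by
  subst h₁; subst h₂; simpa using of_eq hf

theorem conj_eq {a b a' b' : A} {f : a ⟶ b} {g : a' ⟶ b'} (h : CEq f g)
    (h₁ : a = a') (h₂ : b = b') : f = eqToHom h₁ ≫ g ≫ eqToHom h₂.symm := by
  cases h; simp

theorem eq {a b : A} {f g : a ⟶ b} (h : CEq f g) : f = g := by
  simpa using h.conj_eq rfl rfl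

theorem comp {a b c a' b' c' : A} {f : a ⟶ b} {g : b ⟶ c} {f' : a' ⟶ b'} {g' : b' ⟶ c'}
    (h : CEq f f') (h' : CEq g g') : CEq (f ≫ g) (f' ≫ g') := by
  cases h; cases h'; exact .refl _

theorem map {a b a' b' : A} {f : a ⟶ b} {g : a' ⟶ b'} (F : A ⥤ B) (h : CEq f g) :
    CEq (F.map f) (F.map g) := by
  cases h; exact .refl _

theorem eqToHom_id {a b : A} (h : a = b) : CEq (eqToHom h) (𝟙 a) := by
  subst h; exact .refl _

theorem id_congr {a b : A} (h : a = b) : CEq (𝟙 a) (𝟙 b) := by subst h; exact .refl _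

end CEq

/-- `Functor.ext` via `CEq`. -/
theorem functor_ext {A B : Type*} [Category A] [Category B] {F G : A ⥤ B}
    (hobj : ∀ a, F.obj a = G.obj a) (hmap : ∀ {a b : A} (f : a ⟶ b), CEq (F.map f) (G.map f)) :
    F = G :=
  CategoryTheory.Functor.ext hobj (fun a b f => by
    rw [(hmap f).conj_eq (hobj a) (hobj b)])


/-- The underlying functor of a morphism of monoid objects in `Cat`. -/
abbrev homF {M N : Mon Cat.{v, u}} (f : M ⟶ N) : M.X ⥤ N.X := f.hom.toFunctor

theorem monHom_ext {M N : Mon Cat.{v, u}} {f g : M ⟶ N}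
    (h : f.hom.toFunctor = g.hom.toFunctor) : f = g :=
  Mon.Hom.ext (Cat.Hom.ext h)
section MonCat

variable (M : Mon Cat.{v, u})

/-- Multiplication of objects. -/
def mO (a b : M.X) : M.X := M.mon.mul.toFunctor.obj (a, b)

/-- The unit object. -/
def eO : M.X := M.mon.one.toFunctor.obj ⟨⟨⟨⟩⟩⟩

variable {M}

/-- Multiplication of morphisms. -/
def mH {a b c d : M.X} (f : a ⟶ b) (g : c ⟶ d) : mO M a c ⟶ mO M b d := M.mon.mul.toFunctor.map (f, g)

@[simp] theorem mH_id (a b : M.X) : mH (𝟙 a) (𝟙 b) = 𝟙 (mO M a b) := M.mon.mul.toFunctor.map_id (a, b)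

theorem mH_comp {a b c a' b' c' : M.X} (f : a ⟶ b) (g : b ⟶ c) (f' : a' ⟶ b') (g' : b' ⟶ c') :
    mH (f ≫ g) (f' ≫ g') = mH f f' ≫ mH g g' := by
  have := M.mon.mul.toFunctor.map_comp (X := (a, a')) (Y := (b, b')) (Z := (c, c')) (f := (f, f'))
    (g := (g, g'))
  exact this

theorem mO_assoc (a b c : M.X) : mO M (mO M a b) c = mO M a (mO M b c) :=
  (Functor.congr_obj (congrArg Cat.Hom.toFunctor (MonObj.mul_assoc M.X)) ((a, b), c)).trans rfl

theorem one_mO (a : M.X) : mO M (eO M) a = a := Functor.congr_obj (congrArg Cat.Hom.toFunctor (MonObj.one_mul M.X)) (⟨⟨⟨⟩⟩⟩, a)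

theorem mO_one (a : M.X) : mO M a (eO M) = a := Functor.congr_obj (congrArg Cat.Hom.toFunctor (MonObj.mul_one M.X)) (a, ⟨⟨⟨⟩⟩⟩)

theorem mH_assoc {a b c a' b' c' : M.X} (f : a ⟶ a') (g : b ⟶ b') (k : c ⟶ c') :
    CEq (mH (mH f g) k) (mH f (mH g k)) := by
  apply CEq.of_conj (mO_assoc a b c) (mO_assoc a' b' c')
  have := Functor.congr_hom (congrArg Cat.Hom.toFunctor (MonObj.mul_assoc M.X)) (X := ((a, b), c)) (Y := ((a', b'), c')) ((f, g), k)
  exact this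

theorem one_mH {a b : M.X} (f : a ⟶ b) : CEq (mH (𝟙 (eO M)) f) f := by
  apply CEq.of_conj (one_mO a) (one_mO b)
  have := Functor.congr_hom (congrArg Cat.Hom.toFunctor (MonObj.one_mul M.X)) (X := (⟨⟨⟨⟩⟩⟩, a)) (Y := (⟨⟨⟨⟩⟩⟩, b)) (𝟙 _, f)
  rw [mH, show (𝟙 (eO M) : eO M ⟶ eO M) = M.mon.one.toFunctor.map (𝟙 ⟨⟨⟨⟩⟩⟩) from (M.mon.one.toFunctor.map_id _).symm]
  exact this

theorem mH_one {a b : M.X} (f : a ⟶ b) : CEq (mH f (𝟙 (eO M))) f := by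
  apply CEq.of_conj (mO_one a) (mO_one b)
  have := Functor.congr_hom (congrArg Cat.Hom.toFunctor (MonObj.mul_one M.X)) (X := (a, ⟨⟨⟨⟩⟩⟩)) (Y := (b, ⟨⟨⟨⟩⟩⟩)) (f, 𝟙 _)
  rw [mH, show (𝟙 (eO M) : eO M ⟶ eO M) = M.mon.one.toFunctor.map (𝟙 ⟨⟨⟨⟩⟩⟩) from (M.mon.one.toFunctor.map_id _).symm]
  exact this

theorem mH_congr {a b c d a' b' c' d' : M.X} {f : a ⟶ b} {g : c ⟶ d} {f' : a' ⟶ b'}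
    {g' : c' ⟶ d'} (h : CEq f f') (h' : CEq g g') : CEq (mH f g) (mH f' g') := by
  cases h; cases h'; exact .refl _

/-- morphism-level action of a `Mon Cat` morphism on products. -/
theorem hom_mO {N : Mon Cat.{v, u}} (f : M ⟶ N) (a b : M.X) :
    f.hom.toFunctor.obj (mO M a b) = mO N (f.hom.toFunctor.obj a) (f.hom.toFunctor.obj b) :=
  Functor.congr_obj (congrArg Cat.Hom.toFunctor (IsMonHom.mul_hom f.hom)) (a, b)

theorem hom_eO {N : Mon Cat.{v, u}} (f : M ⟶ N) : f.hom.toFunctor.obj (eO M) = eO N :=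
  Functor.congr_obj (congrArg Cat.Hom.toFunctor (IsMonHom.one_hom f.hom)) ⟨⟨⟨⟩⟩⟩

theorem hom_mH {N : Mon Cat.{v, u}} (f : M ⟶ N) {a b c d : M.X} (φ : a ⟶ b) (ψ : c ⟶ d) :
    CEq (f.hom.toFunctor.map (mH φ ψ)) (mH (f.hom.toFunctor.map φ) (f.hom.toFunctor.map ψ)) := by
  apply CEq.of_conj (hom_mO f a c) (hom_mO f b d)
  have := Functor.congr_hom (congrArg Cat.Hom.toFunctor (IsMonHom.mul_hom f.hom)) (X := (a, c)) (Y := (b, d)) (φ, ψ)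
  exact this

end MonCat

end IsotropyAux


namespace IsotropyAux

section Conj

variable {M : Mon Cat.{v, u}}

/-- Cancellation helpers -/
theorem mH_cancel_left {x y : M.X} (hx : mO M x y = eO M) {a b : M.X} (φ : a ⟶ b) :
    CEq (mH (𝟙 x) (mH (𝟙 y) φ)) φ :=
  ((mH_assoc (𝟙 x) (𝟙 y) φ).symm.trans
    (mH_congr (CEq.of_eq (mH_id x y)) (CEq.refl φ))).trans
      ((mH_congr (CEq.id_congr hx) (CEq.refl φ)).trans (one_mH φ))

theorem mH_cancel_right {x y : M.X} (hx : mO M x y = eO M) {a b : M.X} (φ : a ⟶ b) :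
    CEq (mH (mH φ (𝟙 x)) (𝟙 y)) φ :=
  ((mH_assoc φ (𝟙 x) (𝟙 y)).trans
    (mH_congr (CEq.refl φ) (CEq.of_eq (mH_id x y)))).trans
      ((mH_congr (CEq.refl φ) (CEq.id_congr hx)).trans (mH_one φ))

theorem mO_rearrange (p q m r s : M.X) :
    mO M (mO M p q) (mO M m (mO M r s)) = mO M p (mO M (mO M q (mO M m r)) s) := by
  rw [mO_assoc p q, mO_assoc q (mO M m r) s, mO_assoc m r s]

theorem mH_rearrange {a b : M.X} (p q r s : M.X) (φ : a ⟶ b) :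
    CEq (mH (mH (𝟙 p) (𝟙 q)) (mH φ (mH (𝟙 r) (𝟙 s))))
      (mH (𝟙 p) (mH (mH (𝟙 q) (mH φ (𝟙 r))) (𝟙 s))) := by
  refine (mH_assoc _ _ _).trans (mH_congr (CEq.refl (𝟙 p)) ?_)
  refine CEq.trans ?_ (mH_assoc (𝟙 q) (mH φ (𝟙 r)) (𝟙 s)).symm
  exact mH_congr (CEq.refl (𝟙 q)) (mH_assoc φ (𝟙 r) (𝟙 s)).symm

variable (M)

/-- The conjugation functor `m ↦ w ⊗ (m ⊗ w')`. -/
def conjF (w w' : M.X) : M.X ⥤ M.X where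
  obj m := mO M w (mO M m w')
  map φ := mH (𝟙 w) (mH φ (𝟙 w'))
  map_id m := by
    show mH (𝟙 w) (mH (𝟙 m) (𝟙 w')) = 𝟙 (mO M w (mO M m w'))
    rw [mH_id, mH_id]
  map_comp f g := by
    show mH (𝟙 w) (mH (f ≫ g) (𝟙 w')) = mH (𝟙 w) (mH f (𝟙 w')) ≫ mH (𝟙 w) (mH g (𝟙 w'))
    rw [← mH_comp, ← mH_comp]; simp

@[simp] theorem conjF_obj (w w' m : M.X) : (conjF M w w').obj m = mO M w (mO M m w') := rfl
@[simp] theorem conjF_map (w w' : M.X) {a b : M.X} (φ : a ⟶ b) :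
    (conjF M w w').map φ = mH (𝟙 w) (mH φ (𝟙 w')) := rfl

theorem unit_ext {D : Cat.{v, u}} (F G : (𝟙_ Cat.{v, u} : Cat) ⟶ D)
    (h : F.toFunctor.obj ⟨⟨⟨⟩⟩⟩ = G.toFunctor.obj ⟨⟨⟨⟩⟩⟩) : F = G := by
  apply Cat.Hom.ext
  apply functor_ext (fun x => h)
  intro x y f
  obtain ⟨⟨⟨⟨⟩⟩⟩⟩ := f
  exact (CEq.of_eq (F.toFunctor.map_id _)).trans ((CEq.id_congr h).trans (CEq.of_eq (G.toFunctor.map_id _)).symm)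

/-- Conjugation as a morphism of monoid objects. -/
def conjM (w w' : M.X) (h1 : mO M w w' = eO M) (h2 : mO M w' w = eO M) : M ⟶ M where
  hom := (conjF M w w').toCatHom
  isMonHom_hom := {
    one_hom := by
      apply unit_ext
      show mO M w (mO M (eO M) w') = eO M
      rw [one_mO, h1]
    mul_hom := by
      apply Cat.Hom.ext
      apply functor_ext
      · rintro ⟨a, b⟩
        show mO M w (mO M (mO M a b) w') =
          mO M (mO M w (mO M a w')) (mO M w (mO M b w'))
        rw [mO_assoc w (mO M a w'), mO_assoc a w' (mO M w (mO M b w')),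
          ← mO_assoc w' w (mO M b w'), h2, one_mO, ← mO_assoc a b w']
      · rintro ⟨a, b⟩ ⟨a', b'⟩ ⟨φ, ψ⟩
        show CEq (mH (𝟙 w) (mH (mH φ ψ) (𝟙 w')))
          (mH (mH (𝟙 w) (mH φ (𝟙 w'))) (mH (𝟙 w) (mH ψ (𝟙 w'))))
        refine CEq.trans ?_ (mH_assoc _ _ _).symm
        refine mH_congr (CEq.refl (𝟙 w)) ?_
        exact (mH_assoc φ ψ (𝟙 w')).trans
          ((mH_congr (CEq.refl φ) (mH_cancel_left h2 (mH ψ (𝟙 w'))).symm).trans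
            (mH_assoc φ (𝟙 w') _).symm) }

@[simp] theorem conjM_hom (w w' : M.X) (h1 h2) : (conjM M w w' h1 h2).hom.toFunctor = conjF M w w' := rfl

theorem conjM_comp_self (w w' : M.X) (h1 : mO M w w' = eO M) (h2 : mO M w' w = eO M) :
    conjM M w w' h1 h2 ≫ conjM M w' w h2 h1 = 𝟙 M := by
  apply monHom_ext
  show conjF M w w' ⋙ conjF M w' w = 𝟭 M.X
  apply functor_ext
  · intro m
    show mO M w' (mO M (mO M w (mO M m w')) w) = m
    rw [mO_assoc w (mO M m w') w, mO_assoc m w' w, h2, mO_one, ← mO_assoc w' w m, h2, one_mO]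
  · intro a b φ
    show CEq (mH (𝟙 w') (mH (mH (𝟙 w) (mH φ (𝟙 w'))) (𝟙 w))) φ
    refine CEq.trans (mH_congr (CEq.refl (𝟙 w'))
      ((mH_assoc _ _ _).trans (mH_congr (CEq.refl (𝟙 w))
        ((mH_assoc _ _ _).trans (mH_congr (CEq.refl φ)
          ((CEq.of_eq (mH_id w' w)).trans (CEq.id_congr h2))))))) ?_
    exact CEq.trans (mH_congr (CEq.refl (𝟙 w'))
      (mH_congr (CEq.refl (𝟙 w)) (mH_one φ))) (mH_cancel_left h2 φ)

/-- Conjugation as an isomorphism of monoid objects. -/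
def conjIso (w w' : M.X) (h1 : mO M w w' = eO M) (h2 : mO M w' w = eO M) : M ≅ M where
  hom := conjM M w w' h1 h2
  inv := conjM M w' w h2 h1
  hom_inv_id := conjM_comp_self M w w' h1 h2
  inv_hom_id := conjM_comp_self M w' w h2 h1

end Conj

section Phi

variable {C : Mon Cat.{v, u}}

theorem under_w_obj {U V : Under C} (k : U ⟶ V) (a : C.X) :
    V.hom.hom.toFunctor.obj a = k.right.hom.toFunctor.obj (U.hom.hom.toFunctor.obj a) :=
  (Functor.congr_obj (congrArg homF (Under.w k)) a).symm

theorem unit_val_inv (u : (Ob C)ˣ) : mO C (u.val : Ob C) (u.inv : Ob C) = eO C := u.val_inv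
theorem unit_inv_val (u : (Ob C)ˣ) : mO C (u.inv : Ob C) (u.val : Ob C) = eO C := u.inv_val

/-- Conjugation by (the image of) an invertible object, as an automorphism of the
forgetful functor `Under C ⥤ Mon Cat`. -/
def Phi (u : (Ob C)ˣ) : Aut (Under.forget C) := by
  refine NatIso.ofComponents (fun U =>
    conjIso U.right (U.hom.hom.toFunctor.obj u.val) (U.hom.hom.toFunctor.obj u.inv) ?_ ?_) ?_
  · exact (hom_mO U.hom u.val u.inv).symm.trans
      ((congrArg U.hom.hom.toFunctor.obj (unit_val_inv u)).trans (hom_eO U.hom))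
  · exact (hom_mO U.hom u.inv u.val).symm.trans
      ((congrArg U.hom.hom.toFunctor.obj (unit_inv_val u)).trans (hom_eO U.hom))
  · intro U V k
    apply monHom_ext
    show k.right.hom.toFunctor ⋙ conjF V.right _ _ = conjF U.right _ _ ⋙ k.right.hom.toFunctor
    apply functor_ext
    · intro m
      show mO V.right _ (mO V.right (k.right.hom.toFunctor.obj m) _) =
        k.right.hom.toFunctor.obj (mO U.right _ (mO U.right m _))
      rw [under_w_obj k u.val, under_w_obj k u.inv, hom_mO k.right, hom_mO k.right]
    · intro a b φ
      show CEq (mH (𝟙 (V.hom.hom.toFunctor.obj u.val))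
          (mH (k.right.hom.toFunctor.map φ) (𝟙 (V.hom.hom.toFunctor.obj u.inv))))
        (k.right.hom.toFunctor.map (mH (𝟙 (U.hom.hom.toFunctor.obj u.val)) (mH φ (𝟙 (U.hom.hom.toFunctor.obj u.inv)))))
      refine CEq.trans ?_ (hom_mH k.right (𝟙 _) (mH φ (𝟙 _))).symm
      refine mH_congr ((CEq.id_congr (under_w_obj k u.val)).trans
        (CEq.of_eq (k.right.hom.toFunctor.map_id _).symm)) ?_
      refine CEq.trans ?_ (hom_mH k.right φ (𝟙 _)).symm
      exact mH_congr (CEq.refl _) ((CEq.id_congr (under_w_obj k u.inv)).trans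
        (CEq.of_eq (k.right.hom.toFunctor.map_id _).symm))

@[simp] theorem Phi_hom_app (u : (Ob C)ˣ) (U : Under C) :
    ((Phi u).hom.app U).hom.toFunctor = conjF U.right (U.hom.hom.toFunctor.obj u.val) (U.hom.hom.toFunctor.obj u.inv) := rfl

theorem Phi_mul (u u' : (Ob C)ˣ) : Phi (u * u') = Phi u * Phi u' := by
  apply Iso.ext
  apply NatTrans.ext
  funext U
  apply monHom_ext
  show conjF U.right (U.hom.hom.toFunctor.obj (u * u').val) (U.hom.hom.toFunctor.obj (u * u').inv) =
    conjF U.right (U.hom.hom.toFunctor.obj u'.val) (U.hom.hom.toFunctor.obj u'.inv) ⋙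
      conjF U.right (U.hom.hom.toFunctor.obj u.val) (U.hom.hom.toFunctor.obj u.inv)
  have h1 : U.hom.hom.toFunctor.obj (u * u').val =
      mO U.right (U.hom.hom.toFunctor.obj u.val) (U.hom.hom.toFunctor.obj u'.val) := hom_mO U.hom u.val u'.val
  have h2 : U.hom.hom.toFunctor.obj (u * u').inv =
      mO U.right (U.hom.hom.toFunctor.obj u'.inv) (U.hom.hom.toFunctor.obj u.inv) := hom_mO U.hom u'.inv u.inv
  apply functor_ext
  · intro m
    show mO U.right (U.hom.hom.toFunctor.obj (u * u').val)
        (mO U.right m (U.hom.hom.toFunctor.obj (u * u').inv)) = _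
    rw [h1, h2]
    exact mO_rearrange _ _ _ _ _
  · intro a b φ
    refine ((mH_congr (CEq.id_congr h1) (mH_congr (CEq.refl φ) (CEq.id_congr h2))).trans
      ((mH_congr (CEq.of_eq (mH_id _ _).symm)
        (mH_congr (CEq.refl φ) (CEq.of_eq (mH_id _ _).symm))).trans (mH_rearrange _ _ _ _ φ)))

end Phi

end IsotropyAux


namespace IsotropyAux

section Word

variable (C : Mon Cat.{v, u}) (S : Type u) [Category.{v} S]

/-- Objects of the free extension: alternating words `a₀ s₁ a₁ s₂ ⋯ sₙ aₙ`. -/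
def WObj : Type u := ↑C.X × List (S × ↑C.X)

/-- Componentwise morphisms between the tails of two words (empty unless the shapes match). -/
def HomL : List (S × ↑C.X) → List (S × ↑C.X) → Type v
  | [], [] => PUnit
  | p :: l, q :: m => ((p.1 ⟶ q.1) × (p.2 ⟶ q.2)) × HomL l m
  | _, _ => PEmpty

def idL : (l : List (S × ↑C.X)) → HomL C S l l
  | [] => ⟨⟩
  | _ :: l => ⟨(𝟙 _, 𝟙 _), idL l⟩

def compL : (l m n : List (S × ↑C.X)) → HomL C S l m → HomL C S m n → HomL C S l n
  | [], [], [], _, _ => ⟨⟩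
  | _ :: _, _ :: _, _ :: _, ⟨(f, g), h⟩, ⟨(f', g'), h'⟩ => ⟨(f ≫ f', g ≫ g'), compL _ _ _ h h'⟩
  | [], _ :: _, _, x, _ => x.elim
  | _ :: _, [], _, x, _ => x.elim
  | [], [], _ :: _, _, y => y.elim
  | _ :: _, _ :: _, [], _, y => y.elim

theorem idL_compL : ∀ (l m : List (S × ↑C.X)) (h : HomL C S l m),
    compL C S l l m (idL C S l) h = h
  | [], [], _ => rfl
  | _ :: l, _ :: m, ⟨(σ, φ), h⟩ => by
    dsimp [compL, idL]
    rw [Category.id_comp, Category.id_comp, idL_compL l m h]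
  | [], _ :: _, x => x.elim
  | _ :: _, [], x => x.elim

theorem compL_idL : ∀ (l m : List (S × ↑C.X)) (h : HomL C S l m),
    compL C S l m m h (idL C S m) = h
  | [], [], _ => rfl
  | _ :: l, _ :: m, ⟨(σ, φ), h⟩ => by
    dsimp [compL, idL]
    rw [Category.comp_id, Category.comp_id, compL_idL l m h]
  | [], _ :: _, x => x.elim
  | _ :: _, [], x => x.elim

theorem compL_assoc : ∀ (l m n k : List (S × ↑C.X)) (h₁ : HomL C S l m) (h₂ : HomL C S m n)
    (h₃ : HomL C S n k), compL C S l n k (compL C S l m n h₁ h₂) h₃ =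
      compL C S l m k h₁ (compL C S m n k h₂ h₃)
  | [], [], [], [], _, _, _ => rfl
  | _ :: l, _ :: m, _ :: n, _ :: k, ⟨(f, g), h₁⟩, ⟨(f', g'), h₂⟩, ⟨(f'', g''), h₃⟩ => by
    dsimp [compL]
    rw [Category.assoc, Category.assoc, compL_assoc l m n k h₁ h₂ h₃]
  | [], _ :: _, _, _, x, _, _ => x.elim
  | _ :: _, [], _, _, x, _, _ => x.elim
  | _, _ :: _, [], _, _, x, _ => x.elim
  | _, [], _ :: _, _, _, x, _ => x.elim
  | _, _, _ :: _, [], _, _, x => x.elim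
  | _, _, [], _ :: _, _, _, x => x.elim

instance WCat : Category.{v} (WObj C S) where
  Hom x y := (x.1 ⟶ y.1) × HomL C S x.2 y.2
  id x := (𝟙 x.1, idL C S x.2)
  comp {x y z} f g := (f.1 ≫ g.1, compL C S x.2 y.2 z.2 f.2 g.2)
  id_comp f := by
    dsimp; rw [Category.id_comp, idL_compL]
  comp_id f := by
    dsimp; rw [Category.comp_id, compL_idL]

  assoc f g h := by
    dsimp; rw [Category.assoc, compL_assoc]

/-- Constructor for word objects. -/
def wp (a : ↑C.X) (l : List (S × ↑C.X)) : WObj C S := (a, l)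

/-- Constructor for word morphisms. -/
def wh {a b : ↑C.X} {l m : List (S × ↑C.X)} (f : a ⟶ b) (h : HomL C S l m) :
    wp C S a l ⟶ wp C S b m := (f, h)

/-- Constructor for tails of morphisms. -/
def hcons {s t : S} {a b : ↑C.X} {l m : List (S × ↑C.X)} (σ : s ⟶ t) (φ : a ⟶ b)
    (h : HomL C S l m) : HomL C S ((s, a) :: l) ((t, b) :: m) := ⟨(σ, φ), h⟩

/-- CEq for tails. -/
inductive CEqL : ∀ {l m l' m' : List (S × ↑C.X)}, HomL C S l m → HomL C S l' m' → Prop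
  | refl {l m : List (S × ↑C.X)} (h : HomL C S l m) : CEqL h h

theorem CEqL.symm {l m l' m' : List (S × ↑C.X)} {h : HomL C S l m} {h' : HomL C S l' m'}
    (e : CEqL C S h h') : CEqL C S h' h := by cases e; exact .refl _

theorem CEqL.trans {l m l' m' l'' m'' : List (S × ↑C.X)} {h : HomL C S l m}
    {h' : HomL C S l' m'} {h'' : HomL C S l'' m''} (e : CEqL C S h h') (e' : CEqL C S h' h'') :
    CEqL C S h h'' := by cases e; exact e'

theorem CEqL.cons {s t s' t' : S} {a b a' b' : ↑C.X} {l m l' m' : List (S × ↑C.X)}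
    {σ : s ⟶ t} {σ' : s' ⟶ t'} {φ : a ⟶ b} {φ' : a' ⟶ b'} {h : HomL C S l m}
    {h' : HomL C S l' m'} (hσ : CEq σ σ') (hφ : CEq φ φ') (hh : CEqL C S h h') :
    CEqL C S (hcons C S σ φ h) (hcons C S σ' φ' h') := by
  cases hσ; cases hφ; cases hh; exact .refl _

/-- Build a `CEq` in the word category from componentwise data. -/
theorem wCEq {a b a' b' : ↑C.X} {l m l' m' : List (S × ↑C.X)} {f : a ⟶ b} {f' : a' ⟶ b'}
    {h : HomL C S l m} {h' : HomL C S l' m'} (e1 : CEq f f') (e2 : CEqL C S h h') :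
    CEq (wh C S f h) (wh C S f' h') := by
  cases e1; cases e2; exact .refl _

theorem wCEq_fst {a b a' b' : ↑C.X} {l m l' m' : List (S × ↑C.X)} {f : a ⟶ b} {f' : a' ⟶ b'}
    {h : HomL C S l m} {h' : HomL C S l' m'}
    (e : CEq (wh C S f h) (wh C S f' h')) : CEq f f' := by
  cases e; exact .refl _

/-- Tensor product of words. -/
def tensL (a : ↑C.X) : List (S × ↑C.X) → WObj C S → WObj C S
  | [], w => (mO C a w.1, w.2)
  | (s, c) :: l, w => (a, (s, (tensL c l w).1) :: (tensL c l w).2)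

def tensW (x y : WObj C S) : WObj C S := tensL C S x.1 x.2 y

/-- Tensor product of morphisms of words. -/
def tensH : ∀ (a a' : ↑C.X) (l l' : List (S × ↑C.X)) (w w' : WObj C S)
    (f : a ⟶ a') (h : HomL C S l l') (k : w ⟶ w'),
    (tensL C S a l w ⟶ tensL C S a' l' w')
  | a, a', [], [], w, w', f, _, k => (mH f k.1, k.2)
  | a, a', (s, c) :: l, (t, c') :: l', w, w', f, ⟨(σ, φ), h⟩, k =>
    (f, ⟨(σ, (tensH c c' l l' w w' φ h k).1), (tensH c c' l l' w w' φ h k).2⟩)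
  | _, _, [], _ :: _, _, _, _, x, _ => x.elim
  | _, _, _ :: _, [], _, _, _, x, _ => x.elim

theorem tensH_id : ∀ (a : ↑C.X) (l : List (S × ↑C.X)) (w : WObj C S),
    tensH C S a a l l w w (𝟙 a) (idL C S l) (𝟙 w) = 𝟙 (tensL C S a l w)
  | a, [], w => by
    dsimp [tensH, idL]
    show (mH (𝟙 a) (𝟙 w.1), idL C S w.2) = _
    rw [mH_id]; rfl
  | a, (s, c) :: l, w => by
    dsimp [tensH, idL]
    rw [tensH_id c l w]; rfl

theorem tensH_comp : ∀ (a a' a'' : ↑C.X) (l l' l'' : List (S × ↑C.X)) (w w' w'' : WObj C S)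
    (f : a ⟶ a') (f' : a' ⟶ a'') (h : HomL C S l l') (h' : HomL C S l' l'')
    (k : w ⟶ w') (k' : w' ⟶ w''),
    tensH C S a a'' l l'' w w'' (f ≫ f') (compL C S l l' l'' h h') (k ≫ k') =
      tensH C S a a' l l' w w' f h k ≫ tensH C S a' a'' l' l'' w' w'' f' h' k'
  | a, a', a'', [], [], [], w, w', w'', f, f', _, _, k, k' => by
    dsimp [tensH, compL]
    show (mH (f ≫ f') (k.1 ≫ k'.1), compL C S _ _ _ k.2 k'.2) = _
    rw [mH_comp]; rfl
  | a, a', a'', (s, c) :: l, (t, c') :: l', (r, c'') :: l'', w, w', w'', f, f',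
      ⟨(σ, φ), h⟩, ⟨(σ', φ'), h'⟩, k, k' => by
    dsimp [tensH, compL]
    rw [tensH_comp c c' c'' l l' l'' w w' w'' φ φ' h h' k k']; rfl
  | _, _, _, [], _ :: _, _, _, _, _, _, _, x, _, _, _ => x.elim
  | _, _, _, _ :: _, [], _, _, _, _, _, _, x, _, _, _ => x.elim
  | _, _, _, _, _ :: _, [], _, _, _, _, _, _, x, _, _ => x.elim
  | _, _, _, _, [], _ :: _, _, _, _, _, _, _, x, _, _ => x.elim

end Word

end IsotropyAux


namespace IsotropyAux

section WordMon

variable (C : Mon Cat.{v, u}) (S : Type u) [Category.{v} S]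

theorem wCEq_snd {a b a' b' : ↑C.X} {l m l' m' : List (S × ↑C.X)} {f : a ⟶ b} {f' : a' ⟶ b'}
    {h : HomL C S l m} {h' : HomL C S l' m'}
    (e : CEq (wh C S f h) (wh C S f' h')) : CEqL C S h h' := by
  cases e; exact .refl _

/-- Tensoring with a product head. -/
theorem tensL_mO : ∀ (a b : ↑C.X) (m : List (S × ↑C.X)) (z : WObj C S),
    tensL C S (mO C a b) m z =
      wp C S (mO C a (tensL C S b m z).1) (tensL C S b m z).2
  | a, b, [], z => by
    show (mO C (mO C a b) z.1, z.2) = (mO C a (mO C b z.1), z.2)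
    rw [mO_assoc]
  | a, b, (s, c) :: m, z => rfl

theorem tensH_mO : ∀ {a a' b b' : ↑C.X} (f : a ⟶ a') (g : b ⟶ b')
    (m m' : List (S × ↑C.X)) (h : HomL C S m m') (z z' : WObj C S) (k : z ⟶ z'),
    CEq (tensH C S (mO C a b) (mO C a' b') m m' z z' (mH f g) h k)
      (wh C S (mH f (tensH C S b b' m m' z z' g h k).1)
        (tensH C S b b' m m' z z' g h k).2)
  | a, a', b, b', f, g, [], [], h, z, z', k => wCEq C S (mH_assoc f g k.1) (.refl _)
  | a, a', b, b', f, g, (s, c) :: m, (t, c') :: m', ⟨(σ, φ), h⟩, z, z', k => .refl _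
  | _, _, _, _, _, _, [], _ :: _, x, _, _, _ => x.elim
  | _, _, _, _, _, _, _ :: _, [], x, _, _, _ => x.elim

theorem tensW_assoc : ∀ (a : ↑C.X) (l : List (S × ↑C.X)) (y z : WObj C S),
    tensW C S (tensL C S a l y) z = tensL C S a l (tensW C S y z)
  | a, [], y, z => tensL_mO C S a y.1 y.2 z
  | a, (s, c) :: l, y, z => by
    show (a, (s, (tensW C S (tensL C S c l y) z).1) :: (tensW C S (tensL C S c l y) z).2) = _
    rw [tensW_assoc c l y z]
    rfl

/-- Tensor of morphisms, uncurried. -/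
def mulH (x x' y y' : WObj C S) (k : x ⟶ x') (j : y ⟶ y') : tensW C S x y ⟶ tensW C S x' y' :=
  tensH C S x.1 x'.1 x.2 x'.2 y y' k.1 k.2 j

theorem tensH_assoc : ∀ (a a' : ↑C.X) (l l' : List (S × ↑C.X)) (y y' z z' : WObj C S)
    (f : a ⟶ a') (h : HomL C S l l') (ky : y ⟶ y') (kz : z ⟶ z'),
    CEq (mulH C S (tensL C S a l y) (tensL C S a' l' y') z z'
        (tensH C S a a' l l' y y' f h ky) kz)
      (tensH C S a a' l l' (tensW C S y z) (tensW C S y' z') f h (mulH C S y y' z z' ky kz))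
  | a, a', [], [], y, y', z, z', f, h, ky, kz =>
    tensH_mO C S f ky.1 y.2 y'.2 ky.2 z z' kz
  | a, a', (s, c) :: l, (t, c') :: l', y, y', z, z', f, ⟨(σ, φ), h⟩, ky, kz => by
    have IH := tensH_assoc c c' l l' y y' z z' φ h ky kz
    exact wCEq C S (CEq.refl f) (CEqL.cons C S (CEq.refl σ) (wCEq_fst C S IH) (wCEq_snd C S IH))
  | _, _, [], _ :: _, _, _, _, _, _, x, _, _ => x.elim
  | _, _, _ :: _, [], _, _, _, _, _, x, _, _ => x.elim

theorem tensL_one : ∀ (a : ↑C.X) (l : List (S × ↑C.X)),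
    tensL C S a l (wp C S (eO C) []) = wp C S a l
  | a, [] => by
    show (mO C a (eO C), ([] : List (S × ↑C.X))) = (a, [])
    rw [mO_one]
  | a, (s, c) :: l => by
    show (a, (s, (tensL C S c l (wp C S (eO C) [])).1) :: (tensL C S c l (wp C S (eO C) [])).2) = _
    rw [tensL_one c l]
    rfl

theorem tensH_one : ∀ (a a' : ↑C.X) (l l' : List (S × ↑C.X)) (f : a ⟶ a') (h : HomL C S l l'),
    CEq (tensH C S a a' l l' (wp C S (eO C) []) (wp C S (eO C) []) f h (𝟙 (wp C S (eO C) [])))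
      (wh C S f h)
  | a, a', [], [], f, h => wCEq C S (mH_one f) (.refl _)
  | a, a', (s, c) :: l, (t, c') :: l', f, ⟨(σ, φ), h⟩ => by
    have IH := tensH_one c c' l l' φ h
    exact wCEq C S (CEq.refl f) (CEqL.cons C S (CEq.refl σ) (wCEq_fst C S IH) (wCEq_snd C S IH))
  | _, _, [], _ :: _, _, x => x.elim
  | _, _, _ :: _, [], _, x => x.elim

/-- The free extension of `C` by a category `S` of generic objects and arrows,
as a monoid object in `Cat`. -/
def EW : Mon Cat.{v, u} where
  X := Cat.of (WObj C S)
  mon := {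
    one := ⟨{
      obj := fun _ => wp C S (eO C) []
      map := fun _ => 𝟙 _
      map_id := fun _ => rfl
      map_comp := fun _ _ => (Category.id_comp _).symm }⟩
    mul := ⟨{
      obj := fun p => tensW C S p.1 p.2
      map := fun {p q} k => mulH C S p.1 q.1 p.2 q.2 k.1 k.2
      map_id := fun p => tensH_id C S p.1.1 p.1.2 p.2
      map_comp := fun {p q r} k k' =>
        tensH_comp C S p.1.1 q.1.1 r.1.1 p.1.2 q.1.2 r.1.2 p.2 q.2 r.2
          k.1.1 k'.1.1 k.1.2 k'.1.2 k.2 k'.2 }⟩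
    one_mul := by
      apply Cat.Hom.ext
      apply functor_ext
      · rintro ⟨pt, w⟩
        show (mO C (eO C) w.1, w.2) = w
        rw [one_mO]
        exact Prod.mk.eta
      · rintro ⟨pt, w⟩ ⟨pt', w'⟩ ⟨upt, k⟩
        exact wCEq C S (one_mH k.1) (.refl k.2)
    mul_one := by
      apply Cat.Hom.ext
      apply functor_ext
      · rintro ⟨w, pt⟩
        exact tensL_one C S w.1 w.2
      · rintro ⟨w, pt⟩ ⟨w', pt'⟩ ⟨k, upt⟩
        exact tensH_one C S w.1 w'.1 w.2 w'.2 k.1 k.2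
    mul_assoc := by
      apply Cat.Hom.ext
      apply functor_ext
      · rintro ⟨⟨w₁, w₂⟩, w₃⟩
        exact tensW_assoc C S w₁.1 w₁.2 w₂ w₃
      · rintro ⟨⟨w₁, w₂⟩, w₃⟩ ⟨⟨w₁', w₂'⟩, w₃'⟩ ⟨⟨k₁, k₂⟩, k₃⟩
        exact tensH_assoc C S w₁.1 w₁'.1 w₁.2 w₁'.2 w₂ w₂' w₃ w₃' k₁.1 k₁.2 k₂ k₃ }

/-- The inclusion of `C` into the free extension. -/
def incl : C ⟶ EW C S where
  hom := ⟨{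
    obj := fun a => wp C S a []
    map := fun φ => wh C S φ PUnit.unit
    map_id := fun _ => rfl
    map_comp := fun _ _ => rfl }⟩
  isMonHom_hom := {
    one_hom := by
      apply unit_ext
      rfl
    mul_hom := rfl }

section Ext

variable {C S}
variable {M : Mon Cat.{v, u}} (f : C ⟶ M) (G : S ⥤ ↑M.X)

/-- Evaluation of word objects. -/
def evO : (a : ↑C.X) → List (S × ↑C.X) → ↑M.X
  | a, [] => f.hom.toFunctor.obj a
  | a, (s, c) :: l => mO M (f.hom.toFunctor.obj a) (mO M (G.obj s) (evO c l))

/-- Evaluation of word morphisms. -/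
def evH : ∀ {a a' : ↑C.X} {l l' : List (S × ↑C.X)}, (a ⟶ a') → HomL C S l l' →
    (evO f G a l ⟶ evO f G a' l')
  | _, _, [], [], φ, _ => f.hom.toFunctor.map φ
  | _, _, (s, c) :: l, (t, c') :: l', φ, ⟨(σ, ψ), h⟩ =>
    mH (f.hom.toFunctor.map φ) (mH (G.map σ) (evH ψ h))
  | _, _, [], _ :: _, _, x => x.elim
  | _, _, _ :: _, [], _, x => x.elim

theorem evH_id : ∀ (a : ↑C.X) (l : List (S × ↑C.X)), evH f G (𝟙 a) (idL C S l) = 𝟙 (evO f G a l)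
  | a, [] => f.hom.toFunctor.map_id a
  | a, (s, c) :: l => by
    show mH (f.hom.toFunctor.map (𝟙 a)) (mH (G.map (𝟙 s)) (evH f G (𝟙 c) (idL C S l))) = _
    rw [evH_id c l, f.hom.toFunctor.map_id, G.map_id, mH_id, mH_id]
    rfl

theorem evH_comp : ∀ {a a' a'' : ↑C.X} {l l' l'' : List (S × ↑C.X)} (φ : a ⟶ a') (φ' : a' ⟶ a'')
    (h : HomL C S l l') (h' : HomL C S l' l''),
    evH f G (φ ≫ φ') (compL C S l l' l'' h h') = evH f G φ h ≫ evH f G φ' h'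
  | _, _, _, [], [], [], φ, φ', _, _ => f.hom.toFunctor.map_comp φ φ'
  | _, _, _, (s, c) :: l, (t, c') :: l', (r, c'') :: l'', φ, φ', ⟨(σ, ψ), h⟩, ⟨(σ', ψ'), h'⟩ => by
    show mH (f.hom.toFunctor.map (φ ≫ φ')) (mH (G.map (σ ≫ σ')) (evH f G (ψ ≫ ψ') (compL C S l l' l'' h h'))) = _
    rw [evH_comp ψ ψ' h h', f.hom.toFunctor.map_comp, G.map_comp, mH_comp, mH_comp]
    rfl
  | _, _, _, [], _ :: _, _, _, _, x, _ => x.elim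
  | _, _, _, _ :: _, [], _, _, _, x, _ => x.elim
  | _, _, _, _, _ :: _, [], _, _, _, x => x.elim
  | _, _, _, _, [], _ :: _, _, _, _, x => x.elim

theorem evO_mO : ∀ (a b : ↑C.X) (m : List (S × ↑C.X)),
    evO f G (mO C a b) m = mO M (f.hom.toFunctor.obj a) (evO f G b m)
  | a, b, [] => hom_mO f a b
  | a, b, (s, c) :: m => by
    show mO M (f.hom.toFunctor.obj (mO C a b)) (mO M (G.obj s) (evO f G c m)) = _
    rw [hom_mO f a b, mO_assoc]
    rfl

theorem evH_mH : ∀ {a a' b b' : ↑C.X} (φ : a ⟶ a') (ψ : b ⟶ b') {m m' : List (S × ↑C.X)}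
    (h : HomL C S m m'),
    CEq (evH f G (mH φ ψ) h) (mH (f.hom.toFunctor.map φ) (evH f G ψ h))
  | a, a', b, b', φ, ψ, [], [], _ => hom_mH f φ ψ
  | a, a', b, b', φ, ψ, (s, c) :: m, (t, c') :: m', ⟨(σ, χ), h⟩ => by
    show CEq (mH (f.hom.toFunctor.map (mH φ ψ)) (mH (G.map σ) (evH f G χ h))) _
    refine CEq.trans (mH_congr (hom_mH f φ ψ) (CEq.refl _)) ?_
    exact mH_assoc _ _ _
  | _, _, _, _, _, _, [], _ :: _, x => x.elim
  | _, _, _, _, _, _, _ :: _, [], x => x.elim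

theorem evO_tens : ∀ (a : ↑C.X) (l : List (S × ↑C.X)) (y : WObj C S),
    evO f G (tensL C S a l y).1 (tensL C S a l y).2 = mO M (evO f G a l) (evO f G y.1 y.2)
  | a, [], y => evO_mO f G a y.1 y.2
  | a, (s, c) :: l, y => by
    show mO M (f.hom.toFunctor.obj a) (mO M (G.obj s)
      (evO f G (tensL C S c l y).1 (tensL C S c l y).2)) = _
    rw [evO_tens c l y,
      show evO f G a ((s, c) :: l) = mO M (f.hom.toFunctor.obj a) (mO M (G.obj s) (evO f G c l)) from rfl,
      mO_assoc, mO_assoc]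

theorem evH_tens : ∀ {a a' : ↑C.X} {l l' : List (S × ↑C.X)} {y y' : WObj C S}
    (φ : a ⟶ a') (h : HomL C S l l') (j : y ⟶ y'),
    CEq (evH f G (tensH C S a a' l l' y y' φ h j).1 (tensH C S a a' l l' y y' φ h j).2)
      (mH (evH f G φ h) (evH f G j.1 j.2))
  | a, a', [], [], y, y', φ, _, j => evH_mH f G φ j.1 j.2
  | a, a', (s, c) :: l, (t, c') :: l', y, y', φ, ⟨(σ, χ), h⟩, j => by
    show CEq (mH (f.hom.toFunctor.map φ) (mH (G.map σ)
      (evH f G (tensH C S c c' l l' y y' χ h j).1 (tensH C S c c' l l' y y' χ h j).2))) _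
    refine CEq.trans (mH_congr (CEq.refl _) (mH_congr (CEq.refl _) (evH_tens χ h j))) ?_
    refine CEq.trans (mH_congr (CEq.refl _) (mH_assoc _ _ _).symm) ?_
    exact (mH_assoc _ _ _).symm
  | _, _, [], _ :: _, _, _, _, x, _ => x.elim
  | _, _, _ :: _, [], _, _, _, x, _ => x.elim

/-- The universal extension of `f : C ⟶ M` along a functor `G : S ⥤ M.X`. -/
def ext : EW C S ⟶ M where
  hom := ⟨{
    obj := fun w => evO f G w.1 w.2
    map := fun {w w'} k => evH f G k.1 k.2
    map_id := fun w => evH_id f G w.1 w.2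
    map_comp := fun k k' => evH_comp f G k.1 k'.1 k.2 k'.2 }⟩
  isMonHom_hom := {
    one_hom := by
      apply unit_ext
      exact hom_eO f
    mul_hom := by
      apply Cat.Hom.ext
      apply functor_ext
      · rintro ⟨w, y⟩
        exact evO_tens f G w.1 w.2 y
      · rintro ⟨w, y⟩ ⟨w', y'⟩ ⟨k, j⟩
        exact evH_tens f G k.1 k.2 j }

theorem incl_ext : incl C S ≫ ext f G = f := by
  apply monHom_ext
  rfl

end Ext

end WordMon

end IsotropyAux


namespace IsotropyAux

section TestCats

/-- The one-object one-morphism category. -/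
inductive One : Type u | star

instance : Category.{v} One where
  Hom _ _ := PUnit
  id _ := ⟨⟩
  comp _ _ := ⟨⟩
  id_comp _ := rfl
  comp_id _ := rfl
  assoc _ _ _ := rfl

/-- The discrete category with two objects. -/
inductive Two : Type u | x | y

def TwoHom : Two → Two → Type v
  | .x, .x => PUnit
  | .y, .y => PUnit
  | _, _ => PEmpty


instance : Category.{v} Two where
  Hom := TwoHom
  id x := match x with | .x => ⟨⟩ | .y => ⟨⟩
  comp {x y z} f g := match x, y, z, f, g with
    | .x, .x, .x, _, _ => ⟨⟩
    | .y, .y, .y, _, _ => ⟨⟩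
    | .x, .y, _, f, _ => f.elim
    | .y, .x, _, f, _ => f.elim
    | .x, .x, .y, _, g => g.elim
    | .y, .y, .x, _, g => g.elim
  id_comp {x y} f := by cases x <;> cases y <;> first | exact f.elim | rfl
  comp_id {x y} f := by cases x <;> cases y <;> first | exact f.elim | rfl
  assoc {w x y z} f g h := by
    cases w <;> cases x <;> cases y <;> cases z <;>
      first | exact f.elim | exact g.elim | exact h.elim | rfl

/-- The walking arrow. -/
inductive WA : Type u | a | b

def WAHom : WA → WA → Type v
  | .a, .a => PUnit
  | .a, .b => PUnit
  | .b, .b => PUnit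
  | .b, .a => PEmpty


instance : Category.{v} WA where
  Hom := WAHom
  id x := match x with | .a => ⟨⟩ | .b => ⟨⟩
  comp {x y z} f g := match x, y, z, f, g with
    | .a, .a, .a, _, _ => ⟨⟩
    | .a, .a, .b, _, _ => ⟨⟩
    | .a, .b, .b, _, _ => ⟨⟩
    | .b, .b, .b, _, _ => ⟨⟩
    | .a, .b, .a, _, g => g.elim
    | .b, .a, _, f, _ => f.elim
    | .b, .b, .a, _, g => g.elim
  id_comp {x y} f := by cases x <;> cases y <;> first | exact f.elim | rfl
  comp_id {x y} f := by cases x <;> cases y <;> first | exact f.elim | rfl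
  assoc {w x y z} f g h := by
    cases w <;> cases x <;> cases y <;> cases z <;>
      first | exact f.elim | exact g.elim | exact h.elim | rfl

/-- The generic arrow in `WA`. -/
def WA.arr : (WA.a : WA.{u}) ⟶ WA.b := PUnit.unit

/-- The functor from the walking arrow picking out a morphism `φ`. -/
def arrowFunctor {D : Type*} [Category D] {m m' : D} (φ : m ⟶ m') : WA.{u} ⥤ D where
  obj x := match x with | .a => m | .b => m'
  map {x y} σ := match x, y, σ with
    | .a, .a, _ => 𝟙 m
    | .a, .b, _ => φ
    | .b, .b, _ => 𝟙 m'
    | .b, .a, σ => σ.elim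
  map_id x := by cases x <;> rfl
  map_comp {x y z} σ τ := by
    cases x <;> cases y <;> cases z <;> first
      | exact σ.elim | exact τ.elim | simp

@[simp] theorem arrowFunctor_map_arr {D : Type*} [Category D] {m m' : D} (φ : m ⟶ m') :
    (arrowFunctor φ).map WA.arr = φ := rfl

end TestCats

section Nat

variable {C : Mon Cat.{v, u}} (t : Under.forget C ⟶ Under.forget C)

theorem nat_eq {U V : Under C} (h : U.right ⟶ V.right) (hw : U.hom ≫ h = V.hom) :
    h.hom.toFunctor ⋙ (t.app V).hom.toFunctor = (t.app U).hom.toFunctor ⋙ h.hom.toFunctor :=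
  congrArg homF (t.naturality (Under.homMk h hw))

theorem nat_obj {U V : Under C} (h : U.right ⟶ V.right) (hw : U.hom ≫ h = V.hom)
    (x : ↑U.right.X) :
    (t.app V).hom.toFunctor.obj (h.hom.toFunctor.obj x) = h.hom.toFunctor.obj ((t.app U).hom.toFunctor.obj x) :=
  Functor.congr_obj (nat_eq t h hw) x

theorem nat_hom {U V : Under C} (h : U.right ⟶ V.right) (hw : U.hom ≫ h = V.hom)
    {x y : ↑U.right.X} (φ : x ⟶ y) :
    CEq ((t.app V).hom.toFunctor.map (h.hom.toFunctor.map φ)) (h.hom.toFunctor.map ((t.app U).hom.toFunctor.map φ)) :=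
  CEq.of_conj (nat_obj t h hw x) (nat_obj t h hw y) (Functor.congr_hom (nat_eq t h hw) φ)

end Nat

section Formulas

variable {C : Mon Cat.{v, u}} {S : Type u} [Category.{v} S]

/-- The generic word with a single letter `s`, evaluated. -/
theorem evO_letter {M : Mon Cat.{v, u}} (f : C ⟶ M) (G : S ⥤ ↑M.X) (s : S) :
    evO f G (eO C) [(s, eO C)] = G.obj s := by
  show mO M (f.hom.toFunctor.obj (eO C)) (mO M (G.obj s) (f.hom.toFunctor.obj (eO C))) = G.obj s
  rw [hom_eO f, mO_one, one_mO]

variable (C)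

/-- The generic object of `EW C One`. -/
def x₁ : WObj C One.{u} := wp C One (eO C) [(One.star, eO C)]

/-- The two generic objects of `EW C Two`. -/
def ox : WObj C Two.{u} := wp C Two (eO C) [(Two.x, eO C)]
def oy : WObj C Two.{u} := wp C Two (eO C) [(Two.y, eO C)]

/-- The two generic objects of `EW C WA` and the generic arrow. -/
def oA : WObj C WA.{u} := wp C WA (eO C) [(WA.a, eO C)]
def oB : WObj C WA.{u} := wp C WA (eO C) [(WA.b, eO C)]

def gArr : oA C ⟶ oB C := wh C WA (𝟙 (eO C)) (hcons C WA WA.arr (𝟙 (eO C)) PUnit.unit)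

variable {C}

theorem ext_const_obj {M : Mon Cat.{v, u}} (f : C ⟶ M) (b : ↑M.X) :
    (ext f ((Functor.const One.{u}).obj b)).hom.toFunctor.obj (x₁ C) = b :=
  evO_letter f _ One.star

/-- Letter-substitution formulas. -/
def lx (l : List (One.{u} × ↑C.X)) : List (Two.{u} × ↑C.X) :=
  l.map (fun p => (Two.x, p.2))

def ly (l : List (One.{u} × ↑C.X)) : List (Two.{u} × ↑C.X) :=
  l.map (fun p => (Two.y, p.2))

def lxy : List (One.{u} × ↑C.X) → List (Two.{u} × ↑C.X)
  | [] => []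
  | (_, c) :: l => (Two.x, eO C) :: (Two.y, c) :: lxy l

theorem P1_eq : ∀ (a : ↑C.X) (l : List (One.{u} × ↑C.X)),
    evO (incl C Two) ((Functor.const One).obj (ox C)) a l = (a, lx l)
  | a, [] => rfl
  | a, (s, c) :: l => by
    show tensW C Two (wp C Two a [])
      (tensW C Two (ox C) (evO (incl C Two) ((Functor.const One).obj (ox C)) c l)) = _
    rw [P1_eq c l]
    show (mO C a (eO C), (Two.x, mO C (eO C) c) :: lx l) = (a, (Two.x, c) :: lx l)
    rw [mO_one, one_mO]

theorem P2_eq : ∀ (a : ↑C.X) (l : List (One.{u} × ↑C.X)),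
    evO (incl C Two) ((Functor.const One).obj (oy C)) a l = (a, ly l)
  | a, [] => rfl
  | a, (s, c) :: l => by
    show tensW C Two (wp C Two a [])
      (tensW C Two (oy C) (evO (incl C Two) ((Functor.const One).obj (oy C)) c l)) = _
    rw [P2_eq c l]
    show (mO C a (eO C), (Two.y, mO C (eO C) c) :: ly l) = (a, (Two.y, c) :: ly l)
    rw [mO_one, one_mO]

theorem P12_eq : ∀ (a : ↑C.X) (l : List (One.{u} × ↑C.X)),
    evO (incl C Two) ((Functor.const One).obj (tensW C Two (ox C) (oy C))) a l = (a, lxy l)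
  | a, [] => rfl
  | a, (s, c) :: l => by
    show tensW C Two (wp C Two a []) (tensW C Two (tensW C Two (ox C) (oy C))
      (evO (incl C Two) ((Functor.const One).obj (tensW C Two (ox C) (oy C))) c l)) = _
    rw [P12_eq c l]
    show (mO C a (eO C), (Two.x, mO C (eO C) (eO C)) :: (Two.y, mO C (eO C) c) :: lxy l) =
      (a, (Two.x, eO C) :: (Two.y, c) :: lxy l)
    rw [mO_one, one_mO, one_mO]

theorem one_tensW (z : WObj C S) : tensW C S (wp C S (eO C) []) z = z := by
  show (mO C (eO C) z.1, z.2) = z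
  rw [one_mO]
  exact Prod.mk.eta

end Formulas

end IsotropyAux


namespace IsotropyAux

section Classify

variable {C : Mon Cat.{v, u}}

theorem hconsCEq_snd {S : Type u} [Category.{v} S] {s t s' t' : S} {a b a' b' : ↑C.X}
    {l m l' m' : List (S × ↑C.X)} {σ : s ⟶ t} {σ' : s' ⟶ t'} {φ : a ⟶ b} {φ' : a' ⟶ b'}
    {h : HomL C S l m} {h' : HomL C S l' m'}
    (e : CEqL C S (hcons C S σ φ h) (hcons C S σ' φ' h')) : CEq φ φ' := by
  cases e; exact .refl _

variable (α : Aut (Under.forget C))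

/-- The word to which the generic object is sent. -/
def ww : WObj C One.{u} := (α.hom.app (Under.mk (incl C One))).hom.toFunctor.obj (x₁ C)

theorem tapp_obj (U : Under C) (m : ↑U.right.X) :
    (α.hom.app U).hom.toFunctor.obj m =
      evO U.hom ((Functor.const One).obj m) (ww α).1 (ww α).2 := by
  have h := nat_obj α.hom (U := Under.mk (incl C One)) (V := U)
    (ext U.hom ((Functor.const One).obj m)) (incl_ext U.hom _) (x₁ C)
  exact (congrArg (α.hom.app U).hom.toFunctor.obj (ext_const_obj U.hom m)).symm.trans h

theorem key_eq : (((ww α).1, lxy (ww α).2) : WObj C Two) =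
    tensW C Two ((ww α).1, lx (ww α).2) ((ww α).1, ly (ww α).2) := by
  have h1 : (α.hom.app (Under.mk (incl C Two))).hom.toFunctor.obj (ox C) = ((ww α).1, lx (ww α).2) := by
    have h := nat_obj α.hom (U := Under.mk (incl C One)) (V := Under.mk (incl C Two))
      (ext (incl C Two) ((Functor.const One).obj (ox C))) (incl_ext _ _) (x₁ C)
    exact ((congrArg (α.hom.app (Under.mk (incl C Two))).hom.toFunctor.obj
      (ext_const_obj (incl C Two) (ox C))).symm.trans h).trans (P1_eq (ww α).1 (ww α).2)
  have h2 : (α.hom.app (Under.mk (incl C Two))).hom.toFunctor.obj (oy C) = ((ww α).1, ly (ww α).2) := by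
    have h := nat_obj α.hom (U := Under.mk (incl C One)) (V := Under.mk (incl C Two))
      (ext (incl C Two) ((Functor.const One).obj (oy C))) (incl_ext _ _) (x₁ C)
    exact ((congrArg (α.hom.app (Under.mk (incl C Two))).hom.toFunctor.obj
      (ext_const_obj (incl C Two) (oy C))).symm.trans h).trans (P2_eq (ww α).1 (ww α).2)
  have h12 : (α.hom.app (Under.mk (incl C Two))).hom.toFunctor.obj (tensW C Two (ox C) (oy C)) =
      ((ww α).1, lxy (ww α).2) := by
    have h := nat_obj α.hom (U := Under.mk (incl C One)) (V := Under.mk (incl C Two))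
      (ext (incl C Two) ((Functor.const One).obj (tensW C Two (ox C) (oy C)))) (incl_ext _ _) (x₁ C)
    exact ((congrArg (α.hom.app (Under.mk (incl C Two))).hom.toFunctor.obj
      (ext_const_obj (incl C Two) (tensW C Two (ox C) (oy C)))).symm.trans h).trans (P12_eq (ww α).1 (ww α).2)
  have hm : (α.hom.app (Under.mk (incl C Two))).hom.toFunctor.obj (tensW C Two (ox C) (oy C)) =
      tensW C Two ((α.hom.app (Under.mk (incl C Two))).hom.toFunctor.obj (ox C))
        ((α.hom.app (Under.mk (incl C Two))).hom.toFunctor.obj (oy C)) :=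
    hom_mO (α.hom.app (Under.mk (incl C Two))) (ox C) (oy C)
  rw [h1, h2] at hm
  exact h12.symm.trans hm

theorem ww_ne_nil : (ww α).2 ≠ [] := by
  intro hnil
  have hid : (α.inv.app (Under.mk (incl C One))).hom.toFunctor.obj (ww α) = x₁ C :=
    Functor.congr_obj (congrArg homF
      (congr_app α.hom_inv_id (Under.mk (incl C One)))) (x₁ C)
  have hww : ww α = ((ww α).1, ([] : List (One × ↑C.X))) := by
    rw [← hnil]
    exact Prod.mk.eta.symm
  rw [hww] at hid
  have hnat := nat_obj α.inv (U := Under.mk (𝟙 C)) (V := Under.mk (incl C One))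
    (incl C One) (Category.id_comp _) ((ww α).1)
  have hfin : ((incl C One).hom.toFunctor.obj ((α.inv.app (Under.mk (𝟙 C))).hom.toFunctor.obj ((ww α).1))) = x₁ C :=
    hnat.symm.trans hid
  have := congrArg Prod.snd hfin
  simp only [x₁] at this
  exact absurd (this : ([] : List (One.{u} × ↑C.X)) = [(One.star, eO C)]) (List.cons_ne_nil _ _).symm

theorem ww_shape : ∃ c : ↑C.X, (ww α).2 = [(One.star, c)] := by
  rcases h : (ww α).2 with _ | ⟨⟨s, c⟩, rest⟩
  · exact absurd h (ww_ne_nil α)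
  · cases s
    rcases rest with _ | ⟨⟨s', c'⟩, rest'⟩
    · exact ⟨c, rfl⟩
    · exfalso
      cases s'
      have key := key_eq α
      rw [h] at key
      have h4 : (some Two.y : Option Two.{u}) = some Two.x :=
        congrArg (fun L : List (Two.{u} × ↑C.X) => (L.tail.head?).map Prod.fst)
          (congrArg Prod.snd key)
      exact Two.noConfusion (Option.some.inj h4)

theorem uv_one (c : ↑C.X) (hl : (ww α).2 = [(One.star, c)]) : mO C (ww α).1 c = eO C := by
  have h := nat_obj α.hom (U := Under.mk (incl C One)) (V := Under.mk (𝟙 C))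
    (ext (𝟙 C) ((Functor.const One).obj (eO C))) (incl_ext _ _) (x₁ C)
  have h2 : (α.hom.app (Under.mk (𝟙 C))).hom.toFunctor.obj (eO C) =
      (ext (𝟙 C) ((Functor.const One).obj (eO C))).hom.toFunctor.obj
        ((α.hom.app (Under.mk (incl C One))).hom.toFunctor.obj (x₁ C)) :=
    (congrArg (α.hom.app (Under.mk (𝟙 C))).hom.toFunctor.obj (ext_const_obj (𝟙 C) (eO C))).symm.trans h
  have h3 : eO C = (ext (𝟙 C) ((Functor.const One).obj (eO C))).hom.toFunctor.obj
      ((α.hom.app (Under.mk (incl C One))).hom.toFunctor.obj (x₁ C)) :=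
    (hom_eO (α.hom.app (Under.mk (𝟙 C)))).symm.trans h2
  have h' : eO C = evO (𝟙 C) ((Functor.const One).obj (eO C)) (ww α).1 [(One.star, c)] := by
    rw [← hl]; exact h3
  have h'' : eO C = mO C (ww α).1 (mO C (eO C) c) := h'
  rw [one_mO] at h''
  exact h''.symm

theorem vu_one (c : ↑C.X) (hl : (ww α).2 = [(One.star, c)]) : mO C c (ww α).1 = eO C := by
  have key := key_eq α
  rw [hl] at key
  have h6 : (some (eO C) : Option ↑C.X) = some (mO C c (ww α).1) :=
    congrArg (fun L : List (Two.{u} × ↑C.X) => (L.head?).map Prod.snd)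
      (congrArg Prod.snd key)
  exact (Option.some.inj h6).symm

theorem tapp_map (c : ↑C.X) (hl : (ww α).2 = [(One.star, c)]) (U : Under C)
    {m m' : ↑U.right.X} (φ : m ⟶ m') :
    CEq ((α.hom.app U).hom.toFunctor.map φ)
      (mH (𝟙 (U.hom.hom.toFunctor.obj ((ww α).1))) (mH φ (𝟙 (U.hom.hom.toFunctor.obj c)))) := by
  have hA : (α.hom.app (Under.mk (incl C WA))).hom.toFunctor.obj (oA C) =
      wp C WA (mO C ((ww α).1) (eO C)) [(WA.a, mO C (eO C) c)] := by
    have h := tapp_obj α (Under.mk (incl C WA)) (oA C)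
    rw [hl] at h
    exact h
  have hB : (α.hom.app (Under.mk (incl C WA))).hom.toFunctor.obj (oB C) =
      wp C WA (mO C ((ww α).1) (eO C)) [(WA.b, mO C (eO C) c)] := by
    have h := tapp_obj α (Under.mk (incl C WA)) (oB C)
    rw [hl] at h
    exact h
  set d := (α.hom.app (Under.mk (incl C WA))).hom.toFunctor.map (gArr C) with hd
  let d' : wp C WA (mO C ((ww α).1) (eO C)) [(WA.a, mO C (eO C) c)] ⟶
      wp C WA (mO C ((ww α).1) (eO C)) [(WA.b, mO C (eO C) c)] :=
    eqToHom hA.symm ≫ d ≫ eqToHom hB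
  have hdd' : CEq d' d := CEq.of_conj hA.symm hB.symm rfl
  -- the map down to `EW C One`
  have hnat1 := nat_hom α.hom (U := Under.mk (incl C WA)) (V := Under.mk (incl C One))
    (ext (incl C One) ((Functor.const WA).obj (x₁ C))) (incl_ext _ _) (gArr C)
  have hpg : (ext (incl C One) ((Functor.const WA).obj (x₁ C))).hom.toFunctor.map (gArr C) =
      𝟙 ((ext (incl C One) ((Functor.const WA).obj (x₁ C))).hom.toFunctor.obj (oA C)) := by
    show mH (M := EW C One) (𝟙 (wp C One (eO C) []))
      (mH (M := EW C One) (𝟙 (x₁ C)) (𝟙 (wp C One (eO C) []))) = _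
    exact (congrArg (fun g => mH (M := EW C One) (𝟙 (wp C One (eO C) [])) g)
      (mH_id (M := EW C One) (x₁ C) (wp C One (eO C) []))).trans (mH_id (M := EW C One) _ _)
  have hpA : (ext (incl C One) ((Functor.const WA).obj (x₁ C))).hom.toFunctor.obj (oA C) = x₁ C :=
    evO_letter (incl C One) _ WA.a
  have hL : CEq ((α.hom.app (Under.mk (incl C One))).hom.toFunctor.map
      ((ext (incl C One) ((Functor.const WA).obj (x₁ C))).hom.toFunctor.map (gArr C))) (𝟙 (ww α)) := by
    rw [hpg]
    exact (CEq.of_eq (CategoryTheory.Functor.map_id _ _)).trans (CEq.id_congr (by rw [hpA]; rfl))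
  have hmain : CEq (𝟙 (ww α))
      ((ext (incl C One) ((Functor.const WA).obj (x₁ C))).hom.toFunctor.map d') :=
    (hL.symm.trans hnat1).trans (CEq.map _ hdd'.symm)
  have hwp : ww α = wp C One ((ww α).1) [(One.star, c)] :=
    congrArg (fun L => (((ww α).1, L) : WObj C One)) hl
  have hmain' : CEq (𝟙 (wp C One ((ww α).1) [(One.star, c)]))
      ((ext (incl C One) ((Functor.const WA).obj (x₁ C))).hom.toFunctor.map d') :=
    (CEq.id_congr hwp.symm).trans hmain
  have hfst : CEq (𝟙 ((ww α).1)) (mH d'.1 (𝟙 (eO C))) := wCEq_fst C One hmain'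
  have hsnd : CEq (𝟙 c) (mH (𝟙 (eO C)) d'.2.1.2) :=
    hconsCEq_snd (wCEq_snd C One hmain')
  have hd1 : CEq (𝟙 ((ww α).1)) d'.1 := hfst.trans (mH_one d'.1)
  have hd2 : CEq (𝟙 c) d'.2.1.2 := hsnd.trans (one_mH d'.2.1.2)
  -- the map into `U.right`
  have hnat2 := nat_hom α.hom (U := Under.mk (incl C WA)) (V := U)
    (ext U.hom (arrowFunctor φ)) (incl_ext _ _) (gArr C)
  have hg : CEq ((ext U.hom (arrowFunctor φ)).hom.toFunctor.map (gArr C)) φ := by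
    show CEq (mH (U.hom.hom.toFunctor.map (𝟙 (eO C))) (mH φ (U.hom.hom.toFunctor.map (𝟙 (eO C))))) φ
    refine CEq.trans (mH_congr (CEq.of_eq (U.hom.hom.toFunctor.map_id _))
      (mH_congr (CEq.refl φ) (CEq.of_eq (U.hom.hom.toFunctor.map_id _)))) ?_
    refine CEq.trans (mH_congr (CEq.id_congr (hom_eO U.hom))
      (mH_congr (CEq.refl φ) (CEq.id_congr (hom_eO U.hom)))) ?_
    exact (mH_congr (CEq.refl (𝟙 (eO U.right))) (mH_one φ)).trans (one_mH φ)
  have hφd : CEq ((ext U.hom (arrowFunctor φ)).hom.toFunctor.map d)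
      (mH (𝟙 (U.hom.hom.toFunctor.obj ((ww α).1))) (mH φ (𝟙 (U.hom.hom.toFunctor.obj c)))) := by
    refine CEq.trans (CEq.map _ hdd'.symm) ?_
    show CEq (mH (U.hom.hom.toFunctor.map d'.1) (mH φ (U.hom.hom.toFunctor.map d'.2.1.2))) _
    exact mH_congr ((CEq.map U.hom.hom.toFunctor hd1.symm).trans (CEq.of_eq (U.hom.hom.toFunctor.map_id _)))
      (mH_congr (CEq.refl φ)
        ((CEq.map U.hom.hom.toFunctor hd2.symm).trans (CEq.of_eq (U.hom.hom.toFunctor.map_id _))))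
  exact ((CEq.map (α.hom.app U).hom.toFunctor hg.symm).trans hnat2).trans hφd

theorem Phi_surj : ∃ u : (Ob C)ˣ, Phi u = α := by
  obtain ⟨c, hl⟩ := ww_shape α
  refine ⟨⟨(ww α).1, c, uv_one α c hl, vu_one α c hl⟩, ?_⟩
  apply Iso.ext
  apply NatTrans.ext
  funext U
  apply monHom_ext
  show conjF U.right (U.hom.hom.toFunctor.obj ((ww α).1)) (U.hom.hom.toFunctor.obj c) = (α.hom.app U).hom.toFunctor
  apply functor_ext
  · intro m
    show mO U.right (U.hom.hom.toFunctor.obj ((ww α).1)) (mO U.right m (U.hom.hom.toFunctor.obj c)) = _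
    have h := tapp_obj α U m
    rw [hl] at h
    exact h.symm
  · intro m m' φ
    exact (tapp_map α c hl U φ).symm

theorem Phi_inj : Function.Injective (Phi (C := C)) := by
  intro u u' h
  have h1 : mO C u.val (eO C) = mO C u'.val (eO C) :=
    congrArg (fun ν : Aut (Under.forget C) =>
      (((ν.hom.app (Under.mk (incl C One))).hom.toFunctor.obj (x₁ C)).1)) h
  replace h1 := (mO_one (M := C) _).symm.trans (h1.trans (mO_one _))
  exact Units.ext h1

end Classify

end IsotropyAux


/-- (Main theorem) The covariant isotropy group of a small strict monoidal category `C`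
(a monoid object in `Cat`) is isomorphic to its Picard group `(Ob C)ˣ` of invertible objects. -/
theorem isotropy_of_strMonCat_eq_picard (C : Mon Cat.{v, u}) :
    Nonempty (Aut (Under.forget C) ≃* (Ob C)ˣ) := by
  exact ⟨(MulEquiv.ofBijective
    (MonoidHom.mk' (IsotropyAux.Phi (C := C)) (fun a b => IsotropyAux.Phi_mul a b))
    ⟨IsotropyAux.Phi_inj, fun α => IsotropyAux.Phi_surj α⟩).symm⟩
end

section
/- The endofunctor of the category of monoids that adjoins an indeterminate, namely the functor MonCat ⥤ MonCat sending a monoid M to the binary coproduct M ⨿ FreeMonoid PUnit (the coproduct in MonCat of M with the free monoid on one generator) and a monoid homomorphism h : M ⟶ N to the induced map of coproducts h ⨿ 𝟙, preserves pullbacks (limits of shape WalkingCospan). -/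
open CategoryTheory Limits

universe u

namespace AddXAux

/-- Concrete model of `M ⨿ FreeMonoid PUnit`: `⟨l, a⟩` represents `l₀ x l₁ x ⋯ x lₖ₋₁ x a`. -/
@[ext]
structure AddX (M : Type u) : Type u where
  init : List M
  last : M

namespace AddX

variable {M N : Type u} [Monoid M] [Monoid N]

/-- Multiplication. -/
def mul : AddX M → AddX M → AddX M
  | ⟨l, a⟩, ⟨[], b⟩ => ⟨l, a * b⟩
  | ⟨l, a⟩, ⟨d :: m, b⟩ => ⟨l ++ a * d :: m, b⟩

instance : Mul (AddX M) := ⟨mul⟩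
instance : One (AddX M) := ⟨⟨[], 1⟩⟩

lemma mul_def₁ (l : List M) (a b : M) :
    (⟨l, a⟩ : AddX M) * ⟨[], b⟩ = ⟨l, a * b⟩ := rfl

lemma mul_def₂ (l m : List M) (a d b : M) :
    (⟨l, a⟩ : AddX M) * ⟨d :: m, b⟩ = ⟨l ++ a * d :: m, b⟩ := rfl

lemma one_def : (1 : AddX M) = ⟨[], 1⟩ := rfl

instance : Monoid (AddX M) where
  mul_assoc p q r := by
    obtain ⟨l, a⟩ := p
    obtain ⟨m, b⟩ := q
    obtain ⟨n, c⟩ := r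
    cases m with
    | nil => cases n <;> simp [mul_def₁, mul_def₂, mul_assoc]
    | cons d m' => cases n <;> simp [mul_def₁, mul_def₂, mul_assoc]
  one_mul p := by
    obtain ⟨l, a⟩ := p
    cases l with
    | nil => rw [one_def, mul_def₁, one_mul]
    | cons d l' => rw [one_def, mul_def₂, one_mul]; rfl
  mul_one p := by
    obtain ⟨l, a⟩ := p
    rw [one_def, mul_def₁, mul_one]

/-- Functoriality of `AddX`. -/
def map (h : M →* N) : AddX M →* AddX N where
  toFun p := ⟨p.init.map h, h p.last⟩
  map_one' := by rw [one_def]; simp [one_def]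
  map_mul' p q := by
    obtain ⟨l, a⟩ := p
    obtain ⟨m, b⟩ := q
    cases m with
    | nil => simp [mul_def₁]
    | cons d m' => simp [mul_def₂]

lemma map_apply (h : M →* N) (p : AddX M) : map h p = ⟨p.init.map h, h p.last⟩ := rfl

private lemma foldr_mul (f : M →* N) (n : N) (l : List M) (z w : N) :
    l.foldr (fun m acc => f m * n * acc) z * w
      = l.foldr (fun m acc => f m * n * acc) (z * w) := by
  induction l with
  | nil => rfl
  | cons d l ih => rw [List.foldr_cons, List.foldr_cons, mul_assoc _ _ w, ih]

/-- Universal property map. -/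
def lift (f : M →* N) (n : N) : AddX M →* N where
  toFun p := p.init.foldr (fun m acc => f m * n * acc) (f p.last)
  map_one' := by rw [one_def]; simp
  map_mul' p q := by
    obtain ⟨l, a⟩ := p
    obtain ⟨m, b⟩ := q
    cases m with
    | nil =>
        rw [mul_def₁]
        show List.foldr _ (f (a * b)) l = List.foldr _ (f a) l * f b
        rw [foldr_mul, map_mul]
    | cons d m' =>
        rw [mul_def₂]
        show List.foldr _ (f b) (l ++ a * d :: m') = _
        rw [List.foldr_append, List.foldr_cons]
        show _ = List.foldr _ (f a) l * (f d * n * List.foldr _ (f b) m')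
        rw [foldr_mul]
        simp [mul_assoc]

lemma lift_apply (f : M →* N) (n : N) (p : AddX M) :
    lift f n p = p.init.foldr (fun m acc => f m * n * acc) (f p.last) := rfl

/-- Inclusion of `M`. -/
def inl : M →* AddX M where
  toFun a := ⟨[], a⟩
  map_one' := rfl
  map_mul' a b := (mul_def₁ [] a b).symm

lemma inl_apply (a : M) : (inl a : AddX M) = ⟨[], a⟩ := rfl

end AddX

end AddXAux

namespace AddXAux

section Pullback

variable {A B C : Type u} [Monoid A] [Monoid B] [Monoid C] (f : A →* C) (g : B →* C)

/-- The concrete pullback submonoid. -/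
def pb : Submonoid (A × B) where
  carrier := {p | f p.1 = g p.2}
  one_mem' := by simp
  mul_mem' := by
    intro p q hp hq
    simp only [Set.mem_setOf_eq, Prod.fst_mul, Prod.snd_mul, map_mul] at *
    rw [hp, hq]

/-- First projection. -/
def pbFst : pb f g →* A := (MonoidHom.fst A B).comp (pb f g).subtype

/-- Second projection. -/
def pbSnd : pb f g →* B := (MonoidHom.snd A B).comp (pb f g).subtype

lemma pbFst_apply (p : pb f g) : pbFst f g p = (p : A × B).1 := rfl
lemma pbSnd_apply (p : pb f g) : pbSnd f g p = (p : A × B).2 := rfl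

/-- Zip two lists with pointwise-equal images into a list in the pullback. -/
def glue : (la : List A) → (lb : List B) → la.map f = lb.map g → List (pb f g)
  | [], [], _ => []
  | [], _ :: _, h => absurd h (by simp)
  | _ :: _, [], h => absurd h (by simp)
  | a :: la, b :: lb, h =>
      have h' : f a = g b ∧ la.map f = lb.map g := by simpa using h
      ⟨(a, b), h'.1⟩ :: glue la lb h'.2

lemma glue_map_fst : ∀ (la : List A) (lb : List B) (h : la.map f = lb.map g),
    (glue f g la lb h).map (pbFst f g) = la
  | [], [], _ => rfl
  | [], _ :: _, h => absurd h (by simp)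
  | _ :: _, [], h => absurd h (by simp)
  | a :: la, b :: lb, h => by
      simp only [glue, List.map_cons]
      exact congrArg (a :: ·) (glue_map_fst la lb _)

lemma glue_map_snd : ∀ (la : List A) (lb : List B) (h : la.map f = lb.map g),
    (glue f g la lb h).map (pbSnd f g) = lb
  | [], [], _ => rfl
  | [], _ :: _, h => absurd h (by simp)
  | _ :: _, [], h => absurd h (by simp)
  | a :: la, b :: lb, h => by
      simp only [glue, List.map_cons]
      exact congrArg (b :: ·) (glue_map_snd la lb _)

lemma list_inj : ∀ (l m : List (pb f g)),
    l.map (pbFst f g) = m.map (pbFst f g) → l.map (pbSnd f g) = m.map (pbSnd f g) → l = m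
  | [], [], _, _ => rfl
  | [], _ :: _, h, _ => absurd h (by simp)
  | _ :: _, [], h, _ => absurd h (by simp)
  | p :: l, q :: m, h1, h2 => by
      simp only [List.map_cons, List.cons.injEq] at h1 h2
      exact congrArg₂ (· :: ·)
        (Subtype.ext (Prod.ext h1.1 h2.1)) (list_inj l m h1.2 h2.2)

lemma addx_inj (x y : AddX (pb f g))
    (h1 : AddX.map (pbFst f g) x = AddX.map (pbFst f g) y)
    (h2 : AddX.map (pbSnd f g) x = AddX.map (pbSnd f g) y) : x = y := by
  obtain ⟨l, a⟩ := x
  obtain ⟨m, b⟩ := y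
  simp only [AddX.map_apply, AddX.mk.injEq] at h1 h2
  exact AddX.ext (list_inj f g l m h1.1 h2.1) (Subtype.ext (Prod.ext h1.2 h2.2))

variable {T : Type u} [Monoid T] (u : T →* AddX A) (v : T →* AddX B)
  (cond : ∀ t, AddX.map f (u t) = AddX.map g (v t))

/-- The underlying function of the lift to `AddX` of the pullback. -/
def wFun (t : T) : AddX (pb f g) :=
  ⟨glue f g (u t).init (v t).init (congrArg AddX.init (cond t)),
    ⟨((u t).last, (v t).last), congrArg AddX.last (cond t)⟩⟩

lemma wFun_fst (t : T) : AddX.map (pbFst f g) (wFun f g u v cond t) = u t :=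
  AddX.ext (glue_map_fst f g _ _ _) rfl

lemma wFun_snd (t : T) : AddX.map (pbSnd f g) (wFun f g u v cond t) = v t :=
  AddX.ext (glue_map_snd f g _ _ _) rfl

/-- The lift to `AddX` of the pullback, as a monoid hom. -/
def w : T →* AddX (pb f g) where
  toFun := wFun f g u v cond
  map_one' := addx_inj f g _ _
    (by rw [wFun_fst, map_one, map_one])
    (by rw [wFun_snd, map_one, map_one])
  map_mul' t t' := addx_inj f g _ _
    (by rw [wFun_fst, map_mul, map_mul (AddX.map (pbFst f g)), wFun_fst, wFun_fst])
    (by rw [wFun_snd, map_mul, map_mul (AddX.map (pbSnd f g)), wFun_snd, wFun_snd])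

lemma w_apply (t : T) : w f g u v cond t = wFun f g u v cond t := rfl

end Pullback

end AddXAux

namespace AddXAux

/-- The concrete endofunctor `M ↦ AddX M`. -/
def GX : MonCat.{u} ⥤ MonCat.{u} where
  obj M := MonCat.of (AddX M)
  map {M N} h := MonCat.ofHom (AddX.map h.hom)
  map_id M := by
    ext p
    obtain ⟨l, a⟩ := p
    simp [AddX.map_apply]
    rfl
  map_comp h k := by
    ext p
    obtain ⟨l, a⟩ := p
    simp [AddX.map_apply]
    rfl

section CatPullback

variable {A B C : MonCat.{u}} (f : A ⟶ C) (g : B ⟶ C)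

/-- The pullback object in `MonCat`. -/
abbrev pbPt : MonCat.{u} := MonCat.of (pb f.hom g.hom)

/-- First projection as a morphism. -/
def pbConeFst : pbPt f g ⟶ A := MonCat.ofHom (pbFst f.hom g.hom)

/-- Second projection as a morphism. -/
def pbConeSnd : pbPt f g ⟶ B := MonCat.ofHom (pbSnd f.hom g.hom)

lemma pbEq : pbConeFst f g ≫ f = pbConeSnd f g ≫ g := by
  ext p
  exact p.2

/-- The concrete pullback cone. -/
def pbCone : PullbackCone f g := PullbackCone.mk (pbConeFst f g) (pbConeSnd f g) (pbEq f g)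

/-- The concrete pullback cone is a limit. -/
def pbIsLimit : IsLimit (pbCone f g) :=
  PullbackCone.IsLimit.mk (pbEq f g)
    (fun s => show s.pt ⟶ pbPt f g from MonCat.ofHom
      { toFun := fun t => ⟨(s.fst t, s.snd t), ConcreteCategory.congr_hom s.condition t⟩
        map_one' := Subtype.ext (Prod.ext (map_one s.fst.hom) (map_one s.snd.hom))
        map_mul' := fun t t' =>
          Subtype.ext (Prod.ext (map_mul s.fst.hom t t') (map_mul s.snd.hom t t')) })
    (fun s => by ext t; rfl)
    (fun s => by ext t; rfl)
    (fun s m h1 h2 => by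
      ext t
      · exact ConcreteCategory.congr_hom h1 t
      · exact ConcreteCategory.congr_hom h2 t)

/-- The mapped pullback cone is a limit. -/
def mappedIsLimit :
    IsLimit (PullbackCone.mk (GX.map (pbConeFst f g)) (GX.map (pbConeSnd f g))
      (by rw [← GX.map_comp, ← GX.map_comp, pbEq])) :=
  PullbackCone.IsLimit.mk _
    (fun s => show s.pt ⟶ GX.obj (pbPt f g) from
      MonCat.ofHom (w f.hom g.hom s.fst.hom s.snd.hom (fun t => ConcreteCategory.congr_hom s.condition t)))
    (fun s => by
      ext t
      exact wFun_fst f.hom g.hom s.fst.hom s.snd.hom (fun t => ConcreteCategory.congr_hom s.condition t) t)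
    (fun s => by
      ext t
      exact wFun_snd f.hom g.hom s.fst.hom s.snd.hom (fun t => ConcreteCategory.congr_hom s.condition t) t)
    (fun s m h1 h2 => by
      ext t
      exact addx_inj f.hom g.hom _ _
        ((ConcreteCategory.congr_hom h1 t).trans
          (wFun_fst f.hom g.hom s.fst.hom s.snd.hom (fun t => ConcreteCategory.congr_hom s.condition t) t).symm)
        ((ConcreteCategory.congr_hom h2 t).trans
          (wFun_snd f.hom g.hom s.fst.hom s.snd.hom (fun t => ConcreteCategory.congr_hom s.condition t) t).symm))

/-- `GX` preserves this particular pullback. -/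
def presCospan : PreservesLimit (cospan f g) GX :=
  preservesLimit_of_preserves_limit_cone (pbIsLimit f g)
    ((isLimitMapConePullbackConeEquiv GX (pbEq f g)).symm (mappedIsLimit f g))

end CatPullback

/-- `GX` preserves pullbacks. -/
def presShape : PreservesLimitsOfShape WalkingCospan GX where
  preservesLimit {K} := by
    haveI := presCospan (K.map WalkingCospan.Hom.inl) (K.map WalkingCospan.Hom.inr)
    exact preservesLimit_of_iso_diagram GX (diagramIsoCospan K).symm

end AddXAux

namespace AddXAux

lemma AddX.cons_eq {M : Type u} [Monoid M] (d : M) (l : List M) (a : M) :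
    (⟨[d], 1⟩ : AddX M) * ⟨l, a⟩ = ⟨d :: l, a⟩ := by
  cases l with
  | nil => rw [AddX.mul_def₁, one_mul]
  | cons e l' => rw [AddX.mul_def₂, one_mul]; rfl

/-- The free monoid on one generator, as an object of `MonCat`. -/
abbrev XObj : MonCat.{u} := MonCat.of (FreeMonoid PUnit.{u + 1})

/-- The coproduct functor under consideration. -/
noncomputable abbrev FX : MonCat.{u} ⥤ MonCat.{u} := coprod.functor.flip.obj XObj

variable (M : MonCat.{u})

/-- Inclusion of `M` into `AddX M` as a morphism. -/
def inlHom : M ⟶ GX.obj M := MonCat.ofHom AddX.inl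

/-- Inclusion of the free monoid into `AddX M`. -/
def inrHom : XObj ⟶ GX.obj M :=
  MonCat.ofHom (FreeMonoid.lift (fun _ => (⟨[1], 1⟩ : AddX M)))

/-- Comparison map from the coproduct. -/
noncomputable def φ : M ⨿ XObj ⟶ GX.obj M :=
  coprod.desc (inlHom M) (inrHom M)

/-- Inverse comparison map. -/
noncomputable def ψ : GX.obj M ⟶ M ⨿ XObj :=
  MonCat.ofHom (AddX.lift (coprod.inl : M ⟶ M ⨿ XObj).hom
    ((coprod.inr : XObj ⟶ M ⨿ XObj) (FreeMonoid.of PUnit.unit)))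

lemma φψ_aux : ∀ (l : List M) (a : M), φ M (ψ M ⟨l, a⟩) = ⟨l, a⟩ := by
  intro l
  induction l with
  | nil =>
      intro a
      show φ M ((coprod.inl : M ⟶ M ⨿ XObj) a) = _
      exact ConcreteCategory.congr_hom (coprod.inl_desc (inlHom M) (inrHom M)) a
  | cons d l ih =>
      intro a
      have step : ψ M ⟨d :: l, a⟩
          = (coprod.inl : M ⟶ M ⨿ XObj) d
            * (coprod.inr : XObj ⟶ M ⨿ XObj) (FreeMonoid.of PUnit.unit)
            * ψ M ⟨l, a⟩ := rfl
      rw [step, map_mul, map_mul, ih]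
      have h1 : φ M ((coprod.inl : M ⟶ M ⨿ XObj) d) = ⟨[], d⟩ :=
        ConcreteCategory.congr_hom (coprod.inl_desc (inlHom M) (inrHom M)) d
      have h2 : φ M ((coprod.inr : XObj ⟶ M ⨿ XObj) (FreeMonoid.of PUnit.unit))
          = ⟨[1], 1⟩ := by
        have := ConcreteCategory.congr_hom (coprod.inr_desc (inlHom M) (inrHom M))
          (FreeMonoid.of PUnit.unit)
        exact this.trans (FreeMonoid.lift_eval_of _ _)
      rw [h1, h2]
      exact (congrArg (· * (⟨l, a⟩ : AddX M)) (AddX.mul_def₂ [] [] d 1 1)).trans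
        (by rw [mul_one]; exact AddX.cons_eq d l a)

lemma comp_φψ : φ M ≫ ψ M = 𝟙 (M ⨿ XObj) := by
  apply coprod.hom_ext
  · rw [← Category.assoc, Category.comp_id, φ, coprod.inl_desc]
    ext m
    rfl
  · rw [← Category.assoc, Category.comp_id, φ, coprod.inr_desc]
    apply MonCat.hom_ext
    apply FreeMonoid.hom_eq
    intro x
    cases x
    show ψ M ((inrHom M) (FreeMonoid.of PUnit.unit)) = _
    have : (inrHom M) (FreeMonoid.of PUnit.unit) = (⟨[1], 1⟩ : AddX M) :=
      FreeMonoid.lift_eval_of _ _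
    rw [this]
    show (coprod.inl : M ⟶ M ⨿ XObj) 1
        * (coprod.inr : XObj ⟶ M ⨿ XObj) (FreeMonoid.of PUnit.unit)
        * (coprod.inl : M ⟶ M ⨿ XObj) 1 = _
    rw [map_one, one_mul, mul_one]

lemma comp_ψφ : ψ M ≫ φ M = 𝟙 (GX.obj M) := by
  ext p
  obtain ⟨l, a⟩ := p
  exact φψ_aux M l a

/-- The natural isomorphism between the coproduct functor and `GX`. -/
noncomputable def natIso : FX ≅ GX := by
  refine NatIso.ofComponents
    (fun M => show FX.obj M ≅ GX.obj M from ⟨φ M, ψ M, comp_φψ M, comp_ψφ M⟩) ?_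
  intro M N h
  show coprod.map h (𝟙 XObj) ≫ φ N = φ M ≫ GX.map h
  apply coprod.hom_ext
  · rw [← Category.assoc, coprod.inl_map, Category.assoc, φ, φ, coprod.inl_desc,
      ← Category.assoc, coprod.inl_desc]
    ext m
    rfl
  · rw [← Category.assoc, coprod.inr_map, Category.assoc, φ, φ, coprod.inr_desc,
      ← Category.assoc, coprod.inr_desc, Category.id_comp]
    apply MonCat.hom_ext
    apply FreeMonoid.hom_eq
    intro x
    cases x
    show inrHom N (FreeMonoid.of PUnit.unit)
        = (GX.map h) (inrHom M (FreeMonoid.of PUnit.unit))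
    rw [show inrHom N (FreeMonoid.of PUnit.unit) = (⟨[1], 1⟩ : AddX N) from
        FreeMonoid.lift_eval_of _ _,
      show inrHom M (FreeMonoid.of PUnit.unit) = (⟨[1], 1⟩ : AddX M) from
        FreeMonoid.lift_eval_of _ _]
    show _ = AddX.map h.hom ⟨[1], 1⟩
    rw [AddX.map_apply]
    simp

end AddXAux

/-- The endofunctor of `MonCat` adjoining an indeterminate, i.e. the functor sending a monoid
`M` to the binary coproduct `M ⨿ FreeMonoid PUnit` of `M` with the free monoid on one
generator, and a homomorphism `h` to `h ⨿ 𝟙`, preserves pullbacks. -/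
theorem coprod_freeMonoid_preserves_pullbacks :
    Nonempty (PreservesLimitsOfShape WalkingCospan
      (coprod.functor.flip.obj (MonCat.of (FreeMonoid PUnit.{u + 1})))) := by
  haveI := AddXAux.presShape.{u}
  exact ⟨preservesLimitsOfShape_of_natIso AddXAux.natIso.symm⟩
end

section
/- Let M be a monoid and let M⟨x⟩ denote the coproduct (free product) of M with the free monoid on one generator x, i.e., Monoid.Coprod M (FreeMonoid PUnit), with ι : M → M⟨x⟩ the canonical inclusion and x ∈ M⟨x⟩ the image of the generator. Then every element of M⟨x⟩ has a unique expanded normal form: the map sending a nonempty list (m₀, m₁, …, mₙ) of elements of M to the product ι(m₀) * x * ι(m₁) * x * ⋯ * x * ι(mₙ) in M⟨x⟩ is a bijection from nonempty lists over M to M⟨x⟩. -/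
namespace ENF

variable {M : Type*} [Monoid M]

open Monoid.Coprod FreeMonoid

structure NF (M : Type*) where
  fst : M
  snd : List M

def mulT : M → List M → NF M → NF M
  | a, [], q => ⟨a * q.fst, q.snd⟩
  | a, c :: l, q =>
      let r := mulT c l q
      ⟨a, r.fst :: r.snd⟩

instance : Mul (NF M) := ⟨fun p q => mulT p.fst p.snd q⟩
instance : One (NF M) := ⟨⟨(1 : M), []⟩⟩

@[simp] lemma mul_nil (a : M) (q : NF M) :
    (⟨a, []⟩ * q : NF M) = ⟨a * q.fst, q.snd⟩ := rfl

lemma mul_cons (a c : M) (l : List M) (q : NF M) :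
    (⟨a, c :: l⟩ * q : NF M) = ⟨a, ((⟨c, l⟩ : NF M) * q).fst :: ((⟨c, l⟩ : NF M) * q).snd⟩ := rfl

instance : Monoid (NF M) where
  mul_assoc p q r := by
    obtain ⟨a, l⟩ := p
    induction l generalizing a q r with
    | nil =>
        obtain ⟨b, k⟩ := q
        cases k with
        | nil => obtain ⟨c, j⟩ := r; simp [mul_assoc]
        | cons d k' => obtain ⟨c, j⟩ := r; simp [mul_cons]
    | cons c l ih => simp [mul_cons, ih]
  one_mul p := by obtain ⟨a, l⟩ := p; show (⟨1, []⟩ : NF M) * ⟨a, l⟩ = ⟨a, l⟩; simp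
  mul_one p := by
    obtain ⟨a, l⟩ := p
    induction l generalizing a with
    | nil => show (⟨a, []⟩ : NF M) * ⟨1, []⟩ = ⟨a, []⟩; simp
    | cons c l ih =>
        show (⟨a, c :: l⟩ : NF M) * ⟨1, []⟩ = ⟨a, c :: l⟩
        rw [mul_cons, show ((⟨c, l⟩ : NF M) * ⟨1, []⟩) = ⟨c, l⟩ from ih c]

def evalF (p : NF M) : Monoid.Coprod M (FreeMonoid PUnit) :=
  inl p.fst * (p.snd.map (fun m => inr (of PUnit.unit) * inl m)).prod

lemma evalF_mul (p q : NF M) : evalF (p * q) = evalF p * evalF q := by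
  obtain ⟨a, l⟩ := p
  induction l generalizing a with
  | nil =>
      obtain ⟨b, k⟩ := q
      simp [evalF, mul_assoc]
  | cons c l ih =>
      rw [mul_cons]
      have h : evalF ⟨a, ((⟨c, l⟩ : NF M) * q).fst :: ((⟨c, l⟩ : NF M) * q).snd⟩
          = inl a * (inr (of PUnit.unit) * evalF ((⟨c, l⟩ : NF M) * q)) := by
        simp [evalF, mul_assoc]
      rw [h, ih]
      simp [evalF, mul_assoc]

def eval : NF M →* Monoid.Coprod M (FreeMonoid PUnit) where
  toFun := evalF
  map_one' := by show evalF ⟨1, []⟩ = 1; simp [evalF]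
  map_mul' := evalF_mul

def fM : M →* NF M where
  toFun m := ⟨m, []⟩
  map_one' := rfl
  map_mul' m m' := by show (⟨m * m', []⟩ : NF M) = ⟨m, []⟩ * ⟨m', []⟩; simp

def φ : Monoid.Coprod M (FreeMonoid PUnit) →* NF M :=
  Monoid.Coprod.lift fM (FreeMonoid.lift (fun _ => (⟨(1 : M), [(1 : M)]⟩ : NF M)))

lemma φ_inl (m : M) : (φ (inl m) : NF M) = ⟨m, []⟩ := by
  rw [φ, Monoid.Coprod.lift_apply_inl]; rfl

lemma φ_x : (φ (inr (of PUnit.unit)) : NF M) = ⟨(1 : M), [(1 : M)]⟩ := by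
  rw [φ, Monoid.Coprod.lift_apply_inr, FreeMonoid.lift_eval_of]

lemma φ_evalT (l : List M) :
    φ ((l.map (fun m => inr (of PUnit.unit) * inl m)).prod) = (⟨(1 : M), l⟩ : NF M) := by
  induction l with
  | nil => simp; rfl
  | cons m l ih =>
      simp only [List.map_cons, List.prod_cons, map_mul, ih, φ_x, φ_inl]
      show (⟨(1 : M), [(1 : M)]⟩ : NF M) * ⟨m, []⟩ * ⟨(1 : M), l⟩ = ⟨(1 : M), m :: l⟩
      simp [mul_cons]

lemma φ_evalF (p : NF M) : φ (evalF p) = p := by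
  obtain ⟨a, l⟩ := p
  rw [evalF]
  simp only [map_mul, φ_evalT, φ_inl]
  cases l with
  | nil => show (⟨a, []⟩ : NF M) * ⟨1, []⟩ = ⟨a, []⟩; simp
  | cons c l => show (⟨a, []⟩ : NF M) * ⟨1, c :: l⟩ = ⟨a, c :: l⟩; simp

lemma eval_φ : (eval : NF M →* _).comp φ = MonoidHom.id _ := by
  apply Monoid.Coprod.hom_ext
  · ext m
    show eval (φ (inl m)) = inl m
    rw [φ_inl]
    show evalF ⟨m, []⟩ = inl m
    simp [evalF]
  · apply FreeMonoid.hom_eq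
    intro u
    show eval (φ (inr (of u))) = inr (of u)
    cases u
    rw [φ_x]
    show evalF ⟨(1 : M), [(1 : M)]⟩ = inr (of PUnit.unit)
    simp [evalF]

end ENF

/-- Expanded normal forms in a monoid with an adjoined indeterminate: every element of the
coproduct `M ∗ FreeMonoid PUnit` of a monoid `M` with the free monoid on one generator `x`
is uniquely of the form `m₀ * x * m₁ * x * ⋯ * x * mₙ` for a nonempty list `(m₀, m₁, …, mₙ)`
of elements of `M`; i.e. the evaluation map from nonempty lists over `M` to the coproduct is
a bijection. -/
theorem bijective_expanded_normal_form (M : Type*) [Monoid M] :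
    Function.Bijective (fun p : M × List M =>
      (Monoid.Coprod.inl p.1 : Monoid.Coprod M (FreeMonoid PUnit)) *
        (p.2.map (fun m =>
          Monoid.Coprod.inr (FreeMonoid.of PUnit.unit) * Monoid.Coprod.inl m)).prod) := by
  have hfun : (fun p : M × List M =>
      (Monoid.Coprod.inl p.1 : Monoid.Coprod M (FreeMonoid PUnit)) *
        (p.2.map (fun m =>
          Monoid.Coprod.inr (FreeMonoid.of PUnit.unit) * Monoid.Coprod.inl m)).prod)
      = fun p : M × List M => ENF.evalF ⟨p.1, p.2⟩ := rfl
  rw [hfun]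
  constructor
  · intro p q h
    have h2 := congrArg ENF.φ h
    rw [ENF.φ_evalF, ENF.φ_evalF] at h2
    obtain ⟨p1, p2⟩ := p
    obtain ⟨q1, q2⟩ := q
    simpa using ENF.NF.mk.injEq .. ▸ h2
  · intro y
    refine ⟨⟨(ENF.φ y).fst, (ENF.φ y).snd⟩, ?_⟩
    have h := DFunLike.congr_fun (ENF.eval_φ (M := M)) y
    simpa [ENF.eval] using h
end

section
/- For every small category J and every functor F : J ⥤ Type, the covariant isotropy group of F in the functor category J ⥤ Type is isomorphic to the automorphism group of the identity functor of J: there is a group isomorphism between Aut(Under.forget F), the group of natural automorphisms of the coslice projection functor Under.forget F : Under F ⥤ (J ⥤ Type), and Aut(𝟭 J), the group of natural automorphisms of the identity functor 𝟭 J : J ⥤ J. -/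
open CategoryTheory

namespace IsotropyPresheafAux

variable {J : Type} [SmallCategory J] (F : J ⥤ Type)

/-- The coproduct of `F` with the corepresentable functor `Hom(j, -)`. -/
@[simps]
def Gf (j : J) : J ⥤ Type where
  obj k := F.obj k ⊕ (j ⟶ k)
  map f := TypeCat.ofHom (Sum.map (F.map f) (· ≫ f))
  map_id k := by
    ext x; cases x with
    | inl a => simp
    | inr g => simp
  map_comp f g := by
    ext x; cases x with
    | inl a => simp
    | inr h => simp

@[simps]
def inlNat (j : J) : F ⟶ Gf F j where
  app k := TypeCat.ofHom Sum.inl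
  naturality k k' f := rfl

/-- The object `F ⟶ F ⊕ Hom(j,-)` of `Under F`. -/
def Uj (j : J) : Under F := Under.mk (inlNat F j)

@[simp] theorem Uj_right (j : J) : (Uj F j).right = Gf F j := rfl
@[simp] theorem Uj_hom (j : J) : (Uj F j).hom = inlNat F j := rfl

/-- The natural transformation `F ⊕ Hom(j,-) ⟶ X.right` induced by `g : X.right.obj j`. -/
@[simps]
def hNat {j : J} (X : Under F) (g : X.right.obj j) : Gf F j ⟶ X.right where
  app k := TypeCat.ofHom (Sum.elim (X.hom.app k) (fun f => X.right.map f g))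
  naturality k k' f := by
    ext x; cases x with
    | inl a => exact ConcreteCategory.congr_hom (X.hom.naturality f) a
    | inr h =>
        simp only [types_comp_apply, Gf_map, Sum.map_inr, Sum.elim_inr]
        exact FunctorToTypes.map_comp_apply X.right h f g

/-- The morphism `Uj F j ⟶ X` in `Under F` induced by `g : X.right.obj j`. -/
def hU {j : J} (X : Under F) (g : X.right.obj j) : Uj F j ⟶ X :=
  Under.homMk (hNat F X g) (by ext k a; rfl)

@[simp] theorem hU_right {j : J} (X : Under F) (g : X.right.obj j) :
    (hU F X g).right = hNat F X g := rfl

theorem app_eq (α : Aut (Under.forget F)) (j : J) (X : Under F) (g : X.right.obj j) :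
    (α.hom.app X).app j g =
      (hNat F X g).app j ((α.hom.app (Uj F j)).app j (Sum.inr (𝟙 j))) := by
  have h := α.hom.naturality (hU F X g)
  have h2 := ConcreteCategory.congr_hom (NatTrans.congr_app h j) (Sum.inr (𝟙 j) : (Gf F j).obj j)
  change (α.hom.app X).app j ((hNat F X g).app j (Sum.inr (𝟙 j))) =
    (hNat F X g).app j ((α.hom.app (Uj F j)).app j (Sum.inr (𝟙 j))) at h2
  have h3 : (hNat F X g).app j (Sum.inr (𝟙 j)) = g := by
    show X.right.map (𝟙 j) g = g
    simp
  rw [h3] at h2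
  exact h2

theorem inj_app (α : Aut (Under.forget F)) (X : Under F) (j : J) :
    Function.Injective ((α.hom.app X).app j) := by
  intro a b hab
  have h := ConcreteCategory.congr_hom (NatTrans.congr_app (NatTrans.congr_app α.hom_inv_id X) j) a
  have h' := ConcreteCategory.congr_hom (NatTrans.congr_app (NatTrans.congr_app α.hom_inv_id X) j) b
  change (α.inv.app X).app j ((α.hom.app X).app j a) = a at h
  change (α.inv.app X).app j ((α.hom.app X).app j b) = b at h'
  rw [← h, ← h', hab]

theorem exists_theta (α : Aut (Under.forget F)) (j : J) :
    ∃ θ : j ⟶ j, (α.hom.app (Uj F j)).app j (Sum.inr (𝟙 j) : (Gf F j).obj j) =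
      (Sum.inr θ : (Gf F j).obj j) := by
  rcases hx : ((α.hom.app (Uj F j)).app j (Sum.inr (𝟙 j) : (Gf F j).obj j) : (Gf F j).obj j)
    with a | θ
  · exfalso
    have h1 := app_eq F α j (Uj F j) (Sum.inl a)
    rw [hx] at h1
    simp only [hNat_app, Sum.elim_inl, Uj_hom, inlNat_app] at h1
    have := inj_app F α (Uj F j) j (h1.trans hx.symm)
    simp at this
  · exact ⟨θ, rfl⟩

/-- The endomorphism of `j` extracted from `α`. -/
noncomputable def th (α : Aut (Under.forget F)) (j : J) : j ⟶ j :=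
  (exists_theta F α j).choose

theorem th_spec (α : Aut (Under.forget F)) (j : J) :
    (α.hom.app (Uj F j)).app j (Sum.inr (𝟙 j) : (Gf F j).obj j) =
      (Sum.inr (th F α j) : (Gf F j).obj j) :=
  (exists_theta F α j).choose_spec

/-- The master formula: every component of `α` is given by the action of `th`. -/
theorem app_eq_map (α : Aut (Under.forget F)) (j : J) (X : Under F) (g : X.right.obj j) :
    (α.hom.app X).app j g = X.right.map (th F α j) g := by
  rw [app_eq F α j X g, th_spec]
  rfl

theorem hom_app_inr (α : Aut (Under.forget F)) (j : J) (s : j ⟶ j) :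
    (α.hom.app (Uj F j)).app j (Sum.inr s : (Gf F j).obj j) =
      (Sum.inr (s ≫ th F α j) : (Gf F j).obj j) := by
  have := app_eq_map F α j (Uj F j) (Sum.inr s)
  exact this

theorem th_nat (α : Aut (Under.forget F)) {j j' : J} (f : j ⟶ j') :
    th F α j ≫ f = f ≫ th F α j' := by
  have h := ConcreteCategory.congr_hom ((α.hom.app (Uj F j)).naturality f)
    (Sum.inr (𝟙 j) : (Gf F j).obj j)
  change (α.hom.app (Uj F j)).app j' ((Uj F j).right.map f (Sum.inr (𝟙 j))) =
    (Uj F j).right.map f ((α.hom.app (Uj F j)).app j (Sum.inr (𝟙 j) : (Gf F j).obj j)) at h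
  rw [th_spec] at h
  have h2 : ((Uj F j).right.map f) (Sum.inr (𝟙 j) : (Gf F j).obj j) = Sum.inr f := by
    show (Sum.inr (𝟙 j ≫ f) : (Gf F j).obj j') = Sum.inr f
    simp
  rw [h2] at h
  have h3 := app_eq_map F α j' (Uj F j) (Sum.inr f)
  rw [h3] at h
  simp only [Uj_right, Gf_map, Sum.map_inr] at h
  exact (Sum.inr.inj h).symm

/-- Forward direction on homs. -/
noncomputable def toCenterHom (α : Aut (Under.forget F)) : 𝟭 J ⟶ 𝟭 J where
  app j := th F α j
  naturality j j' f := by simpa using (th_nat F α f).symm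

theorem toCenter_comp (α β : Aut (Under.forget F)) (hc : Aut (Under.forget F))
    (h : hc.hom = β.hom ≫ α.hom) (j : J) : th F hc j = th F β j ≫ th F α j := by
  have h1 := th_spec F hc j
  rw [h] at h1
  change (α.hom.app (Uj F j)).app j ((β.hom.app (Uj F j)).app j (Sum.inr (𝟙 j) : (Gf F j).obj j)) =
    (Sum.inr (th F hc j) : (Gf F j).obj j) at h1
  rw [th_spec F β j, hom_app_inr F α j (th F β j)] at h1
  exact (Sum.inr.inj h1).symm ▸ rfl

/-- Backward direction on homs. -/
@[simps]
def ofCenterHom (t : 𝟭 J ⟶ 𝟭 J) : Under.forget F ⟶ Under.forget F where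
  app X :=
    { app := fun k => X.right.map (t.app k)
      naturality := fun k k' f => by
        ext g
        simp only [types_comp_apply, Under.forget_obj]
        rw [← Functor.map_comp, ← Functor.map_comp]
        have hn : f ≫ t.app k' = t.app k ≫ f := by simpa using t.naturality f
        rw [hn] }
  naturality X Y h := by
    ext k g
    exact (ConcreteCategory.congr_hom (h.right.naturality (t.app k)) g).symm

noncomputable def toCenter (α : Aut (Under.forget F)) : Aut (𝟭 J) where
  hom := toCenterHom F α
  inv := toCenterHom F α.symm
  hom_inv_id := by
    ext j
    have h := ConcreteCategory.congr_hom (NatTrans.congr_app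
      (NatTrans.congr_app α.hom_inv_id (Uj F j)) j) (Sum.inr (𝟙 j) : (Gf F j).obj j)
    change (α.inv.app (Uj F j)).app j ((α.hom.app (Uj F j)).app j (Sum.inr (𝟙 j) : (Gf F j).obj j)) =
      (Sum.inr (𝟙 j) : (Gf F j).obj j) at h
    rw [th_spec F α j] at h
    have h2 : α.inv = α.symm.hom := rfl
    rw [h2, hom_app_inr F α.symm j (th F α j)] at h
    have := Sum.inr.inj h
    simpa [toCenterHom] using this
  inv_hom_id := by
    ext j
    have h := ConcreteCategory.congr_hom (NatTrans.congr_app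
      (NatTrans.congr_app α.inv_hom_id (Uj F j)) j) (Sum.inr (𝟙 j) : (Gf F j).obj j)
    change (α.hom.app (Uj F j)).app j ((α.inv.app (Uj F j)).app j (Sum.inr (𝟙 j) : (Gf F j).obj j)) =
      (Sum.inr (𝟙 j) : (Gf F j).obj j) at h
    have h2 : α.inv = α.symm.hom := rfl
    rw [h2, th_spec F α.symm j, hom_app_inr F α j (th F α.symm j)] at h
    have := Sum.inr.inj h
    simpa [toCenterHom] using this

def ofCenter (t : Aut (𝟭 J)) : Aut (Under.forget F) where
  hom := ofCenterHom F t.hom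
  inv := ofCenterHom F t.inv
  hom_inv_id := by
    ext X k g
    simp only [NatTrans.comp_app, ofCenterHom_app_app, types_comp_apply, NatTrans.id_app,
      types_id_apply]
    erw [← Functor.map_comp]
    have : t.hom.app k ≫ t.inv.app k = 𝟙 k := by
      have := NatTrans.congr_app t.hom_inv_id k
      simpa using this
    rw [this]
    simp
  inv_hom_id := by
    ext X k g
    simp only [NatTrans.comp_app, ofCenterHom_app_app, types_comp_apply, NatTrans.id_app,
      types_id_apply]
    erw [← Functor.map_comp]
    have : t.inv.app k ≫ t.hom.app k = 𝟙 k := by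
      have := NatTrans.congr_app t.inv_hom_id k
      simpa using this
    rw [this]
    simp

noncomputable def centerEquiv : Aut (Under.forget F) ≃* Aut (𝟭 J) where
  toFun := toCenter F
  invFun := ofCenter F
  left_inv α := by
    apply Iso.ext
    ext X k g
    show X.right.map (th F α k) g = (α.hom.app X).app k g
    exact (app_eq_map F α k X g).symm
  right_inv t := by
    apply Iso.ext
    ext j
    show th F (ofCenter F t) j = t.hom.app j
    have h := th_spec F (ofCenter F t) j
    have h2 : ((ofCenter F t).hom.app (Uj F j)).app j (Sum.inr (𝟙 j) : (Gf F j).obj j)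
        = Sum.inr (t.hom.app j) := by
      show ((Uj F j).right.map (t.hom.app j)) (Sum.inr (𝟙 j)) = _
      exact congrArg Sum.inr (Category.id_comp _)
    rw [h2] at h
    exact (Sum.inr.inj h).symm
  map_mul' α β := by
    apply Iso.ext
    ext j
    have hmul : (α * β).hom = β.hom ≫ α.hom := rfl
    have := toCenter_comp F α β (α * β) hmul j
    show th F (α * β) j = th F β j ≫ th F α j
    exact this

end IsotropyPresheafAux

/-- The covariant isotropy group of any object `F` of a presheaf category `J ⥤ Type` is
isomorphic to the automorphism group of the identity functor of `J` (the "center" of `J`). -/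
theorem isotropy_of_presheaf_eq_center (J : Type) [SmallCategory J] (F : J ⥤ Type) :
    Nonempty (Aut (Under.forget F) ≃* Aut (𝟭 J)) := by
  exact ⟨IsotropyPresheafAux.centerEquiv F⟩
end

section
/- The covariant isotropy group functor of a presheaf category is constant: for every small category J, every natural transformation η : F ⟶ F' between functors F, F' : J ⥤ Type, the induced group homomorphism from Aut(Under.forget F) to Aut(Under.forget F') (given by restricting a natural automorphism of Under.forget F along the functor Under F' ⥤ Under F induced by η, which commutes with the coslice projections) is compatible with the isomorphisms Aut(Under.forget F) ≅ Aut(𝟭 J) and Aut(Under.forget F') ≅ Aut(𝟭 J); in particular it is a group isomorphism. -/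
open CategoryTheory


namespace IsotropyPresheaf

variable {J : Type} [SmallCategory J]

/-- The "generic" functor `F ⊕ coyoneda j`. -/
@[simps]
def Gen (F : J ⥤ Type) (j : J) : J ⥤ Type where
  obj i := F.obj i ⊕ (j ⟶ i)
  map g := TypeCat.ofHom (fun x => Sum.elim (fun a => Sum.inl (F.map g a)) (fun h => Sum.inr (h ≫ g)) x)
  map_id i := by ext x; cases x <;> simp
  map_comp g h := by ext x; cases x <;> simp

@[simps]
def genIncl (F : J ⥤ Type) (j : J) : F ⟶ Gen F j where
  app i := TypeCat.ofHom (fun a => Sum.inl a)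
  naturality i i' g := by ext a; rfl

def U (F : J ⥤ Type) (j : J) : Under F := Under.mk (genIncl F j)

/-- The classifying map out of the generic object. -/
def toN (F : J ⥤ Type) (j : J) (N : Under F) (x : N.right.obj j) : U F j ⟶ N :=
  Under.homMk
    { app := fun i => TypeCat.ofHom (fun y => Sum.elim (fun a => N.hom.app i a) (fun h => N.right.map h x) y)
      naturality := by
        intro i i' g
        ext y
        cases y with
        | inl a => exact NatTrans.naturality_apply N.hom g a
        | inr h => exact (FunctorToTypes.map_comp_apply N.right h g x) }
    rfl

@[simp]
lemma toN_right_app (F : J ⥤ Type) (j : J) (N : Under F) (x : N.right.obj j)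
    (i : J) (y : (Gen F j).obj i) :
    (toN F j N x).right.app i y =
      Sum.elim (fun a => N.hom.app i a) (fun h => N.right.map h x) y := rfl

variable {F : J ⥤ Type}

lemma key_naturality (α : Under.forget F ⟶ Under.forget F) (j : J) (N : Under F)
    (x : N.right.obj j) :
    (α.app N).app j x =
      (toN F j N x).right.app j ((α.app (U F j)).app j (Sum.inr (𝟙 j))) := by
  have h := α.naturality (toN F j N x)
  have h2 := types_congr_hom (congrArg (fun t => NatTrans.app t j) h) (Sum.inr (𝟙 j))
  simp only [Under.forget_map, NatTrans.comp_app, types_comp_apply] at h2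
  have hx : (toN F j N x).right.app j (Sum.inr (𝟙 j)) = x := by
    show N.right.map (𝟙 j) x = x; simp
  exact (congrArg (fun y => (α.app N).app j y) hx).symm.trans h2

lemma exists_r (α : Aut (Under.forget F)) (j : J) :
    ∃ r : j ⟶ j, (α.hom.app (U F j)).app j (Sum.inr (𝟙 j)) = Sum.inr r := by
  rcases hv : (α.hom.app (U F j)).app j (Sum.inr (𝟙 j)) with a | r
  · -- impossible: the inverse would send something in the image of `F` to `Sum.inr _`
    exfalso
    have hn := α.inv.naturality
      (Under.homMk (genIncl F j) (by simp [U]) : (Under.mk (𝟙 F)) ⟶ U F j)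
    have hn2 : (α.inv.app (U F j)).app j (Sum.inl a) =
        Sum.inl ((α.inv.app (Under.mk (𝟙 F))).app j a) :=
      types_congr_hom (congrArg (fun t => NatTrans.app t j) hn) a
    have hid1 := NatTrans.congr_app α.hom_inv_id (U F j)
    have hid : (α.inv.app (U F j)).app j ((α.hom.app (U F j)).app j (Sum.inr (𝟙 j))) =
        Sum.inr (𝟙 j) :=
      types_congr_hom (congrArg (fun t => NatTrans.app t j) hid1) (Sum.inr (𝟙 j))
    rw [hv] at hid
    rw [hn2] at hid
    exact Sum.inl_ne_inr hid
  · exact ⟨r, rfl⟩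

/-- The component at `j` of the element of `Aut (𝟭 J)` determined by `α`. -/
noncomputable def psi (α : Aut (Under.forget F)) (j : J) : j ⟶ j :=
  (exists_r α j).choose

lemma psi_spec (α : Aut (Under.forget F)) (j : J) :
    (α.hom.app (U F j)).app j (Sum.inr (𝟙 j)) = Sum.inr (psi α j) :=
  (exists_r α j).choose_spec

/-- The key formula: `α` acts on every object by `psi`. -/
lemma key_formula (α : Aut (Under.forget F)) (N : Under F) (j : J) (x : N.right.obj j) :
    (α.hom.app N).app j x = N.right.map (psi α j) x := by
  rw [key_naturality α.hom j N x, psi_spec]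
  rfl

lemma psi_naturality (α : Aut (Under.forget F)) {j k : J} (g : j ⟶ k) :
    g ≫ psi α k = psi α j ≫ g := by
  have h : (α.hom.app (U F j)).app k (((U F j).right.map g) (Sum.inr (𝟙 j))) =
      ((U F j).right.map g) ((α.hom.app (U F j)).app j (Sum.inr (𝟙 j))) :=
    types_congr_hom ((α.hom.app (U F j)).naturality g) (Sum.inr (𝟙 j))
  have h1 : (((U F j).right).map g) (Sum.inr (𝟙 j)) = Sum.inr g := by
    show ((Gen F j).map g) (Sum.inr (𝟙 j)) = Sum.inr g
    show Sum.inr (𝟙 j ≫ g) = Sum.inr g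
    rw [Category.id_comp]
  rw [h1] at h
  rw [key_formula α (U F j) k (Sum.inr g)] at h
  rw [psi_spec] at h
  simp only [U, Under.mk_right, Under.mk_hom, Gen_map, Sum.elim_inr] at h
  exact Sum.inr_injective h

lemma psi_mul (α β : Aut (Under.forget F)) (j : J) :
    psi (α * β) j = psi β j ≫ psi α j := by
  have := psi_spec (α * β) j
  have hmul : ((α * β).hom.app (U F j)).app j (Sum.inr (𝟙 j)) =
      (α.hom.app (U F j)).app j ((β.hom.app (U F j)).app j (Sum.inr (𝟙 j))) := rfl
  rw [hmul, psi_spec β j, key_formula α (U F j) j (Sum.inr (psi β j))] at this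
  simp only [U, Under.mk_right, Gen_map, Sum.elim_inr] at this
  exact (Sum.inr_injective this).symm

lemma psi_one (j : J) : psi (1 : Aut (Under.forget F)) j = 𝟙 j := by
  have := psi_spec (1 : Aut (Under.forget F)) j
  have h1 : ((1 : Aut (Under.forget F)).hom.app (U F j)).app j (Sum.inr (𝟙 j)) =
      Sum.inr (𝟙 j) := rfl
  rw [h1] at this
  exact (Sum.inr_injective this).symm

lemma psi_inv_comp (α : Aut (Under.forget F)) (j : J) :
    psi α j ≫ psi α⁻¹ j = 𝟙 j := by
  have := psi_mul α⁻¹ α j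
  rw [inv_mul_cancel, psi_one] at this
  exact this.symm

lemma psi_comp_inv (α : Aut (Under.forget F)) (j : J) :
    psi α⁻¹ j ≫ psi α j = 𝟙 j := by
  have := psi_mul α α⁻¹ j
  rw [mul_inv_cancel, psi_one] at this
  exact this.symm

/-- `psi` packaged as an element of `Aut (𝟭 J)`. -/
noncomputable def toAutPsi (α : Aut (Under.forget F)) : Aut (𝟭 J) where
  hom := { app := psi α, naturality := fun _ _ g => psi_naturality α g }
  inv := { app := psi α⁻¹, naturality := fun _ _ g => psi_naturality α⁻¹ g }
  hom_inv_id := by ext j; exact psi_inv_comp α j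
  inv_hom_id := by ext j; exact psi_comp_inv α j

@[simps]
def ofPsiHom (F : J ⥤ Type) (ψ : 𝟭 J ⟶ 𝟭 J) : Under.forget F ⟶ Under.forget F where
  app N :=
    { app := fun i => N.right.map (ψ.app i)
      naturality := fun i i' g => by
        show N.right.map g ≫ N.right.map (ψ.app i') = N.right.map (ψ.app i) ≫ N.right.map g
        rw [← Functor.map_comp, ← Functor.map_comp]
        congr 1
        exact ψ.naturality g }
  naturality := fun N M m => by
    ext i : 2
    exact (m.right.naturality (ψ.app i)).symm

/-- `Aut (𝟭 J) → Aut (Under.forget F)`. -/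
def ofAut (F : J ⥤ Type) (ψ : Aut (𝟭 J)) : Aut (Under.forget F) where
  hom := ofPsiHom F ψ.hom
  inv := ofPsiHom F ψ.inv
  hom_inv_id := by
    ext N : 2
    ext i : 2
    show N.right.map (ψ.hom.app i) ≫ N.right.map (ψ.inv.app i) = 𝟙 _
    rw [← Functor.map_comp, ← NatTrans.comp_app, ψ.hom_inv_id, NatTrans.id_app]
    exact N.right.map_id _
  inv_hom_id := by
    ext N : 2
    ext i : 2
    show N.right.map (ψ.inv.app i) ≫ N.right.map (ψ.hom.app i) = 𝟙 _
    rw [← Functor.map_comp, ← NatTrans.comp_app, ψ.inv_hom_id, NatTrans.id_app]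
    exact N.right.map_id _

lemma psi_ofAut (F : J ⥤ Type) (ψ : Aut (𝟭 J)) (j : J) :
    psi (ofAut F ψ) j = ψ.hom.app j := by
  have := psi_spec (ofAut F ψ) j
  have h1 : ((ofAut F ψ).hom.app (U F j)).app j (Sum.inr (𝟙 j)) =
      Sum.inr (𝟙 j ≫ ψ.hom.app j) := rfl
  rw [h1] at this
  have := Sum.inr_injective this
  rw [← this, Category.id_comp]

/-- The isotropy group of `F` is `Aut (𝟭 J)`. -/
noncomputable def isoAut (F : J ⥤ Type) : Aut (Under.forget F) ≃* Aut (𝟭 J) where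
  toFun := toAutPsi
  invFun := ofAut F
  left_inv α := by
    apply Iso.ext
    ext N : 2
    ext i : 2
    ext x
    exact (key_formula α N i x).symm
  right_inv ψ := by
    apply Iso.ext
    ext j
    exact psi_ofAut F ψ j
  map_mul' α β := by
    apply Iso.ext
    ext j
    exact psi_mul α β j

end IsotropyPresheaf

open IsotropyPresheaf

/-- The covariant isotropy group functor of a presheaf category `J ⥤ Type` is constant:
any natural transformation `η : F ⟶ F'` induces, by whiskering with the functor
`Under.map η : Under F' ⥤ Under F` (which commutes with the coslice projections), a group
homomorphism from `Aut (Under.forget F)` to `Aut (Under.forget F')`, and this homomorphism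
is compatible with the identifications of both isotropy groups with `Aut (𝟭 J)` (which send
`ψ : Aut (𝟭 J)` to the natural automorphism whose component at `η : F ⟶ N` has components
`N.map (ψ.app i)`); in particular the induced homomorphism is a group isomorphism. -/
theorem isotropy_of_presheaf_constant (J : Type) [SmallCategory J] (F F' : J ⥤ Type)
    (η : F ⟶ F') :
    ∃ e : Aut (Under.forget F) ≃* Aut (Under.forget F'),
      ∀ α : Aut (Under.forget F),
        -- `e` is the homomorphism induced by whiskering with `Under.map η`
        (∀ N' : Under F', (e α).hom.app N' = α.hom.app ((Under.map η).obj N')) ∧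
        -- and it is compatible with the identifications with `Aut (𝟭 J)`
        (∀ ψ : Aut (𝟭 J),
          (∀ (N : Under F) (i : J), (α.hom.app N).app i = N.right.map (ψ.hom.app i)) →
          (∀ (N' : Under F') (i : J),
            ((e α).hom.app N').app i = N'.right.map (ψ.hom.app i))) := by
  refine ⟨(isoAut F).trans (isoAut F').symm, fun α => ⟨?_, ?_⟩⟩
  · intro N'
    have he : (((isoAut F).trans (isoAut F').symm) α).hom.app N' =
        (ofAut F' (toAutPsi α)).hom.app N' := rfl
    rw [he]
    ext i : 2
    ext x
    have := key_formula α ((Under.map η).obj N') i x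
    exact this.symm
  · intro ψ hψ N' i
    have hpsi : ∀ j : J, psi α j = ψ.hom.app j := by
      intro j
      have h1 := psi_spec α j
      rw [hψ (U F j) j] at h1
      have h2 : (U F j).right.map (ψ.hom.app j) (Sum.inr (𝟙 j)) =
          Sum.inr (𝟙 j ≫ ψ.hom.app j) := rfl
      have := Sum.inr_injective (h2.symm.trans h1)
      rw [← this, Category.id_comp]
    have he : (((isoAut F).trans (isoAut F').symm) α).hom.app N' =
        (ofAut F' (toAutPsi α)).hom.app N' := rfl
    rw [he]
    ext x
    show N'.right.map (psi α i) x = N'.right.map (ψ.hom.app i) x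
    rw [hpsi i]
end
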